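/- arXiv:2010.12172 — 13 statements merged into one kernel-verified Lean document; each statement's English description precedes it below -/
import Mathlib

section
/- Let α be a type and let u : ℤ → α be a two-sided sequence whose least positive period is p (i.e., u(i + p) = u(i) for all i ∈ ℤ, and no smaller positive integer has this property). Suppose i < j are integers and r ≥ p is an integer such that u(i + t) = u(j + t) for all integers t with 1 ≤ t ≤ r. Then p divides j − i. -/
/-- If `p` is the least positive period of a two-sided sequence `u : ℤ → α`, and two
windows of length `r ≥ p` starting after positions `i < j` agree, then `p ∣ j - i`. -/
theorem stmt1 {α : Type*} (u : ℤ → α) (p : ℕ) (hp : 0 < p)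
    (hper : ∀ i : ℤ, u (i + p) = u i)
    (hmin : ∀ q : ℕ, 0 < q → (∀ i : ℤ, u (i + q) = u i) → p ≤ q)
    (i j : ℤ) (hij : i < j) (r : ℕ) (hr : p ≤ r)
    (hwin : ∀ t : ℤ, 1 ≤ t → t ≤ r → u (i + t) = u (j + t)) :
    (p : ℤ) ∣ j - i := by
  -- iterate a period
  have hmul : ∀ x m : ℤ, u (x + m * p) = u x := by
    intro x m
    induction m using Int.induction_on with
    | zero => simp
    | succ k ih =>
      rw [show x + ((k : ℤ) + 1) * p = (x + k * p) + p by ring, hper, ih]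
    | pred k ih =>
      have h := hper (x + (-(k : ℤ) - 1) * p)
      rw [show x + (-(k : ℤ) - 1) * p + p = x + (-(k : ℤ)) * p by ring] at h
      exact h.symm.trans ih
  set d : ℤ := j - i with hd
  have hp' : (0 : ℤ) < p := by exact_mod_cast hp
  have hdpos : 0 < d := by omega
  -- d is a period
  have hperd : ∀ x : ℤ, u (x + d) = u x := by
    intro x
    set t : ℤ := (x - i - 1) % p + 1 with ht
    have hnn : 0 ≤ (x - i - 1) % p := Int.emod_nonneg _ (by omega)
    have hlt : (x - i - 1) % p < p := Int.emod_lt_of_pos _ hp'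
    have h1 : 1 ≤ t := by omega
    have h2 : t ≤ p := by omega
    obtain ⟨m, hm⟩ : ∃ m : ℤ, x = (i + t) + m * p := by
      refine ⟨(x - i - 1) / p, ?_⟩
      have := Int.emod_add_mul_ediv (x - i - 1) p
      have h3 : ((x - i - 1) / p) * p = p * ((x - i - 1) / p) := mul_comm _ _
      omega
    have e1 : u x = u (i + t) := by rw [hm, hmul]
    have e2 : u (x + d) = u (j + t) := by
      rw [show x + d = (j + t) + m * p by omega, hmul]
    rw [e1, e2]
    exact (hwin t h1 (h2.trans (by exact_mod_cast hr))).symm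
  -- remainder would be a smaller period
  have hsnn : 0 ≤ d % p := Int.emod_nonneg _ (by omega)
  have hslt : d % p < p := Int.emod_lt_of_pos _ hp'
  by_contra hnd
  have hspos : 0 < d % p := by
    rcases eq_or_lt_of_le hsnn with h | h
    · exact absurd (Int.dvd_of_emod_eq_zero h.symm) hnd
    · exact h
  set sn : ℕ := (d % p).toNat with hsn
  have hsn' : (sn : ℤ) = d % p := Int.toNat_of_nonneg hsnn
  have hpers : ∀ x : ℤ, u (x + sn) = u x := by
    intro x
    have := Int.emod_add_mul_ediv d p
    have h3 : (d / p) * p = p * (d / p) := mul_comm _ _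
    have e : u (x + d) = u (x + sn) := by
      rw [show x + d = (x + (sn : ℤ)) + (d / p) * p by omega, hmul]
    rw [← e, hperd]
  have := hmin sn (by omega) hpers
  omega
end

section
/- Let α be a finite alphabet and let W be a set of words (finite lists) over α that is factor-closed. Suppose that for some integer d ≥ 3, the number of words in W of length d is at most d − 1. Then for every integer h ≥ d, the number of words in W of length h is at most (d − 1)³. -/
namespace Stmt2Aux

open List

variable {α : Type*}

/-- pointwise periodicity of `f` with period `p` on `[a, b)`. -/
def Per (f : ℕ → α) (p a b : ℕ) : Prop := ∀ z, a ≤ z → z + p < b → f z = f (z + p)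

lemma per_mono {f : ℕ → α} {p a b a' b' : ℕ} (h : Per f p a b) (ha : a ≤ a') (hb : b' ≤ b) :
    Per f p a' b' := fun z hz hzb => h z (le_trans ha hz) (lt_of_lt_of_le hzb hb)

lemma per_chain {f : ℕ → α} {p a b : ℕ} (h : Per f p a b) :
    ∀ k z, a ≤ z → z + k * p < b → f z = f (z + k * p) := by
  intro k
  induction k with
  | zero => intro z _ _; simp
  | succ n ih =>
    intro z hz hzb
    have hle : z + n * p ≤ z + (n + 1) * p :=
      Nat.add_le_add_left (Nat.mul_le_mul_right p (Nat.le_succ n)) z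
    have h1 : f z = f (z + n * p) := ih z hz (lt_of_le_of_lt hle hzb)
    have h2 : f (z + n * p) = f (z + n * p + p) :=
      h (z + n * p) (by omega) (by have : z + n * p + p = z + (n+1) * p := by ring
                                   omega)
    have h3 : z + n * p + p = z + (n + 1) * p := by ring
    rw [h1, h2, h3]

lemma per_congr {f : ℕ → α} {p a b : ℕ} (hp : 0 < p) (h : Per f p a b) {z z' : ℕ}
    (hz : a ≤ z) (hz' : a ≤ z') (hzb : z < b) (hz'b : z' < b) (hmod : z % p = z' % p) :
    f z = f z' := by
  rcases le_total z z' with hle | hle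
  · obtain ⟨k, hk⟩ := (Nat.modEq_iff_dvd' hle).mp (hmod : z ≡ z' [MOD p])
    have hk' : z' - z = k * p := by rw [mul_comm] at hk; exact hk
    have hz2 : z' = z + k * p := by omega
    rw [hz2] at hz'b ⊢
    exact per_chain h k z hz hz'b
  · obtain ⟨k, hk⟩ := (Nat.modEq_iff_dvd' hle).mp (hmod.symm : z' ≡ z [MOD p])
    have hk' : z - z' = k * p := by rw [mul_comm] at hk; exact hk
    have hz2 : z = z' + k * p := by omega
    rw [hz2] at hzb ⊢
    exact (per_chain h k z' hz' hzb).symm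

/-- weak Fine–Wilf: two periods on an interval of length `≥ p + q` give period `gcd p q`. -/
lemma fine_wilf (f : ℕ → α) : ∀ n p q a b, p + q ≤ n → 0 < p → 0 < q →
    Per f p a b → Per f q a b → a + p + q ≤ b → Per f (Nat.gcd p q) a b := by
  intro n
  induction n with
  | zero => intro p q a b hn hp hq _ _ _; omega
  | succ m ih =>
    intro p q a b hn hp hq hP hQ hlen
    rcases lt_trichotomy p q with hlt | heq | hgt
    · -- p < q : replace q by q - p
      have hQP : Per f (q - p) a b := by
        intro z hz hzb
        rcases le_or_gt (a + p) z with hcase | hcase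
        · have e1 : f (z - p) = f (z - p + q) := hQ (z - p) (by omega) (by omega)
          have e2 : f (z - p) = f (z - p + p) := hP (z - p) (by omega) (by omega)
          have e3 : z - p + p = z := by omega
          have e4 : z - p + q = z + (q - p) := by omega
          rw [e3] at e2; rw [e4] at e1; rw [← e2, e1]
        · have e1 : f z = f (z + q) := hQ z hz (by omega)
          have e2 : f (z + (q - p)) = f (z + (q - p) + p) := hP (z + (q - p)) (by omega) (by omega)
          have e3 : z + (q - p) + p = z + q := by omega
          rw [e3] at e2; rw [e1, ← e2]
      have hg : Nat.gcd p (q - p) = Nat.gcd p q := Nat.gcd_sub_self_right (le_of_lt hlt)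
      rw [← hg]
      exact ih p (q - p) a b (by omega) hp (by omega) hP hQP (by omega)
    · subst heq
      simpa [Nat.gcd_self] using hP
    · have hPQ : Per f (p - q) a b := by
        intro z hz hzb
        rcases le_or_gt (a + q) z with hcase | hcase
        · have e1 : f (z - q) = f (z - q + p) := hP (z - q) (by omega) (by omega)
          have e2 : f (z - q) = f (z - q + q) := hQ (z - q) (by omega) (by omega)
          have e3 : z - q + q = z := by omega
          have e4 : z - q + p = z + (p - q) := by omega
          rw [e3] at e2; rw [e4] at e1; rw [← e2, e1]
        · have e1 : f z = f (z + p) := hP z hz (by omega)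
          have e2 : f (z + (p - q)) = f (z + (p - q) + q) := hQ (z + (p - q)) (by omega) (by omega)
          have e3 : z + (p - q) + q = z + p := by omega
          rw [e3] at e2; rw [e1, ← e2]
      have hg : Nat.gcd (p - q) q = Nat.gcd p q := Nat.gcd_sub_self_left (le_of_lt hgt)
      rw [← hg]
      exact ih (p - q) q a b (by omega) (by omega) hq hPQ hQ (by omega)

/-- lift a local period `γ` (on a window of length `≥ ρ + γ` inside a `ρ`-periodic
zone `[σ, B)`) to the whole zone. -/
lemma per_lift {f : ℕ → α} {ρ γ σ B c e : ℕ} (hρ : 0 < ρ) (hγ : 0 < γ)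
    (hPer : Per f ρ σ B) (hloc : Per f γ c e) (hc : σ ≤ c) (he : e ≤ B)
    (hlen : c + ρ + γ ≤ e) : Per f γ σ B := by
  intro z hz hzb
  have hge : c ≤ z + ρ * c := by nlinarith
  set z' := c + (z + ρ * c - c) % ρ with hz'def
  have hmod : z' % ρ = z % ρ := by
    have h1 : z' % ρ = (c + (z + ρ * c - c)) % ρ := Nat.add_mod_mod _ _ _
    have h2 : c + (z + ρ * c - c) = z + ρ * c := by omega
    rw [h1, h2, Nat.add_mul_mod_self_left]
  have hz'lt : z' < c + ρ := by
    have := Nat.mod_lt (z + ρ * c - c) hρ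
    omega
  have hz'ge : c ≤ z' := Nat.le_add_right _ _
  have e1 : f z = f z' :=
    per_congr hρ hPer hz (le_trans hc hz'ge) (by omega) (by omega) hmod.symm
  have e2 : f (z + γ) = f (z' + γ) := by
    refine per_congr hρ hPer (by omega) (by omega) (by omega) (by omega) ?_
    have : (z + γ) % ρ = (z' + γ) % ρ := Nat.ModEq.add_right γ hmod.symm
    exact this
  have e3 : f z' = f (z' + γ) := hloc z' hz'ge (by omega)
  rw [e1, e3, ← e2]

end Stmt2Aux

namespace Stmt2Aux

open List Classical

variable {α : Type*}

/-- The window of `f` at `x` of length `d`, as a list. -/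
def win (f : ℕ → α) (d x : ℕ) : List α := List.ofFn (fun k : Fin d => f (x + (k : ℕ)))

lemma win_eq_iff {f : ℕ → α} {d x y : ℕ} :
    win f d x = win f d y ↔ ∀ k, k < d → f (x + k) = f (y + k) := by
  constructor
  · intro h k hk
    have := List.ofFn_inj.mp h
    exact congrFun this ⟨k, hk⟩
  · intro h
    exact List.ofFn_inj.mpr (funext fun k => h k k.2)

/-- The key structural lemma: a word whose `d`-windows all lie in a set of at most
`d-1` windows is periodic (with some period `p ≤ d-1`) on the whole middle `[d, h-d)`. -/
lemma exists_period [DecidableEq (List α)] (f : ℕ → α) (d h : ℕ) (hd : 3 ≤ d)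
    (S : Finset (List α)) (hcard : S.card ≤ d - 1)
    (hwin : ∀ x, x + d ≤ h → win f d x ∈ S) :
    ∃ p, 1 ≤ p ∧ p ≤ d - 1 ∧ ∀ x, d ≤ x → x + d < h → f (x - p) = f x := by
  rcases lt_or_ge h (2 * d + 1) with hsmall | hbig
  · exact ⟨1, le_refl 1, by omega, fun x hx hxd => by omega⟩
  -- pigeonhole among the first d windows
  obtain ⟨x, hx, y, hy, hxy, hwxy⟩ :
      ∃ x ∈ Finset.range d, ∃ y ∈ Finset.range d, x ≠ y ∧ win f d x = win f d y := by
    apply Finset.exists_ne_map_eq_of_card_lt_of_maps_to (t := S)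
    · rw [Finset.card_range]; omega
    · intro a ha
      rw [Finset.mem_coe, Finset.mem_range] at ha
      exact hwin a (by omega)
  simp only [Finset.mem_range] at hx hy
  -- order them
  set σ := min x y with hσ
  set τ := max x y with hτ
  have hστ : σ < τ := by rcases Nat.lt_or_ge x y with h | h <;> simp [hσ, hτ] <;> omega
  have hτd : τ ≤ d - 1 := by simp [hτ]; omega
  have hw : win f d σ = win f d τ := by
    rcases le_total x y with h | h
    · rwa [hσ, hτ, min_eq_left h, max_eq_right h]
    · rw [hσ, hτ, min_eq_right h, max_eq_left h]; exact hwxy.symm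
  set π := τ - σ with hπ
  have hπpos : 0 < π := by omega
  have hπle : π ≤ d - 1 := by omega
  -- initial zone
  have hPerInit : Per f π σ (τ + d) := by
    intro z hz hzb
    have hk : z - σ < d := by omega
    have := win_eq_iff.mp hw (z - σ) hk
    have e1 : σ + (z - σ) = z := by omega
    have e2 : τ + (z - σ) = z + π := by omega
    rwa [e1, e2] at this
  -- maximal zone end B
  set B := Nat.findGreatest (fun b => Per f π σ b) h with hBdef
  have hBge : τ + d ≤ B := Nat.le_findGreatest (by omega) hPerInit
  have hBle : B ≤ h := Nat.findGreatest_le h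
  have hBPer : Per f π σ B := Nat.findGreatest_of_ne_zero hBdef.symm (by omega)
  have hBmax : ∀ b, B < b → b ≤ h → ¬ Per f π σ b := fun b h1 h2 =>
    Nat.findGreatest_is_greatest h1 h2
  -- minimal period of the zone
  have hex : ∃ p, 0 < p ∧ Per f p σ B := ⟨π, hπpos, hBPer⟩
  set ρ := Nat.find hex with hρdef
  obtain ⟨hρpos, hρPer⟩ : 0 < ρ ∧ Per f ρ σ B := Nat.find_spec hex
  have hρleπ : ρ ≤ π := Nat.find_min' hex ⟨hπpos, hBPer⟩
  have hρmin : ∀ m, m < ρ → ¬(0 < m ∧ Per f m σ B) := fun m hm => Nat.find_min hex hm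
  -- ρ divides π
  have hdvd : ρ ∣ π := by
    have hγPer : Per f (Nat.gcd ρ π) σ B :=
      fine_wilf f (ρ + π) ρ π σ B le_rfl hρpos hπpos hρPer hBPer (by omega)
    have hγpos : 0 < Nat.gcd ρ π := Nat.gcd_pos_of_pos_left π hρpos
    have hγle : Nat.gcd ρ π ≤ ρ := Nat.le_of_dvd hρpos (Nat.gcd_dvd_left ρ π)
    have : ¬ Nat.gcd ρ π < ρ := fun hlt => hρmin _ hlt ⟨hγpos, hγPer⟩
    have hγeq : Nat.gcd ρ π = ρ := by omega
    rw [← hγeq]; exact Nat.gcd_dvd_right ρ π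
  by_cases hcase : B < h ∧ B ≤ h - d + ρ
  · -- contradiction branch
    exfalso
    obtain ⟨hBlt, hBle2⟩ := hcase
    -- the break transfers to ρ
    have hbreak : f (B - ρ) ≠ f B := by
      intro heq
      refine hBmax (B + 1) (by omega) (by omega) ?_
      intro z hz hzb
      rcases Nat.lt_or_ge (z + π) B with hlt | hge
      · exact hBPer z hz hlt
      · have hzB : z + π = B := by omega
        have h1 : f z = f (B - ρ) := by
          refine per_congr hρpos hρPer hz (by omega) (by omega) (by omega) ?_
          have : (B - ρ) % ρ = (B - π) % ρ := by
            have h2 : (B - π) ≡ (B - ρ) [MOD ρ] := by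
              rw [Nat.modEq_iff_dvd' (by omega)]
              have : B - ρ - (B - π) = π - ρ := by omega
              rw [this]
              exact (Nat.dvd_sub hdvd dvd_rfl)
            exact h2.symm
          have hz2 : z = B - π := by omega
          rw [hz2]; exact this.symm
        rw [show z + π = B from hzB, h1, heq]
    -- the d distinct windows
    have hwval : ∀ i : Fin d, (if (i : ℕ) < ρ then win f d (σ + i) else win f d (B - i)) ∈ S := by
      intro i
      by_cases hi : (i : ℕ) < ρ
      · simp only [hi, if_true]
        exact hwin _ (by omega)
      · simp only [hi, if_false]
        push_neg at hi
        have : B - (i : ℕ) + d ≤ h := by omega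
        exact hwin _ this
    -- injectivity: first, windows at distinct i < j differ
    have hkey : ∀ i j : Fin d, (i : ℕ) < (j : ℕ) →
        (if (i : ℕ) < ρ then win f d (σ + i) else win f d (B - i)) ≠
        (if (j : ℕ) < ρ then win f d (σ + j) else win f d (B - j)) := by
      intro i j hij heq
      by_cases hj : (j : ℕ) < ρ
      · -- both pure
        have hi : (i : ℕ) < ρ := lt_trans hij hj
        rw [if_pos hi, if_pos hj] at heq
        set δ := (j : ℕ) - (i : ℕ) with hδ
        have hδpos : 0 < δ := by omega
        have hδzone : Per f δ (σ + i) (σ + j + d) := by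
          intro z hz hzb
          have hk : z - (σ + i) < d := by omega
          have := win_eq_iff.mp heq (z - (σ + i)) hk
          have e1 : σ + (i : ℕ) + (z - (σ + i)) = z := by omega
          have e2 : σ + (j : ℕ) + (z - (σ + i)) = z + δ := by omega
          rwa [e1, e2] at this
        have hρzone : Per f ρ (σ + i) (σ + j + d) :=
          per_mono hρPer (by omega) (by omega)
        have hγzone : Per f (Nat.gcd δ ρ) (σ + i) (σ + j + d) :=
          fine_wilf f (δ + ρ) δ ρ _ _ le_rfl hδpos hρpos hδzone hρzone (by omega)
        have hγpos : 0 < Nat.gcd δ ρ := Nat.gcd_pos_of_pos_left ρ hδpos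
        have hγB : Per f (Nat.gcd δ ρ) σ B := by
          refine per_lift hρpos hγpos hρPer hγzone (by omega) (by omega) ?_
          have : Nat.gcd δ ρ ≤ δ := Nat.le_of_dvd hδpos (Nat.gcd_dvd_left δ ρ)
          omega
        have hγlt : Nat.gcd δ ρ < ρ := by
          have : Nat.gcd δ ρ ≤ δ := Nat.le_of_dvd hδpos (Nat.gcd_dvd_left δ ρ)
          omega
        exact hρmin _ hγlt ⟨hγpos, hγB⟩
      · push_neg at hj
        by_cases hi : (i : ℕ) < ρ
        · -- pure vs straddler
          rw [if_pos hi, if_neg (by omega)] at heq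
          have e1 : f (σ + (i : ℕ) + (j : ℕ)) = f B := by
            have := win_eq_iff.mp heq (j : ℕ) j.2
            rwa [show B - (j : ℕ) + (j : ℕ) = B by omega] at this
          have e2 : f (σ + (i : ℕ) + ((j : ℕ) - ρ)) = f (B - ρ) := by
            have := win_eq_iff.mp heq ((j : ℕ) - ρ) (by omega)
            rwa [show B - (j : ℕ) + ((j : ℕ) - ρ) = B - ρ by omega] at this
          have e3 : f (σ + (i : ℕ) + ((j : ℕ) - ρ)) = f (σ + (i : ℕ) + (j : ℕ)) := by
            have := hρPer (σ + (i : ℕ) + ((j : ℕ) - ρ)) (by omega) (by omega)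
            rwa [show σ + (i : ℕ) + ((j : ℕ) - ρ) + ρ = σ + (i : ℕ) + (j : ℕ) by omega] at this
          exact hbreak (by rw [← e2, e3, e1])
        · -- both straddlers
          push_neg at hi
          rw [if_neg (by omega), if_neg (by omega)] at heq
          have e1 : f (B - (j : ℕ) + (i : ℕ)) = f B := by
            have := (win_eq_iff.mp heq (i : ℕ) i.2).symm
            rwa [show B - (i : ℕ) + (i : ℕ) = B by omega] at this
          have e2 : f (B - (j : ℕ) + ((i : ℕ) - ρ)) = f (B - ρ) := by
            have := (win_eq_iff.mp heq ((i : ℕ) - ρ) (by omega)).symm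
            rwa [show B - (i : ℕ) + ((i : ℕ) - ρ) = B - ρ by omega] at this
          have e3 : f (B - (j : ℕ) + ((i : ℕ) - ρ)) = f (B - (j : ℕ) + (i : ℕ)) := by
            have := hρPer (B - (j : ℕ) + ((i : ℕ) - ρ)) (by omega) (by omega)
            rwa [show B - (j : ℕ) + ((i : ℕ) - ρ) + ρ = B - (j : ℕ) + (i : ℕ) by omega] at this
          exact hbreak (by rw [← e2, e3, e1])
    -- build the injection and contradict the cardinality
    set g : Fin d → List α := fun i => if (i : ℕ) < ρ then win f d (σ + i) else win f d (B - i)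
      with hg
    have hginj : Function.Injective g := by
      intro i j hij
      rcases lt_trichotomy (i : ℕ) (j : ℕ) with h | h | h
      · exact absurd hij (hkey i j h)
      · exact Fin.ext h
      · exact absurd hij.symm (hkey j i h)
    have hsub : Finset.image g Finset.univ ⊆ S := by
      intro s hs
      obtain ⟨i, _, rfl⟩ := Finset.mem_image.mp hs
      exact hwval i
    have hcard2 : d ≤ S.card := by
      have h1 := Finset.card_le_card hsub
      rwa [Finset.card_image_of_injective _ hginj, Finset.card_univ, Fintype.card_fin] at h1
    omega
  · -- good branch
    refine ⟨ρ, hρpos, le_trans hρleπ hπle, ?_⟩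
    intro z hz hzd
    have hzB : z < B := by
      push_neg at hcase
      rcases Nat.lt_or_ge B h with hlt | hge
      · have := hcase hlt; omega
      · omega
    have := hρPer (z - ρ) (by omega) (by omega)
    rwa [show z - ρ + ρ = z by omega] at this

end Stmt2Aux

open Stmt2Aux

/-- If `W` is a factor-closed set of words over a finite alphabet which contains at most
`d - 1` words of length `d` (for some `d ≥ 3`), then for every `h ≥ d` the set `W`
contains at most `(d - 1)³` words of length `h`. -/
theorem stmt2 {α : Type*} [Fintype α] (W : Set (List α))
    (hW : ∀ w ∈ W, ∀ u : List α, u <:+: w → u ∈ W)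
    (d : ℕ) (hd : 3 ≤ d)
    (hcount : {w ∈ W | w.length = d}.ncard ≤ d - 1) :
    ∀ h : ℕ, d ≤ h → {w ∈ W | w.length = h}.ncard ≤ (d - 1) ^ 3 := by
  classical
  intro h hh
  rcases isEmpty_or_nonempty α with hα | hα
  · -- empty alphabet: no word of positive length
    have : {w ∈ W | w.length = h} = ∅ := by
      ext w
      simp only [Set.mem_setOf_eq, Set.mem_empty_iff_false, iff_false]
      rintro ⟨_, hlen⟩
      cases w with
      | nil => simp at hlen; omega
      | cons a _ => exact hα.elim a
    rw [this]; simp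
  · obtain ⟨a0⟩ := hα
    -- finiteness
    have hSdfin : {w ∈ W | w.length = d}.Finite :=
      (List.finite_length_eq α d).subset (fun w hw => hw.2)
    have hShfin : {w ∈ W | w.length = h}.Finite :=
      (List.finite_length_eq α h).subset (fun w hw => hw.2)
    set Fd := hSdfin.toFinset with hFd
    set Fh := hShfin.toFinset with hFh
    have hcardd : Fd.card ≤ d - 1 := by
      rwa [← Set.ncard_eq_toFinset_card _ hSdfin]
    -- windows of members are in Fd
    have hwinmem : ∀ w ∈ Fh, ∀ x, x + d ≤ h →
        win (fun i => w.getD i a0) d x ∈ Fd := by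
      intro w hw x hx
      rw [hFh, Set.Finite.mem_toFinset] at hw
      obtain ⟨hwW, hwlen⟩ := hw
      have hwin_eq : win (fun i => w.getD i a0) d x = (w.drop x).take d := by
        apply List.ext_getElem
        · simp [win, hwlen]; omega
        · intro k hk1 hk2
          simp only [win] at hk1 ⊢
          rw [List.getElem_ofFn]
          have hk : k < d := by simpa using hk1
          have hxk : x + k < w.length := by omega
          rw [List.getElem_take, List.getElem_drop]
          simp only [List.getD_eq_getElem w a0 hxk]
      rw [hwin_eq, hFd, Set.Finite.mem_toFinset]
      constructor
      · refine hW w hwW _ ?_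
        exact ((w.drop x).take_prefix d).isInfix.trans (w.drop_suffix x).isInfix
      · simp [hwlen]; omega
    -- the chosen period
    have hexists : ∀ w ∈ Fh, ∃ p, 1 ≤ p ∧ p ≤ d - 1 ∧
        ∀ x, d ≤ x → x + d < h → (fun i => w.getD i a0) (x - p) = (fun i => w.getD i a0) x := by
      intro w hw
      exact exists_period (fun i => w.getD i a0) d h hd Fd hcardd (hwinmem w hw)
    set P : List α → ℕ := fun w =>
      if hw : ∃ p, 1 ≤ p ∧ p ≤ d - 1 ∧
          ∀ x, d ≤ x → x + d < h → w.getD (x - p) a0 = w.getD x a0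
      then hw.choose else 1 with hP
    have hPspec : ∀ w ∈ Fh, 1 ≤ P w ∧ P w ≤ d - 1 ∧
        ∀ x, d ≤ x → x + d < h → w.getD (x - P w) a0 = w.getD x a0 := by
      intro w hw
      have hex := hexists w hw
      rw [hP]
      simp only []
      rw [dif_pos hex]
      exact hex.choose_spec
    -- the injection
    set Φ : List α → List α × List α × ℕ := fun w => (w.take d, w.drop (h - d), P w) with hΦ
    have hmaps : ∀ w ∈ Fh, Φ w ∈ Fd ×ˢ Fd ×ˢ Finset.Icc 1 (d - 1) := by
      intro w hw
      have hws := hPspec w hw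
      rw [hFh, Set.Finite.mem_toFinset] at hw
      obtain ⟨hwW, hwlen⟩ := hw
      simp only [hΦ, Finset.mem_product, Finset.mem_Icc]
      refine ⟨?_, ?_, hws.1, hws.2.1⟩
      · rw [hFd, Set.Finite.mem_toFinset]
        exact ⟨hW w hwW _ (w.take_prefix d).isInfix, by simp [hwlen]; omega⟩
      · rw [hFd, Set.Finite.mem_toFinset]
        exact ⟨hW w hwW _ (w.drop_suffix (h - d)).isInfix, by simp [hwlen]; omega⟩
    have hinj : Set.InjOn Φ ↑Fh := by
      intro w1 hw1 w2 hw2 heq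
      simp only [Finset.coe_sort_coe, Finset.mem_coe] at hw1 hw2
      have hs1 := hPspec w1 hw1
      have hs2 := hPspec w2 hw2
      simp only [hΦ, Prod.mk.injEq] at heq
      obtain ⟨htake, hdrop, hp⟩ := heq
      have hl1 : w1.length = h := by
        rw [hFh, Set.Finite.mem_toFinset] at hw1; exact hw1.2
      have hl2 : w2.length = h := by
        rw [hFh, Set.Finite.mem_toFinset] at hw2; exact hw2.2
      -- pointwise equality by strong induction
      have hpt : ∀ n, n < h → w1.getD n a0 = w2.getD n a0 := by
        intro n
        induction n using Nat.strong_induction_on with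
        | _ n ih =>
          intro hn
          rcases Nat.lt_or_ge n d with hnd | hnd
          · -- from the common prefix
            have h1 : (w1.take d).getD n a0 = w1.getD n a0 := by
              rw [List.getD_eq_getElem _ a0 (by simp [hl1]; omega),
                  List.getD_eq_getElem _ a0 (by omega : n < w1.length),
                  List.getElem_take]
            have h2 : (w2.take d).getD n a0 = w2.getD n a0 := by
              rw [List.getD_eq_getElem _ a0 (by simp [hl2]; omega),
                  List.getD_eq_getElem _ a0 (by omega : n < w2.length),
                  List.getElem_take]
            rw [← h1, ← h2, htake]
          · rcases Nat.lt_or_ge n (h - d) with hmid | hend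
            · -- middle: use the period
              have hstep1 := hs1.2.2 n hnd (by omega)
              have hstep2 := hs2.2.2 n hnd (by omega)
              have hih := ih (n - P w1) (by omega) (by omega)
              rw [hp] at hstep1 hih
              rw [← hstep1, ← hstep2, hih]
            · -- from the common suffix
              have h1 : (w1.drop (h - d)).getD (n - (h - d)) a0 = w1.getD n a0 := by
                rw [List.getD_eq_getElem _ a0 (by simp [hl1]; omega),
                    List.getD_eq_getElem _ a0 (by omega : n < w1.length),
                    List.getElem_drop]
                congr 1; omega
              have h2 : (w2.drop (h - d)).getD (n - (h - d)) a0 = w2.getD n a0 := by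
                rw [List.getD_eq_getElem _ a0 (by simp [hl2]; omega),
                    List.getD_eq_getElem _ a0 (by omega : n < w2.length),
                    List.getElem_drop]
                congr 1; omega
              rw [← h1, ← h2, hdrop]
      apply List.ext_getElem (by rw [hl1, hl2])
      intro n hn1 hn2
      have := hpt n (by omega)
      rwa [List.getD_eq_getElem _ a0 hn1, List.getD_eq_getElem _ a0 hn2] at this
    -- count
    have hcard : Fh.card ≤ (d - 1) ^ 3 := by
      have h1 : Fh.card ≤ (Fd ×ˢ Fd ×ˢ Finset.Icc 1 (d - 1)).card := by
        apply Finset.card_le_card_of_injOn Φ (fun w hw => hmaps w hw)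
        intro w1 hw1 w2 hw2
        exact hinj (by simpa using hw1) (by simpa using hw2)
      rw [Finset.card_product, Finset.card_product, Nat.card_Icc] at h1
      have h2 : (d - 1 + 1 - 1) = d - 1 := by omega
      rw [h2] at h1
      calc Fh.card ≤ Fd.card * (Fd.card * (d - 1)) := h1
        _ ≤ (d - 1) * ((d - 1) * (d - 1)) := by
            exact Nat.mul_le_mul hcardd (Nat.mul_le_mul hcardd le_rfl)
        _ = (d - 1) ^ 3 := by ring
    rwa [← Set.ncard_eq_toFinset_card _ hShfin] at hcard
end

section
/- Let α be a finite alphabet and let W be a factor-closed set of words over α such that, for some integer d ≥ 3, the number of words in W of length d is at most d − 1. Then every word w ∈ W with length |w| ≥ 2d − 1 can be written as a concatenation w = w₁ ++ w₂ ++ w₃, where: w₂ is periodic with minimal period p for some positive integer p ≤ d − 1 (i.e., p is the least positive integer such that w₂(k) = w₂(k + p) whenever both positions are defined, and p < |w₂|), the length of w₂ is at least p + d, and the lengths of w₁ and w₃ are both at most d − p. -/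
/-- A word `v` has period `p` if `v (k) = v (k + p)` whenever both positions are defined. -/
def ListHasPeriod {α : Type*} (v : List α) (p : ℕ) : Prop :=
  ∀ (k : ℕ) (h : k + p < v.length), v[k]'(by omega) = v[k + p]'h

namespace Stmt3Aux

variable {α : Type*}

def win (f : ℕ → α) (j t : ℕ) : List α := (List.range j).map fun i => f (t + i)

lemma win_eq_iff {f : ℕ → α} {j t t' : ℕ} :
    win f j t = win f j t' ↔ ∀ i < j, f (t + i) = f (t' + i) := by
  simp [win, List.map_inj_left, List.mem_range]

lemma win_take {f : ℕ → α} (m t : ℕ) : (win f (m+1) t).take m = win f m t := by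
  rw [win, win, ← List.map_take, List.take_range, min_eq_left (by omega : m ≤ m+1)]

lemma win_succ_of_eq {f : ℕ → α} {m t t' : ℕ}
    (h : win f (m+1) t = win f (m+1) t') : win f m (t+1) = win f m (t'+1) := by
  rw [win_eq_iff] at h ⊢
  intro i hi
  have h1 := h (i+1) (by omega)
  have e1 : t + 1 + i = t + (i + 1) := by omega
  have e2 : t' + 1 + i = t' + (i + 1) := by omega
  rw [e1, e2]
  exact h1

lemma core [DecidableEq (List α)] (f : ℕ → α) (m N d : ℕ) (hm : 1 ≤ m) (hmd : m + 1 ≤ d) (hdN : d ≤ N)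
    (hDV : m ≤ ((Finset.range (N+1)).image (win f m)).card)
    (hDK : ((Finset.range N).image (win f (m+1))).card ≤ m) :
    ∃ s e lam, 0 < lam ∧ s + lam + d ≤ e ∧ e ≤ N + m ∧
      s + lam + (N + m - e) + 1 ≤ d ∧
      ∀ x, s ≤ x → x + lam < e → f x = f (x + lam) := by
  classical
  set DV := (Finset.range (N+1)).image (win f m) with hDVdef
  set DK := (Finset.range N).image (win f (m+1)) with hDKdef
  -- propagation of equalities under a determinism hypothesis
  have prop : ∀ (hdet : ∀ t t', t < N → t' < N → win f m t = win f m t' →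
        win f (m+1) t = win f (m+1) t'),
      ∀ a b, a < b → win f m a = win f m b →
        ∀ j, b + j ≤ N → win f m (a+j) = win f m (b+j) := by
    intro hdet a b hab heq j
    induction j with
    | zero => intro _; simpa using heq
    | succ j ih =>
      intro hj
      have h1 := ih (by omega)
      have hK := hdet (a+j) (b+j) (by omega) (by omega) h1
      have h2 := win_succ_of_eq hK
      have e1 : a + j + 1 = a + (j+1) := by omega
      have e2 : b + j + 1 = b + (j+1) := by omega
      rwa [e1, e2] at h2
  have pigeon : ∀ M, DV.card < M → M ≤ N + 1 →
      ∃ a b, a < b ∧ b < M ∧ win f m a = win f m b := by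
    intro M hc hMN
    have hmaps : ∀ a ∈ Finset.range M, win f m a ∈ DV := by
      intro a ha
      rw [Finset.mem_range] at ha
      exact Finset.mem_image_of_mem _ (Finset.mem_range.mpr (by omega))
    have := Finset.exists_ne_map_eq_of_card_lt_of_maps_to
      (by simpa using hc) hmaps
    obtain ⟨x, hx, y, hy, hxy, hmap⟩ := this
    rw [Finset.mem_range] at hx hy
    rcases lt_or_gt_of_ne hxy with h|h
    · exact ⟨x, y, h, hy, hmap⟩
    · exact ⟨y, x, h, hx, hmap.symm⟩
  by_cases hA : ∃ t, t < N ∧ win f m t = win f m N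
  · -- Case A : the final short window occurs earlier; full determinism
    have hDVT : DV ⊆ DK.image (List.take m) := by
      intro v hv
      simp only [hDVdef, hDKdef, Finset.mem_image, Finset.mem_range] at hv ⊢
      obtain ⟨t, ht, rfl⟩ := hv
      rcases Nat.lt_or_ge t N with h|h
      · exact ⟨win f (m+1) t, ⟨t, h, rfl⟩, win_take m t⟩
      · have htN : t = N := by omega
        obtain ⟨t₀, ht₀, heq⟩ := hA
        exact ⟨win f (m+1) t₀, ⟨t₀, ht₀, rfl⟩, by rw [win_take m t₀, heq, htN]⟩
    have hDVcard : DV.card ≤ m :=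
      le_trans (Finset.card_le_card hDVT) (le_trans Finset.card_image_le hDK)
    have hinj : Set.InjOn (List.take m) (DK : Set (List α)) := by
      rw [← Finset.card_image_iff]
      have h1 : m ≤ (DK.image (List.take m)).card :=
        le_trans hDV (Finset.card_le_card hDVT)
      have h2 : (DK.image (List.take m)).card ≤ DK.card := Finset.card_image_le
      omega
    have hdet : ∀ t t', t < N → t' < N → win f m t = win f m t' →
        win f (m+1) t = win f (m+1) t' := by
      intro t t' h h' heq
      refine hinj ?_ ?_ ?_
      · exact Finset.mem_coe.mpr (Finset.mem_image_of_mem _ (Finset.mem_range.mpr h))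
      · exact Finset.mem_coe.mpr (Finset.mem_image_of_mem _ (Finset.mem_range.mpr h'))
      · rw [win_take, win_take]; exact heq
    obtain ⟨a, b, hab, hbm, habeq⟩ := pigeon (m+1) (by omega) (by omega)
    refine ⟨a, N + m, b - a, by omega, by omega, le_refl _, by omega, ?_⟩
    intro x hax hx
    set t := min x (N - (b-a)) with htdef
    have hat : a ≤ t := by omega
    have h1 : win f m t = win f m (t + (b-a)) := by
      have h2 := prop hdet a b hab habeq (t - a) (by omega)
      have e1 : a + (t - a) = t := by omega
      have e2 : b + (t - a) = t + (b-a) := by omega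
      rwa [e1, e2] at h2
    rw [win_eq_iff] at h1
    have h3 := h1 (x - t) (by omega)
    have e3 : t + (x - t) = x := by omega
    have e4 : t + (b-a) + (x-t) = x + (b-a) := by omega
    rwa [e3, e4] at h3
  · -- Case B : the final short window is new
    push_neg at hA
    have hVNmem : win f m N ∈ DV :=
      Finset.mem_image_of_mem _ (Finset.mem_range.mpr (by omega))
    have hT : DK.image (List.take m) = DV.erase (win f m N) := by
      apply Finset.Subset.antisymm
      · intro v hv
        simp only [hDKdef, Finset.mem_image, Finset.mem_range] at hv
        obtain ⟨κ, ⟨t, ht, rfl⟩, rfl⟩ := hv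
        rw [win_take]
        exact Finset.mem_erase.mpr ⟨hA t ht,
          Finset.mem_image_of_mem _ (Finset.mem_range.mpr (by omega))⟩
      · intro v hv
        rw [Finset.mem_erase] at hv
        obtain ⟨hvne, hvmem⟩ := hv
        simp only [hDVdef, Finset.mem_image, Finset.mem_range] at hvmem
        obtain ⟨t, ht, rfl⟩ := hvmem
        have htN : t < N := by
          rcases Nat.lt_or_ge t N with h|h
          · exact h
          · exfalso; exact hvne (by rw [show t = N by omega])
        exact Finset.mem_image.mpr ⟨win f (m+1) t,
          Finset.mem_image_of_mem _ (Finset.mem_range.mpr htN), win_take m t⟩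
    have hTcard : (DK.image (List.take m)).card = DV.card - 1 := by
      rw [hT, Finset.card_erase_of_mem hVNmem]
    by_cases hc : (DK.image (List.take m)).card = DK.card
    · -- fully deterministic: contradiction
      exfalso
      have hinj : Set.InjOn (List.take m) (DK : Set (List α)) := Finset.card_image_iff.mp hc
      have hdet : ∀ t t', t < N → t' < N → win f m t = win f m t' →
          win f (m+1) t = win f (m+1) t' := by
        intro t t' h h' heq
        refine hinj ?_ ?_ ?_
        · exact Finset.mem_coe.mpr (Finset.mem_image_of_mem _ (Finset.mem_range.mpr h))
        · exact Finset.mem_coe.mpr (Finset.mem_image_of_mem _ (Finset.mem_range.mpr h'))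
        · rw [win_take, win_take]; exact heq
      have hDVcard : DV.card ≤ m + 1 := by omega
      obtain ⟨a, b, hab, hbm, habeq⟩ := pigeon (m+2) (by omega) (by omega)
      rcases Nat.lt_or_ge b N with hbN|hbN
      · have h1 := prop hdet a b hab habeq (N - b) (by omega)
        have e2 : b + (N - b) = N := by omega
        rw [e2] at h1
        exact hA (a + (N - b)) (by omega) h1
      · have hbN' : b = N := by omega
        exact hA a (by omega) (hbN' ▸ habeq)
    · -- the branching case
      have hTlt : (DK.image (List.take m)).card < DK.card :=
        lt_of_le_of_ne Finset.card_image_le hc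
      have hninj : ¬ Set.InjOn (List.take m) (DK : Set (List α)) := by
        intro h
        exact hc (Finset.card_image_of_injOn h)
      obtain ⟨κ₁, hκ₁, κ₂, hκ₂, hκne, htk⟩ : ∃ κ₁ ∈ DK, ∃ κ₂ ∈ DK,
          κ₁ ≠ κ₂ ∧ List.take m κ₁ = List.take m κ₂ := by
        by_contra hcon
        push_neg at hcon
        exact hninj (fun x hx y hy hxy => by
          by_contra hne
          exact (hcon x hx y hy hne) hxy)
      set B := List.take m κ₁ with hBdef
      have FU1 : ∀ κ, κ ∈ DK → κ ≠ κ₁ → κ ≠ κ₂ → List.take m κ ≠ B := by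
        intro κ hκ hne1 hne2 htkB
        have hκ₁mem : κ₁ ∈ (DK.erase κ₂).erase κ :=
          Finset.mem_erase.mpr ⟨fun h => hne1 h.symm, Finset.mem_erase.mpr ⟨hκne, hκ₁⟩⟩
        have hsub : DK.image (List.take m) ⊆ ((DK.erase κ₂).erase κ).image (List.take m) := by
          intro v hv
          obtain ⟨κ', hκ', rfl⟩ := Finset.mem_image.mp hv
          by_cases h2 : κ' = κ₂
          · exact Finset.mem_image.mpr ⟨κ₁, hκ₁mem, by rw [h2, ← htk]⟩
          · by_cases h3 : κ' = κ
            · exact Finset.mem_image.mpr ⟨κ₁, hκ₁mem, by rw [h3, htkB]⟩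
            · exact Finset.mem_image.mpr ⟨κ', Finset.mem_erase.mpr ⟨h3,
                Finset.mem_erase.mpr ⟨h2, hκ'⟩⟩, rfl⟩
        have h1 : (DK.image (List.take m)).card ≤ ((DK.erase κ₂).erase κ).card :=
          le_trans (Finset.card_le_card hsub) Finset.card_image_le
        have h2 : ((DK.erase κ₂).erase κ).card = DK.card - 2 := by
          rw [Finset.card_erase_of_mem (Finset.mem_erase.mpr ⟨hne2, hκ⟩),
            Finset.card_erase_of_mem hκ₂]
          omega
        have hDK2 : 2 ≤ DK.card := Finset.one_lt_card.mpr ⟨κ₁, hκ₁, κ₂, hκ₂, hκne⟩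
        omega
      have FU2 : ∀ κ κ', κ ∈ DK → κ' ∈ DK → κ ≠ κ' →
          List.take m κ = List.take m κ' → List.take m κ = B := by
        intro κ κ' hκ hκ' hne heqt
        by_contra hBne
        have hne1 : κ ≠ κ₁ := fun h => hBne (by rw [h])
        have hne2 : κ ≠ κ₂ := fun h => hBne (by rw [h, ← htk])
        have hne3 : κ' ≠ κ₁ := fun h => hBne (by rw [heqt, h])
        have hne4 : κ' ≠ κ₂ := fun h => hBne (by rw [heqt, h, ← htk])
        have hκ₁mem : κ₁ ∈ (DK.erase κ').erase κ₂ :=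
          Finset.mem_erase.mpr ⟨hκne, Finset.mem_erase.mpr ⟨fun h => hne3 h.symm, hκ₁⟩⟩
        have hκmem : κ ∈ (DK.erase κ').erase κ₂ :=
          Finset.mem_erase.mpr ⟨hne2, Finset.mem_erase.mpr ⟨hne, hκ⟩⟩
        have hsub : DK.image (List.take m) ⊆ ((DK.erase κ').erase κ₂).image (List.take m) := by
          intro v hv
          obtain ⟨κ'', hκ'', rfl⟩ := Finset.mem_image.mp hv
          by_cases h2 : κ'' = κ'
          · exact Finset.mem_image.mpr ⟨κ, hκmem, by rw [h2, heqt]⟩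
          · by_cases h3 : κ'' = κ₂
            · exact Finset.mem_image.mpr ⟨κ₁, hκ₁mem, by rw [h3, ← htk]⟩
            · exact Finset.mem_image.mpr ⟨κ'', Finset.mem_erase.mpr ⟨h3,
                Finset.mem_erase.mpr ⟨h2, hκ''⟩⟩, rfl⟩
        have h1 : (DK.image (List.take m)).card ≤ ((DK.erase κ').erase κ₂).card :=
          le_trans (Finset.card_le_card hsub) Finset.card_image_le
        have h2 : ((DK.erase κ').erase κ₂).card = DK.card - 2 := by
          rw [Finset.card_erase_of_mem (Finset.mem_erase.mpr ⟨fun h => hne4 h.symm, hκ₂⟩),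
            Finset.card_erase_of_mem hκ']
          omega
        have hDK2 : 2 ≤ DK.card := Finset.one_lt_card.mpr ⟨κ₁, hκ₁, κ₂, hκ₂, hκne⟩
        omega
      have hKmem : ∀ t, t < N → win f (m+1) t ∈ DK := fun t ht =>
        Finset.mem_image_of_mem _ (Finset.mem_range.mpr ht)
      have HB : ∀ t t', t < N → t' < N → win f m t = win f m t' → win f m t ≠ B →
          win f (m+1) t = win f (m+1) t' := by
        intro t t' h h' heq hne
        by_contra hKne
        have h1 : List.take m (win f (m+1) t) = List.take m (win f (m+1) t') := by
          rw [win_take, win_take]; exact heq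
        have h2 := FU2 _ _ (hKmem t h) (hKmem t' h') hKne h1
        rw [win_take] at h2
        exact hne h2
      have hfib2 : ∀ κ, κ ∈ DK → List.take m κ = B → κ = κ₁ ∨ κ = κ₂ := by
        intro κ hκ h
        by_contra hcon
        push_neg at hcon
        exact FU1 κ hκ hcon.1 hcon.2 h
      set O := (Finset.range N).filter (fun t => win f m t = B) with hOdef
      have hmemO : ∀ t, t ∈ O ↔ (t < N ∧ win f m t = B) := by
        intro t
        simp [hOdef, Finset.mem_filter, Finset.mem_range]
      obtain ⟨t₁, ht₁r, hKt₁⟩ := Finset.mem_image.mp hκ₁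
      obtain ⟨t₂, ht₂r, hKt₂⟩ := Finset.mem_image.mp hκ₂
      rw [Finset.mem_range] at ht₁r ht₂r
      have ht₁O : t₁ ∈ O := (hmemO _).mpr ⟨ht₁r, by rw [← win_take m t₁, hKt₁]⟩
      have ht₂O : t₂ ∈ O := (hmemO _).mpr ⟨ht₂r, by rw [← win_take m t₂, hKt₂, ← htk]⟩
      have hONE : O.Nonempty := ⟨t₁, ht₁O⟩
      set b1 := O.min' hONE with hb1def
      set bM := O.max' hONE with hbMdef
      have hb1mem : b1 ∈ O := Finset.min'_mem _ _
      have hbMmem : bM ∈ O := Finset.max'_mem _ _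
      have hb1le : ∀ x, x ∈ O → b1 ≤ x := fun x hx => Finset.min'_le _ _ hx
      have hbMge : ∀ x, x ∈ O → x ≤ bM := fun x hx => Finset.le_max' _ _ hx
      have hVO : ∀ x, x ∈ O → win f m x = B := fun x hx => ((hmemO x).mp hx).2
      have hbMN : bM < N := ((hmemO bM).mp hbMmem).1
      have hb1M : b1 < bM := by
        have hne : t₁ ≠ t₂ := fun h => hκne (by rw [← hKt₁, h, hKt₂])
        have h1 := hb1le _ ht₁O
        have h2 := hbMge _ ht₁O
        have h3 := hb1le _ ht₂O
        have h4 := hbMge _ ht₂O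
        omega
      have P0 : ∀ o, o ∈ O → o ≠ bM → win f (m+1) o ≠ win f (m+1) bM := by
        intro o ho honeM hKX
        have holt : o < bM := lt_of_le_of_ne (hbMge o ho) honeM
        have hoN : o < N := ((hmemO o).mp ho).1
        have chain : ∀ j, j ≤ N - bM → win f m (o+j) = win f m (bM+j) := by
          intro j
          induction j with
          | zero =>
            intro _
            simpa using (hVO o ho).trans (hVO bM hbMmem).symm
          | succ j ih =>
            intro hj
            have h1 := ih (by omega)
            have hKeq : win f (m+1) (o+j) = win f (m+1) (bM+j) := by
              rcases Nat.eq_zero_or_pos j with hj0|hj0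
              · subst hj0; simpa using hKX
              · have hBne : win f m (bM+j) ≠ B := by
                  intro hBeq
                  have hmem : bM + j ∈ O := (hmemO _).mpr ⟨by omega, hBeq⟩
                  have := hbMge _ hmem
                  omega
                exact HB (o+j) (bM+j) (by omega) (by omega) h1
                  (fun hh => hBne (h1.symm.trans hh))
            have h2 := win_succ_of_eq hKeq
            have e1 : o + j + 1 = o + (j+1) := by omega
            have e2 : bM + j + 1 = bM + (j+1) := by omega
            rwa [e1, e2] at h2
        have h2 := chain (N - bM) (le_refl _)
        rw [show bM + (N - bM) = N by omega] at h2
        exact hA (o + (N - bM)) (by omega) h2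
      have hXmem : win f (m+1) bM ∈ DK := hKmem bM hbMN
      have hXfib : win f (m+1) bM = κ₁ ∨ win f (m+1) bM = κ₂ :=
        hfib2 _ hXmem (by rw [win_take]; exact hVO _ hbMmem)
      set Y := if κ₁ = win f (m+1) bM then κ₂ else κ₁ with hYdef
      have P0' : ∀ o, o ∈ O → o ≠ bM → win f (m+1) o = Y := by
        intro o ho hne
        have hoN : o < N := ((hmemO o).mp ho).1
        have hKo : win f (m+1) o = κ₁ ∨ win f (m+1) o = κ₂ :=
          hfib2 _ (hKmem o hoN) (by rw [win_take]; exact hVO _ ho)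
        have hKoX := P0 o ho hne
        by_cases hxx : κ₁ = win f (m+1) bM
        · rw [hYdef, if_pos hxx]
          rcases hKo with h1|h1
          · exact absurd (h1.trans hxx) hKoX
          · exact h1
        · rw [hYdef, if_neg hxx]
          rcases hKo with h1|h1
          · exact h1
          · rcases hXfib with h2|h2
            · exact absurd h2.symm hxx
            · exact absurd (h1.trans h2.symm) hKoX
      have hgapex : ∃ g, 0 < g ∧ ∃ c, c ∈ O ∧ c + g ∈ O :=
        ⟨bM - b1, by omega, b1, hb1mem, by
          rw [show b1 + (bM - b1) = bM by omega]; exact hbMmem⟩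
      obtain ⟨lam, ⟨hlam0, c₀, hc₀O, hc₀O'⟩, hlammin⟩ :
          ∃ g, (0 < g ∧ ∃ c, c ∈ O ∧ c + g ∈ O) ∧
            ∀ g', g' < g → ¬(0 < g' ∧ ∃ c, c ∈ O ∧ c + g' ∈ O) :=
        ⟨Nat.find hgapex, Nat.find_spec hgapex, fun g' hg' => Nat.find_min hgapex hg'⟩
      have hmingap : ∀ c c', c ∈ O → c' ∈ O → c < c' → lam ≤ c' - c := by
        intro c c' hcO hc'O hlt
        by_contra hcon
        push_neg at hcon
        exact hlammin (c' - c) hcon ⟨by omega, c, hcO, by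
          rw [show c + (c' - c) = c' by omega]; exact hc'O⟩
      have hc₀M : c₀ + lam ≤ bM := hbMge _ hc₀O'
      have CL2 : ∀ t t', t < t' → win f m t = win f m t' →
          ∀ j, t' + j ≤ N → (∀ i, i < j → t' + i ≠ bM) →
            win f m (t+j) = win f m (t'+j) := by
        intro t t' htt' heq j
        induction j with
        | zero => intro _ _; simpa using heq
        | succ j ih =>
          intro hj hcond
          have h1 := ih (by omega) (fun i hi => hcond i (by omega))
          have hKeq : win f (m+1) (t+j) = win f (m+1) (t'+j) := by
            by_cases hBc : win f m (t+j) = B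
            · have ho1 : t+j ∈ O := (hmemO _).mpr ⟨by omega, hBc⟩
              have ho2 : t'+j ∈ O := (hmemO _).mpr ⟨by omega, h1.symm.trans hBc⟩
              have h2 : t+j ≠ bM := by
                have := hbMge _ ho2
                omega
              rw [P0' _ ho1 h2, P0' _ ho2 (hcond j (by omega))]
            · exact HB _ _ (by omega) (by omega) h1 hBc
          have h2 := win_succ_of_eq hKeq
          have e1 : t + j + 1 = t + (j+1) := by omega
          have e2 : t' + j + 1 = t' + (j+1) := by omega
          rwa [e1, e2] at h2
      have G3 : ∀ o, o ∈ O → o < bM → o + lam ∈ O := by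
        intro o ho hoM
        have hoN : o < N := ((hmemO o).mp ho).1
        rcases lt_trichotomy o c₀ with h|h|h
        · have hres := CL2 o c₀ h ((hVO o ho).trans (hVO c₀ hc₀O).symm) lam
            (by omega) (fun i hi => by omega)
          refine (hmemO _).mpr ⟨by omega, ?_⟩
          rw [hres]
          exact hVO _ hc₀O'
        · subst h
          exact hc₀O'
        · have holam : o + lam ≤ bM := by
            have := hmingap o bM ho hbMmem hoM
            omega
          have hres := CL2 c₀ o h ((hVO c₀ hc₀O).trans (hVO o ho).symm) lam
            (by omega) (fun i hi => by omega)
          refine (hmemO _).mpr ⟨by omega, ?_⟩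
          rw [← hres]
          exact hVO _ hc₀O'
      have hb2O : b1 + lam ∈ O := G3 b1 hb1mem hb1M
      have hb2M : b1 + lam ≤ bM := hbMge _ hb2O
      have hwitb1 : ∀ t, b1 ≤ t → t ≤ b1 → win f m t = win f m (t + lam) := by
        intro t h1 h2
        have ht : t = b1 := by omega
        subst ht
        rw [hVO _ hb1mem, hVO _ hb2O]
      have hsex : ∃ a, ∀ t, a ≤ t → t ≤ b1 → win f m t = win f m (t + lam) := ⟨b1, hwitb1⟩
      obtain ⟨s, hsspec, hsmin⟩ :
          ∃ s, (∀ t, s ≤ t → t ≤ b1 → win f m t = win f m (t + lam)) ∧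
            ∀ a, a < s → ¬ ∀ t, a ≤ t → t ≤ b1 → win f m t = win f m (t + lam) :=
        ⟨Nat.find hsex, Nat.find_spec hsex, fun a ha => Nat.find_min hsex ha⟩
      have hsb1 : s ≤ b1 := by
        by_contra hcon
        push_neg at hcon
        exact hsmin b1 hcon hwitb1
      have C1 : ∀ t, b1 ≤ t → t + lam ≤ bM → win f m t = win f m (t + lam) := by
        intro t h1 h2
        have hO'ne : b1 ∈ O.filter (· ≤ t) :=
          Finset.mem_filter.mpr ⟨hb1mem, by simpa using h1⟩
        set o := (O.filter (· ≤ t)).max' ⟨b1, hO'ne⟩ with hodef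
        have homem : o ∈ O.filter (· ≤ t) := Finset.max'_mem _ _
        have hoO : o ∈ O := (Finset.mem_filter.mp homem).1
        have hot : o ≤ t := by simpa using (Finset.mem_filter.mp homem).2
        have hoM : o < bM := by omega
        have holamO : o + lam ∈ O := G3 o hoO hoM
        have htlt : t < o + lam := by
          by_contra hcon
          push_neg at hcon
          have h3 : o + lam ∈ O.filter (· ≤ t) :=
            Finset.mem_filter.mpr ⟨holamO, by simpa using hcon⟩
          have := Finset.le_max' _ _ h3
          omega
        have hres := CL2 o (o + lam) (by omega)
          ((hVO _ hoO).trans (hVO _ holamO).symm) (t - o) (by omega)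
          (fun i hi => by omega)
        rw [show o + (t - o) = t by omega,
          show o + lam + (t - o) = t + lam by omega] at hres
        exact hres
      have Hper : ∀ t, s ≤ t → t + lam ≤ bM → win f m t = win f m (t + lam) := by
        intro t h1 h2
        rcases le_or_gt t b1 with h|h
        · exact hsspec t h1 h
        · exact C1 t (by omega) h2
      have Hcase : ∀ t t', t < t' →
          (t < s ∨ (b1 ≤ t ∧ t < b1 + lam) ∨ (bM + 1 ≤ t ∧ t ≤ N)) →
          (t' < s ∨ (b1 ≤ t' ∧ t' < b1 + lam) ∨ (bM + 1 ≤ t' ∧ t' ≤ N)) →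
          win f m t = win f m t' → False := by
        intro t t' htt' hmt hmt' heq
        rcases hmt with h1|h1|h1 <;> rcases hmt' with h2|h2|h2
        · -- both < s
          have hres := CL2 t t' htt' heq (b1 - t') (by omega) (fun i hi => by omega)
          rw [show t' + (b1 - t') = b1 by omega] at hres
          have hxO : t + (b1 - t') ∈ O :=
            (hmemO _).mpr ⟨by omega, hres.trans (hVO _ hb1mem)⟩
          have := hb1le _ hxO
          omega
        · -- t < s, t' in loop window
          rcases Nat.eq_or_lt_of_le h2.1 with hb|hb
          · have hxO : t ∈ O := (hmemO _).mpr ⟨by omega, by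
              rw [heq, ← hb]; exact hVO _ hb1mem⟩
            have := hb1le _ hxO
            omega
          · have hres := CL2 t t' htt' heq (b1 + lam - t') (by omega) (fun i hi => by omega)
            rw [show t' + (b1 + lam - t') = b1 + lam by omega] at hres
            have hxO : t + (b1 + lam - t') ∈ O :=
              (hmemO _).mpr ⟨by omega, hres.trans (hVO _ hb2O)⟩
            have hxge := hb1le _ hxO
            rcases lt_trichotomy (t + (b1 + lam - t')) b1 with h3|h3|h3
            · omega
            · have hprop : ∀ u, t ≤ u → u ≤ b1 → win f m u = win f m (u + lam) := by
                intro u hu1 hu2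
                have hres2 := CL2 t t' htt' heq (u - t) (by omega) (fun i hi => by omega)
                rw [show t + (u - t) = u by omega,
                  show t' + (u - t) = u + lam by omega] at hres2
                exact hres2
              exact hsmin t (by omega) (fun u hu1 hu2 => hprop u hu1 hu2)
            · have := hmingap b1 _ hb1mem hxO h3
              omega
        · -- t < s, t' in tail
          rcases Nat.eq_or_lt_of_le h2.2 with hb|hb
          · exact hA t (by omega) (by rw [heq, hb])
          · by_cases hcmp : b1 - t ≤ N - t'
            · have hres := CL2 t t' htt' heq (b1 - t) (by omega) (fun i hi => by omega)
              rw [show t + (b1 - t) = b1 by omega] at hres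
              rcases Nat.lt_or_ge (t' + (b1 - t)) N with hyN|hyN
              · have hyO : t' + (b1 - t) ∈ O :=
                  (hmemO _).mpr ⟨hyN, hres.symm.trans (hVO _ hb1mem)⟩
                have := hbMge _ hyO
                omega
              · have hyN' : t' + (b1 - t) = N := by omega
                exact hA b1 (by omega) (by rw [← hyN']; exact hres)
            · have hres := CL2 t t' htt' heq (N - t') (by omega) (fun i hi => by omega)
              rw [show t' + (N - t') = N by omega] at hres
              exact hA (t + (N - t')) (by omega) hres
        · omega
        · -- both in loop window
          have hres := CL2 t t' htt' heq (b1 + lam - t') (by omega) (fun i hi => by omega)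
          rw [show t' + (b1 + lam - t') = b1 + lam by omega] at hres
          have hxO : t + (b1 + lam - t') ∈ O :=
            (hmemO _).mpr ⟨by omega, hres.trans (hVO _ hb2O)⟩
          have hxgt : b1 < t + (b1 + lam - t') := by omega
          have := hmingap b1 _ hb1mem hxO hxgt
          omega
        · -- t in loop window, t' in tail
          rcases Nat.eq_or_lt_of_le h2.2 with hb|hb
          · exact hA t (by omega) (by rw [heq, hb])
          · by_cases hcmp : b1 + lam - t ≤ N - t'
            · have hres := CL2 t t' htt' heq (b1 + lam - t) (by omega) (fun i hi => by omega)
              rw [show t + (b1 + lam - t) = b1 + lam by omega] at hres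
              rcases Nat.lt_or_ge (t' + (b1 + lam - t)) N with hyN|hyN
              · have hyO : t' + (b1 + lam - t) ∈ O :=
                  (hmemO _).mpr ⟨hyN, hres.symm.trans (hVO _ hb2O)⟩
                have := hbMge _ hyO
                omega
              · have hyN' : t' + (b1 + lam - t) = N := by omega
                exact hA (b1 + lam) (by omega) (by rw [← hyN']; exact hres)
            · have hres := CL2 t t' htt' heq (N - t') (by omega) (fun i hi => by omega)
              rw [show t' + (N - t') = N by omega] at hres
              exact hA (t + (N - t')) (by omega) hres
        · omega
        · omega
        · -- both in tail
          rcases Nat.eq_or_lt_of_le h2.2 with hb|hb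
          · exact hA t (by omega) (by rw [heq, hb])
          · have hres := CL2 t t' htt' heq (N - t') (by omega) (fun i hi => by omega)
            rw [show t' + (N - t') = N by omega] at hres
            exact hA (t + (N - t')) (by omega) hres
      set A := (Finset.range s ∪ Finset.Ico b1 (b1 + lam)) ∪ Finset.Icc (bM+1) N with hAdef
      have hmemA : ∀ x, x ∈ A ↔
          (x < s ∨ (b1 ≤ x ∧ x < b1 + lam) ∨ (bM + 1 ≤ x ∧ x ≤ N)) := by
        intro x
        simp [hAdef, Finset.mem_union, Finset.mem_range, Finset.mem_Ico, Finset.mem_Icc,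
          or_assoc]
      have hinjA : Set.InjOn (win f m) (A : Set ℕ) := by
        intro x hx y hy hxy
        by_contra hne
        rcases lt_or_gt_of_ne hne with h|h
        · exact Hcase x y h ((hmemA x).mp (Finset.mem_coe.mp hx))
            ((hmemA y).mp (Finset.mem_coe.mp hy)) hxy
        · exact Hcase y x h ((hmemA y).mp (Finset.mem_coe.mp hy))
            ((hmemA x).mp (Finset.mem_coe.mp hx)) hxy.symm
      have hd1 : Disjoint (Finset.range s) (Finset.Ico b1 (b1 + lam)) := by
        rw [Finset.disjoint_left]
        intro x hx hx'
        rw [Finset.mem_range] at hx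
        rw [Finset.mem_Ico] at hx'
        omega
      have hd2 : Disjoint (Finset.range s ∪ Finset.Ico b1 (b1 + lam))
          (Finset.Icc (bM+1) N) := by
        rw [Finset.disjoint_left]
        intro x hx hx'
        rw [Finset.mem_union, Finset.mem_range, Finset.mem_Ico] at hx
        rw [Finset.mem_Icc] at hx'
        omega
      have hAcard : A.card = s + lam + (N - bM) := by
        rw [hAdef, Finset.card_union_of_disjoint hd2, Finset.card_union_of_disjoint hd1,
          Finset.card_range, Nat.card_Ico, Nat.card_Icc]
        omega
      have hADV : A.image (win f m) ⊆ DV := by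
        intro v hv
        obtain ⟨x, hx, rfl⟩ := Finset.mem_image.mp hv
        have := (hmemA x).mp hx
        exact Finset.mem_image_of_mem _ (Finset.mem_range.mpr (by omega))
      have hcount2 : s + lam + (N - bM) ≤ m := by
        have h1 : (A.image (win f m)).card = A.card := Finset.card_image_of_injOn hinjA
        have h2 : (A.image (win f m)).card ≤ DV.card := Finset.card_le_card hADV
        omega
      refine ⟨s, bM + m, lam, hlam0, by omega, by omega, by omega, ?_⟩
      intro x hx1 hx2
      have hst : s ≤ min x (bM - lam) := by omega
      have h1 := Hper (min x (bM - lam)) hst (by omega)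
      rw [win_eq_iff] at h1
      have h3 := h1 (x - min x (bM - lam)) (by omega)
      rw [show min x (bM - lam) + (x - min x (bM - lam)) = x by omega,
        show min x (bM - lam) + lam + (x - min x (bM - lam)) = x + lam by omega] at h3
      exact h3

end Stmt3Aux

/-- The Claim inside the proof of Lemma 4.5: in a factor-closed set of words over a
finite alphabet containing at most `d - 1` words of length `d` (for some `d ≥ 3`),
every word of length at least `2d - 1` decomposes as `w₁ ++ w₂ ++ w₃` where `w₂` is
periodic of minimal period `p ≤ d - 1`, the length of `w₂` is at least `p + d`, and
`w₁`, `w₃` both have length at most `d - p`. -/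
theorem stmt3 {α : Type*} [Fintype α] (W : Set (List α))
    (hW : ∀ w ∈ W, ∀ u : List α, u <:+: w → u ∈ W)
    (d : ℕ) (hd : 3 ≤ d)
    (hcount : {w ∈ W | w.length = d}.ncard ≤ d - 1)
    (w : List α) (hw : w ∈ W) (hlen : 2 * d - 1 ≤ w.length) :
    ∃ w₁ w₂ w₃ : List α, w = w₁ ++ w₂ ++ w₃ ∧
      ∃ p : ℕ, 0 < p ∧ p ≤ d - 1 ∧
        ListHasPeriod w₂ p ∧ p < w₂.length ∧
        (∀ p' : ℕ, 0 < p' → ListHasPeriod w₂ p' → p ≤ p') ∧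
        p + d ≤ w₂.length ∧ w₁.length ≤ d - p ∧ w₃.length ≤ d - p := by
  classical
  have hn : 2 * d - 1 ≤ w.length := hlen
  have hwlen0 : 0 < w.length := by omega
  have hne : w ≠ [] := List.ne_nil_of_length_pos hwlen0
  set n := w.length with hndef
  set f : ℕ → α := fun i => w.getD i (w.head hne) with hfdef
  have hfval : ∀ (i : ℕ) (h : i < n), f i = w[i] := by
    intro i h
    simp only [hfdef]
    exact List.getD_eq_getElem w _ (by omega)
  -- windows are slices of w
  have hwin : ∀ j t, t + j ≤ n → Stmt3Aux.win f j t = (w.drop t).take j := by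
    intro j t h
    apply List.ext_getElem
    · simp only [Stmt3Aux.win, List.length_map, List.length_range, List.length_take,
        List.length_drop]
      omega
    · intro i h1 h2
      have hi : i < j := by
        simpa [Stmt3Aux.win] using h1
      have h3 : t + i < n := by omega
      simp only [Stmt3Aux.win, List.getElem_map, List.getElem_range]
      rw [List.getElem_take, List.getElem_drop]
      exact hfval (t + i) h3
  have hwinW : ∀ j t, t + j ≤ n → Stmt3Aux.win f j t ∈ W := by
    intro j t h
    rw [hwin j t h]
    exact hW w hw _ (((List.take_prefix j (w.drop t)).isInfix).trans
      (List.drop_suffix t w).isInfix)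
  -- count of windows of length d
  have hfin : {u ∈ W | u.length = d}.Finite :=
    (List.finite_length_eq α d).subset (fun u hu => hu.2)
  have hQd : ((Finset.range (n - d + 1)).image (Stmt3Aux.win f d)).card < d := by
    have hsub : ↑((Finset.range (n - d + 1)).image (Stmt3Aux.win f d)) ⊆
        {u ∈ W | u.length = d} := by
      intro v hv
      rw [Finset.mem_coe, Finset.mem_image] at hv
      obtain ⟨t, ht, rfl⟩ := hv
      rw [Finset.mem_range] at ht
      refine ⟨hwinW d t (by omega), ?_⟩
      simp [Stmt3Aux.win]
    have h1 : ((Finset.range (n - d + 1)).image (Stmt3Aux.win f d)).card ≤ d - 1 := by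
      calc ((Finset.range (n - d + 1)).image (Stmt3Aux.win f d)).card
          = (↑((Finset.range (n - d + 1)).image (Stmt3Aux.win f d)) : Set (List α)).ncard :=
            (Set.ncard_coe_finset _).symm
        _ ≤ {u ∈ W | u.length = d}.ncard := Set.ncard_le_ncard hsub hfin
        _ ≤ d - 1 := hcount
    omega
  -- minimal window length with deficient complexity
  have hex : ∃ j, 0 < j ∧ ((Finset.range (n - j + 1)).image (Stmt3Aux.win f j)).card < j :=
    ⟨d, by omega, hQd⟩
  obtain ⟨k, ⟨hk0, hQk⟩, hkmin⟩ :
      ∃ k, (0 < k ∧ ((Finset.range (n - k + 1)).image (Stmt3Aux.win f k)).card < k) ∧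
        ∀ j, j < k → ¬(0 < j ∧ ((Finset.range (n - j + 1)).image (Stmt3Aux.win f j)).card < j) :=
    ⟨Nat.find hex, Nat.find_spec hex, fun j hj => Nat.find_min hex hj⟩
  have hkd : k ≤ d := by
    by_contra hcon
    push_neg at hcon
    exact hkmin d hcon ⟨by omega, hQd⟩
  have hk2 : 2 ≤ k := by
    by_contra hcon
    push_neg at hcon
    have hk1 : k = 1 := by omega
    rw [hk1] at hQk
    have hpos : 0 < ((Finset.range (n - 1 + 1)).image (Stmt3Aux.win f 1)).card :=
      Finset.card_pos.mpr ⟨Stmt3Aux.win f 1 0,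
        Finset.mem_image_of_mem _ (Finset.mem_range.mpr (by omega))⟩
    omega
  have hDVge : k - 1 ≤ ((Finset.range (n - (k-1) + 1)).image (Stmt3Aux.win f (k-1))).card := by
    by_contra hcon
    push_neg at hcon
    exact hkmin (k-1) (by omega) ⟨by omega, hcon⟩
  have hDK : ((Finset.range (n - (k-1))).image (Stmt3Aux.win f ((k-1)+1))).card ≤ k - 1 := by
    have e1 : (k-1) + 1 = k := by omega
    have e2 : n - (k-1) = n - k + 1 := by omega
    rw [e1, e2]
    omega
  have hN1 : n - (k-1) + 1 = (n - (k-1)) + 1 := rfl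
  obtain ⟨s, e, lam, hlam0, h3, h2, h4, h5⟩ :=
    Stmt3Aux.core f (k-1) (n - (k-1)) d (by omega) (by omega) (by omega) hDVge hDK
  have hNn : (n - (k-1)) + (k-1) = n := by omega
  rw [hNn] at h2 h4
  -- assemble the decomposition
  refine ⟨w.take s, (w.drop s).take (e - s), (w.drop s).drop (e - s), ?_, ?_⟩
  · rw [List.append_assoc, List.take_append_drop, List.take_append_drop]
  · have hw2len : ((w.drop s).take (e - s)).length = e - s := by
      simp only [List.length_take, List.length_drop]
      omega
    have hw2get : ∀ (i : ℕ) (hi : i < ((w.drop s).take (e - s)).length),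
        ((w.drop s).take (e - s))[i] = f (s + i) := by
      intro i hi
      have h' : i < e - s := by rwa [hw2len] at hi
      have h1 : s + i < n := by omega
      rw [List.getElem_take, List.getElem_drop]
      exact (hfval (s + i) h1).symm
    have hperlam : ListHasPeriod ((w.drop s).take (e - s)) lam := by
      intro kk hkk
      have hkk' : kk + lam < e - s := by rwa [hw2len] at hkk
      rw [hw2get kk (by omega), hw2get (kk + lam) hkk]
      rw [show s + (kk + lam) = s + kk + lam by omega]
      exact h5 (s + kk) (by omega) (by omega)
    have hpex : ∃ p, 0 < p ∧ ListHasPeriod ((w.drop s).take (e - s)) p :=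
      ⟨lam, hlam0, hperlam⟩
    obtain ⟨p, ⟨hp0, hpper⟩, hpmin⟩ :
        ∃ p, (0 < p ∧ ListHasPeriod ((w.drop s).take (e - s)) p) ∧
          ∀ q, q < p → ¬(0 < q ∧ ListHasPeriod ((w.drop s).take (e - s)) q) :=
      ⟨Nat.find hpex, Nat.find_spec hpex, fun q hq => Nat.find_min hpex hq⟩
    have hplam : p ≤ lam := by
      by_contra hcon
      push_neg at hcon
      exact hpmin lam hcon ⟨hlam0, hperlam⟩
    refine ⟨p, hp0, by omega, hpper, ?_, ?_, ?_, ?_, ?_⟩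
    · rw [hw2len]; omega
    · intro p' hp' hper'
      by_contra hcon
      push_neg at hcon
      exact hpmin p' hcon ⟨hp', hper'⟩
    · rw [hw2len]; omega
    · simp only [List.length_take]
      omega
    · simp only [List.length_drop]
      omega
end

section
/- Let α be a finite alphabet and let W be a factor-closed set of words over α such that, for some integer d ≥ 3, the number of words in W of length d is at most d − 1. Then there exist positive real numbers a and b such that for all n ∈ ℕ, the number of words in W of length at most n is bounded above by a·n + b. -/
open List Set

namespace S4

variable {α : Type*}

/-- words all of whose length-`d` windows lie in `F`. -/
def Wst (F : Set (List α)) (d : ℕ) : Set (List α) :=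
  {w | ∀ i, i + d ≤ w.length → (w.drop i).take d ∈ F}

/-- words extendable as a prefix to arbitrarily long `Wst`-words. -/
def Est (F : Set (List α)) (d : ℕ) : Set (List α) :=
  {v | ∀ m, ∃ z, z ∈ Wst F d ∧ v <+: z ∧ m ≤ z.length}

/-- factors of `Est`-words. -/
def Lst (F : Set (List α)) (d : ℕ) : Set (List α) :=
  {u | ∃ v, v ∈ Est F d ∧ u <:+: v}

variable {F : Set (List α)} {d : ℕ}

lemma take_drop_infix (w : List α) (a b : ℕ) : (w.drop a).take b <:+: w :=
  ((take_prefix b (w.drop a)).isInfix).trans ((drop_suffix a w).isInfix)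

lemma infix_mem_Wst {w u : List α} (hw : w ∈ Wst F d) (hu : u <:+: w) : u ∈ Wst F d := by
  obtain ⟨s, t, rfl⟩ := hu
  intro i hi
  have hwin : ((s ++ u ++ t).drop (s.length + i)).take d = (u.drop i).take d := by
    apply List.ext_getElem?
    intro c
    simp only [List.getElem?_take]
    by_cases hc : c < d
    · rw [if_pos hc, if_pos hc, List.getElem?_drop, List.getElem?_drop]
      rw [List.append_assoc, List.getElem?_append_right (by omega),
        List.getElem?_append_left (by omega)]
      congr 1
      omega
    · rw [if_neg hc, if_neg hc]
  have := hw (s.length + i) (by simp; omega)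
  rwa [hwin] at this

lemma Est_subset_Wst {v : List α} (hv : v ∈ Est F d) : v ∈ Wst F d := by
  obtain ⟨z, hz, hvz, -⟩ := hv 0
  exact infix_mem_Wst hz hvz.isInfix

lemma Lst_subset_Wst {u : List α} (hu : u ∈ Lst F d) : u ∈ Wst F d := by
  obtain ⟨v, hv, huv⟩ := hu
  exact infix_mem_Wst (Est_subset_Wst hv) huv

lemma infix_mem_Lst {u u' : List α} (hu : u ∈ Lst F d) (h : u' <:+: u) : u' ∈ Lst F d := by
  obtain ⟨v, hv, huv⟩ := hu
  exact ⟨v, hv, h.trans huv⟩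

lemma Est_ext [Fintype α] {v : List α} (hv : v ∈ Est F d) : ∃ a, v ++ [a] ∈ Est F d := by
  classical
  by_contra h
  push_neg at h
  have h' : ∀ a : α, ∃ m, ¬ ∃ z, z ∈ Wst F d ∧ v ++ [a] <+: z ∧ m ≤ z.length := by
    intro a
    have ha := h a
    simp only [Est, Set.mem_setOf_eq, not_forall] at ha
    exact ha
  choose m hm using h'
  obtain ⟨z, hz, hvz, hlz⟩ := hv ((Finset.univ.sup m) + v.length + 1)
  have hvlt : v.length < z.length := by omega
  have hx := List.prefix_iff_eq_take.mp hvz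
  refine (hm z[v.length]) ⟨z, hz, ?_, ?_⟩
  · rw [List.prefix_iff_eq_take]
    have ht : z.take (v.length + 1) = z.take v.length ++ (z[v.length]?).toList :=
      List.take_succ
    rw [List.getElem?_eq_getElem hvlt] at ht
    have : (v ++ [z[v.length]]).length = v.length + 1 := by simp
    rw [this, ht, ← hx]
    rfl
  · have : m z[v.length] ≤ Finset.univ.sup m := Finset.le_sup (Finset.mem_univ _)
    omega

lemma Lst_ext [Fintype α] {u : List α} (hu : u ∈ Lst F d) : ∃ a, u ++ [a] ∈ Lst F d := by
  obtain ⟨v, hvE, s, t, rfl⟩ := hu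
  cases t with
  | nil =>
    obtain ⟨a, ha⟩ := Est_ext hvE
    exact ⟨a, ⟨(s ++ u ++ []) ++ [a], ha, ⟨s, [], by simp⟩⟩⟩
  | cons b t' =>
    exact ⟨b, ⟨s ++ u ++ b :: t', hvE, ⟨s, t', by simp⟩⟩⟩

/-- existence of a level `k < d` where one-letter extensions inside `Lst` are unique. -/
lemma exists_unique_level [Fintype α] (hF : F.Finite) (hFcard : F.ncard < d) :
    ∃ k < d, ∀ u : List α, u.length = k → ∀ a b : α,
      u ++ [a] ∈ Lst F d → u ++ [b] ∈ Lst F d → a = b := by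
  classical
  by_contra hcon
  push_neg at hcon
  have hPfin : ∀ j : ℕ, {u ∈ Lst F d | u.length = j}.Finite := fun j =>
    (List.finite_length_eq α j).subset (fun u hu => hu.2)
  have key : ∀ j, j ≤ d → j ≤ {u ∈ Lst F d | u.length = j}.ncard := by
    intro j
    induction j with
    | zero => intro _; omega
    | succ k ih =>
      intro hkd
      have hk' : k < d := by omega
      obtain ⟨u₀, hu₀len, a, b, ha, hb, hab⟩ := hcon k hk'
      have hu₀L : u₀ ∈ Lst F d :=
        infix_mem_Lst ha (List.prefix_append u₀ [a]).isInfix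
      -- the extension map
      set f : List α → List α :=
        fun u => if h : ∃ c, u ++ [c] ∈ Lst F d then u ++ [h.choose] else u with hf
      have hfmem : ∀ u ∈ {u ∈ Lst F d | u.length = k}, f u ∈ {u ∈ Lst F d | u.length = k + 1} := by
        intro u hu
        have hex : ∃ c, u ++ [c] ∈ Lst F d := Lst_ext hu.1
        rw [hf]
        simp only [dif_pos hex]
        exact ⟨hex.choose_spec, by simp [hu.2]⟩
      have htakef : ∀ u : List α, u.length = k → (f u).take k = u := by
        intro u hul
        rw [hf]
        by_cases hex : ∃ c, u ++ [c] ∈ Lst F d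
        · simp only [dif_pos hex]
          rw [← hul]
          exact List.take_left
        · simp only [dif_neg hex]
          rw [← hul]
          exact List.take_of_length_le le_rfl
      have hinj : Set.InjOn f {u ∈ Lst F d | u.length = k} := by
        intro u hu u' hu' he
        rw [← htakef u hu.2, ← htakef u' hu'.2, he]
      -- the extra element
      set c₀ : List α := if f u₀ = u₀ ++ [b] then u₀ ++ [a] else u₀ ++ [b] with hc₀
      have hc₀mem : c₀ ∈ {u ∈ Lst F d | u.length = k + 1} := by
        rw [hc₀]
        split_ifs
        · exact ⟨ha, by simp [hu₀len]⟩
        · exact ⟨hb, by simp [hu₀len]⟩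
      have hne' : u₀ ++ [a] ≠ u₀ ++ [b] := by
        intro hcontra
        exact hab (by simpa using hcontra)
      have hc₀ne : c₀ ≠ f u₀ := by
        rw [hc₀]
        split_ifs with hsp
        · rw [hsp]; exact hne'
        · intro hcontra; exact hsp hcontra.symm
      have hc₀notim : c₀ ∉ f '' {u ∈ Lst F d | u.length = k} := by
        rintro ⟨u, hu, hfu⟩
        have h1 : (f u).take k = u := htakef u hu.2
        have h2 : c₀.take k = u₀ := by
          rw [hc₀]
          split_ifs
          · rw [← hu₀len]; exact List.take_left
          · rw [← hu₀len]; exact List.take_left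
        have : u = u₀ := by rw [← h1, hfu, h2]
        rw [this] at hfu
        exact hc₀ne hfu.symm
      have step : k + 1 ≤ {u ∈ Lst F d | u.length = k + 1}.ncard := by
        have e1 : (f '' {u ∈ Lst F d | u.length = k}).ncard
            = {u ∈ Lst F d | u.length = k}.ncard := Set.ncard_image_of_injOn hinj
        have e2 : (insert c₀ (f '' {u ∈ Lst F d | u.length = k})).ncard
            = (f '' {u ∈ Lst F d | u.length = k}).ncard + 1 :=
          Set.ncard_insert_of_notMem hc₀notim ((hPfin k).image f)
        have e3 : insert c₀ (f '' {u ∈ Lst F d | u.length = k})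
            ⊆ {u ∈ Lst F d | u.length = k + 1} := by
          rw [Set.insert_subset_iff]
          exact ⟨hc₀mem, Set.image_subset_iff.mpr hfmem⟩
        have e4 := Set.ncard_le_ncard e3 (hPfin (k + 1))
        have e5 := ih (by omega)
        omega
      exact step
  have hPd : {u ∈ Lst F d | u.length = d} ⊆ F := by
    intro u hu
    have huW : u ∈ Wst F d := Lst_subset_Wst hu.1
    have := huW 0 (by simp [hu.2])
    simpa [List.take_of_length_le (le_of_eq hu.2)] using this
  have h1 := key d le_rfl
  have h2 := Set.ncard_le_ncard hPd hF
  omega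

/-- pumping: long `Wst`-words have their long prefix in `Est`. -/
lemma pump (hF : F.Finite) (hFcard : F.ncard < d) {w : List α}
    (hw : w ∈ Wst F d) (hlen : 2 * d - 1 ≤ w.length) (hd : 1 ≤ d) :
    w.take (w.length - d + 1) ∈ Est F d := by
  classical
  set n := w.length with hn
  have h2d : 2 * d ≤ n + 1 := by omega
  set p₀ := n + 1 - 2 * d with hp₀def
  have hp₀ : p₀ + 2 * d = n + 1 := by omega
  have hmaps : ∀ j : Fin d, (w.drop (p₀ + (j : ℕ))).take d ∈ hF.toFinset := by
    intro j
    have hj := j.isLt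
    have := hw (p₀ + (j : ℕ)) (by omega)
    simpa using this
  have hcard : (hF.toFinset).card < (Finset.univ : Finset (Fin d)).card := by
    have h := Set.ncard_eq_toFinset_card F hF
    simpa [← h] using hFcard
  obtain ⟨j₁, -, j₂, -, hne, heq⟩ :=
    Finset.exists_ne_map_eq_of_card_lt_of_maps_to hcard (fun j _ => hmaps j)
  have main : ∀ (j₁ j₂ : Fin d), (j₁ : ℕ) < (j₂ : ℕ) →
      (w.drop (p₀ + (j₁ : ℕ))).take d = (w.drop (p₀ + (j₂ : ℕ))).take d →
      w.take (n - d + 1) ∈ Est F d := by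
    clear hne heq j₁ j₂
    intro j₁ j₂ hlt heq
    have hj₁ := j₁.isLt
    have hj₂ := j₂.isLt
    set s := p₀ + (j₁ : ℕ) with hs
    set t := p₀ + (j₂ : ℕ) with ht
    set q := (j₂ : ℕ) - (j₁ : ℕ) with hq
    have hq1 : 1 ≤ q := by omega
    have hqd : q < d := by omega
    have hts : t = s + q := by omega
    have htd : t + d ≤ n := by omega
    have htn : n - d + 1 ≤ t + d := by omega
    have hn0 : 0 < n := by omega
    have a₀ : α := w[0]'(by omega)
    -- pointwise periodicity from the window equality
    have hperD : ∀ c, c < d → w.getD (s + c) a₀ = w.getD (t + c) a₀ := by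
      intro c hc
      have h1 := congrArg (fun l => l[c]?) heq
      simp only [List.getElem?_take_of_lt hc, List.getElem?_drop] at h1
      simp only [List.getD_eq_getElem?_getD]
      rw [h1]
    -- the pumped sequence
    set Y : ℕ → α := fun x => if x < s then w.getD x a₀ else w.getD (s + (x - s) % q) a₀
      with hY
    have hYper : ∀ x, s + q ≤ x → Y x = Y (x - q) := by
      intro x hxq
      have hxs : ¬ x < s := by omega
      have hxqs : ¬ x - q < s := by omega
      simp only [hY, if_neg hxs, if_neg hxqs]
      have hmod : (x - s) % q = (x - q - s) % q := by
        rw [Nat.mod_eq_sub_mod (by omega : x - s ≥ q)]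
        congr 1
        omega
      rw [hmod]
    have hYval : ∀ x, x < t + d → Y x = w.getD x a₀ := by
      intro x
      induction x using Nat.strong_induction_on with
      | _ x ih =>
        intro hx
        by_cases h1 : x < s
        · simp only [hY, if_pos h1]
        · push_neg at h1
          by_cases h2 : x - s < q
          · have h3 : s + (x - s) % q = x := by
              rw [Nat.mod_eq_of_lt h2]
              omega
            simp only [hY, if_neg (not_lt.mpr h1), h3]
          · push_neg at h2
            have hxq : Y (x - q) = w.getD (x - q) a₀ := ih (x - q) (by omega) (by omega)
            have hYeq : Y x = Y (x - q) := hYper x (by omega)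
            have hper' : w.getD (x - q) a₀ = w.getD x a₀ := by
              have hcc := hperD (x - t) (by omega)
              have e1 : s + (x - t) = x - q := by omega
              have e2 : t + (x - t) = x := by omega
              rw [e1, e2] at hcc
              exact hcc
            rw [hYeq, hxq, hper']
    -- windows of the pumped word lie in F
    have hwinF : ∀ r, List.ofFn (fun c : Fin d => Y (r + (c : ℕ))) ∈ F := by
      intro r
      induction r using Nat.strong_induction_on with
      | _ r ih =>
        by_cases hrt : r ≤ t
        · have hmem := hw r (by omega)
          have hwnd : (w.drop r).take d = List.ofFn (fun c : Fin d => Y (r + (c : ℕ))) := by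
            apply List.ext_getElem?
            intro c
            simp only [List.getElem?_take, List.getElem?_drop, List.getElem?_ofFn,
              List.ofFnNthVal]
            by_cases hc : c < d
            · rw [if_pos hc, dif_pos hc]
              have hcd1 : r + c < t + d := by omega
              have hcd2 : r + c < n := by omega
              rw [hYval (r + c) hcd1]
              simp [List.getD_eq_getElem?_getD, List.getElem?_eq_getElem hcd2]
            · rw [if_neg hc, dif_neg hc]
          rw [← hwnd]
          exact hmem
        · push_neg at hrt
          have hfun : (fun c : Fin d => Y (r + (c : ℕ)))
              = (fun c : Fin d => Y ((r - q) + (c : ℕ))) := by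
            funext c
            have hY2 := hYper (r + (c : ℕ)) (by omega)
            rw [hY2]
            congr 1
            omega
          rw [hfun]
          exact ih (r - q) (by omega)
    -- pumped words are in Wst
    have hzW : ∀ M : ℕ, (List.ofFn (fun i : Fin M => Y (i : ℕ))) ∈ Wst F d := by
      intro M r hr
      rw [List.length_ofFn] at hr
      have hwnd : ((List.ofFn (fun i : Fin M => Y (i : ℕ))).drop r).take d
          = List.ofFn (fun c : Fin d => Y (r + (c : ℕ))) := by
        apply List.ext_getElem?
        intro c
        simp only [List.getElem?_take, List.getElem?_drop, List.getElem?_ofFn,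
          List.ofFnNthVal]
        by_cases hc : c < d
        · rw [if_pos hc, dif_pos hc, dif_pos (show r + c < M by omega)]
        · rw [if_neg hc, dif_neg hc]
      rw [hwnd]
      exact hwinF r
    -- the prefix relation
    have htake : ∀ M : ℕ, t + d ≤ M →
        w.take (n - d + 1) = (List.ofFn (fun i : Fin M => Y (i : ℕ))).take (n - d + 1) := by
      intro M hM
      apply List.ext_getElem?
      intro c
      simp only [List.getElem?_take, List.getElem?_ofFn, List.ofFnNthVal]
      by_cases hc : c < n - d + 1
      · rw [if_pos hc, if_pos hc, dif_pos (show c < M by omega)]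
        have hcd1 : c < t + d := by omega
        have hcd2 : c < n := by omega
        rw [hYval c hcd1]
        simp [List.getD_eq_getElem?_getD, List.getElem?_eq_getElem hcd2]
      · rw [if_neg hc, if_neg hc]
    intro m
    refine ⟨List.ofFn (fun i : Fin (max m (t + d)) => Y (i : ℕ)), hzW _, ?_, ?_⟩
    · rw [htake _ (le_max_right _ _)]
      exact List.take_prefix _ _
    · rw [List.length_ofFn]
      exact le_max_left _ _
  rcases hne.lt_or_gt with hlt | hlt
  · exact main j₁ j₂ (by exact_mod_cast hlt) heq
  · exact main j₂ j₁ (by exact_mod_cast hlt) heq.symm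


/-- main injectivity: a `Wst`-word is determined by its length, a bounded prefix
and a bounded suffix. -/
lemma inj [Fintype α] (hF : F.Finite) (hFcard : F.ncard < d) (hd : 1 ≤ d)
    {k : ℕ} (hk : k < d)
    (huniq : ∀ u : List α, u.length = k → ∀ a b : α,
      u ++ [a] ∈ Lst F d → u ++ [b] ∈ Lst F d → a = b)
    {w w' : List α} (hw : w ∈ Wst F d) (hw' : w' ∈ Wst F d)
    (hlen : w.length = w'.length)
    (htake : w.take (k + 2 * d) = w'.take (k + 2 * d))
    (hdrop : w.drop (w.length - d) = w'.drop (w'.length - d)) : w = w' := by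
  classical
  by_contra hne
  set n := w.length with hn
  set K := k + 2 * d with hK
  rw [← hlen] at hdrop
  have hnK : K < n := by
    by_contra hle
    push_neg at hle
    apply hne
    calc w = w.take K := (List.take_of_length_le (by omega)).symm
    _ = w'.take K := htake
    _ = w' := List.take_of_length_le (by omega)
  have hex : ∃ i : ℕ, w[i]? ≠ w'[i]? := by
    by_contra hAll
    push_neg at hAll
    exact hne (List.ext_getElem? hAll)
  set i := Nat.find hex with hidef
  have hi : w[i]? ≠ w'[i]? := Nat.find_spec hex
  have hlti : ∀ j, j < i → w[j]? = w'[j]? := by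
    intro j hj
    have := Nat.find_min hex hj
    simpa using this
  have hin : i < n := by
    by_contra hge
    push_neg at hge
    exact hi (by rw [List.getElem?_eq_none (by omega), List.getElem?_eq_none (by omega)])
  have hiK : K ≤ i := by
    by_contra hlt2
    push_neg at hlt2
    refine hi ?_
    rw [← List.getElem?_take_of_lt (l := w) hlt2, ← List.getElem?_take_of_lt (l := w') hlt2,
      htake]
  have hind : i < n - d := by
    by_contra hge
    push_neg at hge
    refine hi ?_
    have e1 : (w.drop (n - d))[i - (n - d)]? = w[n - d + (i - (n - d))]? := List.getElem?_drop
    have e2 : (w'.drop (n - d))[i - (n - d)]? = w'[n - d + (i - (n - d))]? := List.getElem?_drop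
    have e3 : n - d + (i - (n - d)) = i := by omega
    rw [e3] at e1 e2
    rw [← e1, ← e2, hdrop]
  obtain ⟨x, hx⟩ : ∃ x, w[i]? = some x := ⟨w[i]'hin, List.getElem?_eq_getElem hin⟩
  obtain ⟨y, hy⟩ : ∃ y, w'[i]? = some y :=
    ⟨w'[i]'(by omega), List.getElem?_eq_getElem (by omega)⟩
  have hxy : x ≠ y := fun h => hi (by rw [hx, hy, h])
  set u := (w.drop (i - k)).take k with hu
  have hulen : u.length = k := by
    rw [hu, List.length_take, List.length_drop]
    omega
  have hu' : u = (w'.drop (i - k)).take k := by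
    apply List.ext_getElem?
    intro c
    rw [hu]
    simp only [List.getElem?_take]
    by_cases hc : c < k
    · rw [if_pos hc, if_pos hc, List.getElem?_drop, List.getElem?_drop]
      exact hlti (i - k + c) (by omega)
    · rw [if_neg hc, if_neg hc]
  have hik : i - k + k = i := by omega
  have hux : u ++ [x] = (w.drop (i - k)).take (k + 1) := by
    rw [List.take_succ]
    congr 1
    · rw [List.getElem?_drop, hik, hx]
      rfl
  have huy : u ++ [y] = (w'.drop (i - k)).take (k + 1) := by
    rw [hu', List.take_succ]
    congr 1
    · rw [List.getElem?_drop, hik, hy]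
      rfl
  have hwE : w.take (n - d + 1) ∈ Est F d := pump hF hFcard hw (by omega) hd
  have hw'E : w'.take (n - d + 1) ∈ Est F d := by
    have := pump hF hFcard hw' (by omega) hd
    rwa [← hlen] at this
  have hinfix : ∀ z : List α, (z.drop (i - k)).take (k + 1) <:+: z.take (n - d + 1) := by
    intro z
    have h1 : ((z.take (n - d + 1)).drop (i - k)).take (k + 1)
        = ((z.drop (i - k)).take (n - d + 1 - (i - k))).take (k + 1) := by
      rw [List.drop_take]
    rw [List.take_take] at h1
    have h2 : (k + 1) ⊓ (n - d + 1 - (i - k)) = k + 1 := by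
      rw [min_eq_left]
      omega
    rw [h2] at h1
    rw [← h1]
    exact take_drop_infix _ _ _
  have hLx : u ++ [x] ∈ Lst F d := ⟨w.take (n - d + 1), hwE, hux ▸ hinfix w⟩
  have hLy : u ++ [y] ∈ Lst F d := ⟨w'.take (n - d + 1), hw'E, huy ▸ hinfix w'⟩
  exact hxy (huniq u hulen x y hLx hLy)

end S4

/-- Word form of Theorem 4.11: if `W` is a factor-closed set of words over a finite
alphabet containing at most `d - 1` words of length `d` (for some `d ≥ 3`), then the
number of words in `W` of length at most `n` is bounded by `a * n + b` for some
positive reals `a`, `b`. -/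
theorem stmt4 {α : Type*} [Fintype α] (W : Set (List α))
    (hW : ∀ w ∈ W, ∀ u : List α, u <:+: w → u ∈ W)
    (d : ℕ) (hd : 3 ≤ d)
    (hcount : {w ∈ W | w.length = d}.ncard ≤ d - 1) :
    ∃ a b : ℝ, 0 < a ∧ 0 < b ∧
      ∀ n : ℕ, ({w ∈ W | w.length ≤ n}.ncard : ℝ) ≤ a * n + b := by
  classical
  set F : Set (List α) := {w ∈ W | w.length = d} with hF
  have hFfin : F.Finite := (List.finite_length_eq α d).subset (fun u hu => hu.2)
  have hFcard : F.ncard < d := by omega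
  have hWsub : W ⊆ S4.Wst F d := by
    intro w hw i hi
    refine ⟨hW w hw _ (S4.take_drop_infix w i d), ?_⟩
    rw [List.length_take, List.length_drop]
    omega
  obtain ⟨k, hk, huniq⟩ := S4.exists_unique_level hFfin hFcard
  set K := k + 2 * d with hK
  set β := ((Fin K → Option α) × (Fin d → Option α)) with hβ
  have hβne : Nonempty β := ⟨(fun _ => none, fun _ => none)⟩
  set C := Fintype.card β with hC
  have hCpos : 0 < C := Fintype.card_pos
  refine ⟨C, C, by exact_mod_cast hCpos, by exact_mod_cast hCpos, fun n => ?_⟩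
  have hnat : {w ∈ W | w.length ≤ n}.ncard ≤ (n + 1) * C := by
    set f : List α → Fin (n + 1) × β := fun w =>
      (⟨min w.length n, by omega⟩,
        (fun i : Fin K => (w.take K)[(i : ℕ)]?, fun i : Fin d => (w.drop (w.length - d))[(i : ℕ)]?)) with hf
    have hinj : Set.InjOn f {w ∈ W | w.length ≤ n} := by
      intro w hwmem w' hw'mem he
      rw [hf] at he
      have h1 : min w.length n = min w'.length n := by
        have := congrArg (fun p => (p.1 : ℕ)) he
        simpa using this
      have hlen : w.length = w'.length := by
        rw [min_eq_left hwmem.2, min_eq_left hw'mem.2] at h1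
        exact h1
      have h2 := congrArg Prod.snd he
      have htk : w.take K = w'.take K := by
        apply List.ext_getElem?
        intro c
        by_cases hc : c < K
        · exact congrFun (congrArg Prod.fst h2) ⟨c, hc⟩
        · rw [List.getElem?_eq_none, List.getElem?_eq_none]
          · rw [List.length_take]; omega
          · rw [List.length_take]; omega
      have hdp : w.drop (w.length - d) = w'.drop (w'.length - d) := by
        apply List.ext_getElem?
        intro c
        by_cases hc : c < d
        · exact congrFun (congrArg Prod.snd h2) ⟨c, hc⟩
        · rw [List.getElem?_eq_none, List.getElem?_eq_none]
          · rw [List.length_drop]; omega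
          · rw [List.length_drop]; omega
      exact S4.inj hFfin hFcard (by omega) hk huniq (hWsub hwmem.1) (hWsub hw'mem.1)
        hlen htk hdp
    have hb := Set.ncard_le_ncard_of_injOn f (fun w _ => Set.mem_univ (f w)) hinj
      Set.finite_univ
    rw [Set.ncard_univ, Nat.card_eq_fintype_card, Fintype.card_prod, Fintype.card_fin] at hb
    exact hb
  have hcast : ({w ∈ W | w.length ≤ n}.ncard : ℝ) ≤ ((n + 1) * C : ℕ) := by
    exact_mod_cast hnat
  refine hcast.trans ?_
  push_cast
  exact le_of_eq (by ring)
end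

section
/- Let α be a finite alphabet and let W be a factor-closed set of words over α. Let L := limsup_{n→∞} log(c(n))/log(n), where c(n) denotes the number of words in W of length at most n. Then L does not lie in the open interval (1, 2). -/
namespace Bergman5

open List Set Filter

variable {α : Type*}

def win (w : List α) (t j : ℕ) : List α := (w.drop t).take j

lemma win_length {w : List α} {t j : ℕ} (h : t + j ≤ w.length) : (win w t j).length = j := by
  simp [win]; omega

lemma win_getElem? {w : List α} {t j c : ℕ} (hc : c < j) : (win w t j)[c]? = w[t + c]? := by
  rw [win, List.getElem?_take, if_pos hc, List.getElem?_drop]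

lemma win_infix (w : List α) (t j : ℕ) : win w t j <:+: w :=
  (List.take_prefix _ _).isInfix.trans (List.drop_suffix _ _).isInfix

lemma win_take {w : List α} {r t j : ℕ} (h : t + j ≤ r) : win (w.take r) t j = win w t j := by
  unfold win
  rw [List.drop_take, List.take_take]
  congr 1
  omega

lemma win_succ {w : List α} {t j : ℕ} (h : t + j < w.length) :
    win w t (j+1) = win w t j ++ [w[t+j]'h] := by
  unfold win
  rw [List.take_succ, List.getElem?_drop]
  rw [List.getElem?_eq_getElem h]
  rfl

lemma win_drop1 (w : List α) (t j : ℕ) : (win w t (j+1)).drop 1 = win w (t+1) j := by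
  unfold win
  rw [List.drop_take, List.drop_drop]
  norm_num

noncomputable def factset (w : List α) (j : ℕ) : Finset (List α) :=
  @Finset.image _ _ (Classical.decEq _) (fun t => win w t j) (Finset.range (w.length + 1 - j))

lemma mem_factset {w u : List α} {j : ℕ} :
    u ∈ factset w j ↔ ∃ t, t + j ≤ w.length ∧ win w t j = u := by
  simp only [factset, Finset.mem_image, Finset.mem_range]
  constructor
  · rintro ⟨t, ht, rfl⟩; exact ⟨t, by omega, rfl⟩
  · rintro ⟨t, ht, rfl⟩; exact ⟨t, by omega, rfl⟩

lemma win_mem_factset {w : List α} {t j : ℕ} (h : t + j ≤ w.length) :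
    win w t j ∈ factset w j := mem_factset.2 ⟨t, h, rfl⟩

lemma factset_length {w u : List α} {j : ℕ} (hu : u ∈ factset w j) : u.length = j := by
  obtain ⟨t, ht, rfl⟩ := mem_factset.1 hu
  exact win_length ht

lemma factset_take_subset {w : List α} {r j : ℕ} :
    factset (w.take r) j ⊆ factset w j := by
  intro u hu
  obtain ⟨t, ht, rfl⟩ := mem_factset.1 hu
  have hl : (w.take r).length = min r w.length := by simp
  rw [hl] at ht
  rw [win_take (by omega)]
  exact win_mem_factset (by omega)

/-- `v` has no right-special factor of length `j`. -/
def NoSpecial (v : List α) (j : ℕ) : Prop :=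
  ∀ u a b, u ++ [a] ∈ factset v (j+1) → u ++ [b] ∈ factset v (j+1) → a = b

/-- the `j`-suffix of `v` occurs somewhere with room on the right. -/
def NoLeak (v : List α) (j : ℕ) : Prop :=
  ∃ t, t + j < v.length ∧ win v t j = win v (v.length - j) j

lemma surj_take {v : List α} {j : ℕ} (hleak : NoLeak v j) :
    ∀ u ∈ factset v j, ∃ x ∈ factset v (j+1), x.take j = u := by
  intro u hu
  obtain ⟨t, ht, rfl⟩ := mem_factset.1 hu
  have key : ∀ t', t' + j < v.length → win v t' j = win v t j →
      ∃ x ∈ factset v (j+1), x.take j = win v t j := by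
    intro t' ht' heq
    refine ⟨win v t' (j+1), win_mem_factset (by omega), ?_⟩
    rw [← heq]
    unfold win
    rw [List.take_take]
    congr 1
    omega
  rcases lt_or_eq_of_le ht with h | h
  · exact key t h rfl
  · obtain ⟨t', ht', heq⟩ := hleak
    have : v.length - j = t := by omega
    rw [this] at heq
    exact key t' ht' heq

lemma card_bump {v : List α} {j : ℕ} (hleak : NoLeak v j) (hsp : ¬ NoSpecial v j) :
    (factset v j).card + 1 ≤ (factset v (j+1)).card := by
  classical
  unfold NoSpecial at hsp
  push_neg at hsp
  obtain ⟨u, a, b, ha, hb, hab⟩ := hsp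
  have hulen : u.length = j := by
    have := factset_length ha; simpa using this
  have hxy : u ++ [a] ≠ u ++ [b] := by
    simp [hab]
  have htk : ∀ c : α, (u ++ [c]).take j = u := by
    intro c
    rw [← hulen]
    exact List.take_left
  have hsurj : Set.SurjOn (fun x : List α => x.take j)
      ((factset v (j+1)).erase (u ++ [a])) (factset v j) := by
    intro z hz
    rcases eq_or_ne z u with rfl | hne
    · refine ⟨z ++ [b], ?_, htk b⟩
      have hne2 : z ++ [b] ≠ z ++ [a] := by simp [Ne.symm hab]
      simpa [Finset.mem_erase, hne2] using hb
    · obtain ⟨x, hx, hxt⟩ := surj_take hleak z hz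
      refine ⟨x, ?_, hxt⟩
      simp only [Finset.coe_erase, Set.mem_diff, Finset.coe_insert, Set.mem_singleton_iff]
      refine ⟨by simpa using hx, ?_⟩
      intro hxeq
      apply hne
      rw [← hxt, hxeq, htk a]
  have h1 : (factset v j).card ≤ ((factset v (j+1)).erase (u ++ [a])).card :=
    Finset.card_le_card_of_surjOn _ hsurj
  have h2 : ((factset v (j+1)).erase (u ++ [a])).card = (factset v (j+1)).card - 1 :=
    Finset.card_erase_of_mem ha
  have h3 : 1 ≤ (factset v (j+1)).card := Finset.card_pos.2 ⟨_, ha⟩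
  omega

lemma step2 {v : List α} {m : ℕ} (hcard : (factset v m).card ≤ m)
    (hleak : ∀ j, j < m → NoLeak v j) :
    ∃ j, j < m ∧ NoSpecial v j := by
  by_contra h
  push_neg at h
  have key : ∀ j, j ≤ m → j + 1 ≤ (factset v j).card := by
    intro j
    induction j with
    | zero =>
      intro _
      have : win v 0 0 ∈ factset v 0 := win_mem_factset (by omega)
      exact Finset.card_pos.2 ⟨_, this⟩
    | succ j ih =>
      intro hj
      have hb := card_bump (hleak j (by omega)) (h j (by omega))
      have := ih (by omega)
      omega
  have := key m le_rfl
  omega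

/-- Step 1: a good trimming position with no "leaks" at any level below `m`. -/
lemma step1 {m Q : ℕ} (hm : 1 ≤ m) (w : List α)
    (hQ : ∀ j, j ≤ m → (factset w j).card ≤ Q)
    (hN : m*Q + Q + m + 5 ≤ w.length) :
    ∃ r, w.length - m*Q ≤ r ∧ r ≤ w.length ∧
      ∀ j, 1 ≤ j → j < m → ∃ t, t + j < r ∧ win w t j = win w (r - j) j := by
  classical
  by_contra hcon
  push_neg at hcon
  set N := w.length with hNdef
  have hbad : ∀ r ∈ Finset.Icc (N - m*Q) N,
      ∃ j, 1 ≤ j ∧ j < m ∧ ∀ t, t + j < r → win w t j ≠ win w (r - j) j := by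
    intro r hr
    rw [Finset.mem_Icc] at hr
    obtain ⟨j, hj1, hj2, hj3⟩ := hcon r hr.1 hr.2
    exact ⟨j, hj1, hj2, fun t ht heq => hj3 t ht heq⟩
  set T := (Finset.Ico 1 m).sigma (fun j => factset w j) with hT
  set f : ℕ → Σ _ : ℕ, List α := fun r =>
    if hr : ∃ j, 1 ≤ j ∧ j < m ∧ ∀ t, t + j < r → win w t j ≠ win w (r - j) j then
      ⟨hr.choose, win w (r - hr.choose) hr.choose⟩
    else ⟨0, []⟩ with hf
  have hrlarge : ∀ r ∈ Finset.Icc (N - m*Q) N, m ≤ r ∧ r ≤ N := by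
    intro r hr
    rw [Finset.mem_Icc] at hr
    omega
  have hmaps : ∀ r ∈ Finset.Icc (N - m*Q) N, f r ∈ T := by
    intro r hr
    have hc := hbad r hr
    obtain ⟨hmr, hrN⟩ := hrlarge r hr
    rw [hf]
    simp only
    rw [dif_pos hc]
    obtain ⟨h1, h2, _⟩ := hc.choose_spec
    rw [hT, Finset.mem_sigma]
    dsimp only
    refine ⟨Finset.mem_Ico.2 ⟨h1, h2⟩, ?_⟩
    exact win_mem_factset (by omega)
  have hcardT : T.card ≤ (m - 1) * Q := by
    rw [hT, Finset.card_sigma]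
    calc ∑ j ∈ Finset.Ico 1 m, (factset w j).card
        ≤ (Finset.Ico 1 m).card * Q := by
          rw [← smul_eq_mul]
          exact Finset.sum_le_card_nsmul _ _ _ (fun j hj => hQ j (by
            rw [Finset.mem_Ico] at hj; omega))
      _ = (m - 1) * Q := by rw [Nat.card_Ico]
  have hcardI : (Finset.Icc (N - m*Q) N).card = m*Q + 1 := by
    rw [Nat.card_Icc]
    omega
  have hlt : T.card < (Finset.Icc (N - m*Q) N).card := by
    rw [hcardI]
    have : (m-1) * Q ≤ m * Q := Nat.mul_le_mul_right _ (by omega)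
    omega
  obtain ⟨r1, hr1, r2, hr2, hne, hfeq⟩ :=
    Finset.exists_ne_map_eq_of_card_lt_of_maps_to hlt hmaps
  -- wlog r1 < r2
  wlog hlt12 : r1 < r2 generalizing r1 r2
  · exact this r2 hr2 r1 hr1 hne.symm hfeq.symm (by omega)
  have hc1 := hbad r1 hr1
  have hc2 := hbad r2 hr2
  rw [hf] at hfeq
  simp only at hfeq
  rw [dif_pos hc1, dif_pos hc2] at hfeq
  obtain ⟨hj1, hj2, hj3⟩ := hc2.choose_spec
  have hjeq : hc1.choose = hc2.choose := congrArg Sigma.fst hfeq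
  set j := hc2.choose with hj
  have hueq : win w (r1 - j) j = win w (r2 - j) j := by
    have := (Sigma.mk.inj_iff.1 hfeq).2
    rw [hjeq] at this
    exact eq_of_heq this
  obtain ⟨hm1, hr1N⟩ := hrlarge r1 hr1
  have hj2' : j < m := hj2
  exact hj3 (r1 - j) (by omega) hueq

/-- Core structure theorem: a long word whose `m`-factor complexity is at most `m`
is determined by a short prefix, a periodicity rule, and a short suffix. -/
theorem core {m Q : ℕ} (hm : 1 ≤ m) (w : List α)
    (hQ : ∀ j, j ≤ m → (factset w j).card ≤ Q)
    (hmm : (factset w m).card ≤ m)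
    (hN : m*Q + Q + m + 5 ≤ w.length) :
    ∃ i d rr, i + d ≤ Q + 1 ∧ 1 ≤ d ∧ rr ≤ m*Q ∧
      ∀ s, i + d ≤ s → s + rr < w.length → w[s]? = w[s - d]? := by
  classical
  set N := w.length with hNdef
  obtain ⟨r, hr1, hr2, hgood⟩ := step1 hm w hQ hN
  set v := w.take r with hv
  have hlv : v.length = r := by
    rw [hv, List.length_take]
    omega
  have hrbig : m*Q + Q + m + 5 ≤ r + m*Q := by omega
  have hrbig2 : Q + m + 5 ≤ r := by omega
  -- no leaks in v
  have hleak : ∀ j, j < m → NoLeak v j := by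
    intro j hj
    rcases Nat.eq_zero_or_pos j with rfl | hj1
    · exact ⟨0, by omega, by simp [win]⟩
    · obtain ⟨t, ht, heq⟩ := hgood j hj1 hj
      refine ⟨t, by omega, ?_⟩
      rw [hlv]
      rw [win_take (by omega), win_take (by omega)]
      exact heq
  have hmv : (factset v m).card ≤ m :=
    le_trans (Finset.card_le_card factset_take_subset) hmm
  obtain ⟨j, hjm, hnsp⟩ := step2 hmv hleak
  -- pigeonhole for a repeated window among the first Q+2 positions
  have hQv : (factset v j).card ≤ Q :=
    le_trans (Finset.card_le_card factset_take_subset) (hQ j (by omega))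
  have hmapsw : ∀ t ∈ Finset.range (Q+2), win v t j ∈ factset v j := by
    intro t ht
    rw [Finset.mem_range] at ht
    exact win_mem_factset (by omega)
  obtain ⟨t1, ht1, t2, ht2, htne, hteq⟩ :=
    Finset.exists_ne_map_eq_of_card_lt_of_maps_to (by rw [Finset.card_range]; omega : (factset v j).card < (Finset.range (Q+2)).card) hmapsw
  wlog hlt12 : t1 < t2 generalizing t1 t2
  · exact this t2 ht2 t1 ht1 htne.symm hteq.symm (by omega)
  rw [Finset.mem_range] at ht1 ht2
  set i := t1 with hi
  set d := t2 - t1 with hd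
  have hd1 : 1 ≤ d := by omega
  have hid : i + d ≤ Q + 1 := by omega
  have base : win v i j = win v (i+d) j := by
    rw [hteq]
    congr 1
    omega
  -- one-step extension using no-special
  have ext : ∀ t, win v t j = win v (t+d) j → t + d + j + 1 ≤ r →
      win v t (j+1) = win v (t+d) (j+1) := by
    intro t ht hroom
    have h1 : t + j < v.length := by omega
    have h2 : (t+d) + j < v.length := by omega
    rw [win_succ h1, win_succ h2]
    have hab : v[t+j]'h1 = v[(t+d)+j]'h2 := by
      apply hnsp (win v t j)
      · exact (win_succ h1) ▸ win_mem_factset (by omega)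
      · have : win v (t+d) (j+1) = win v t j ++ [v[(t+d)+j]'h2] := by
          rw [win_succ h2, ht]
        exact this ▸ win_mem_factset (by omega)
    rw [ht, hab]
  -- propagation
  have INV : ∀ t, i ≤ t → t + d + j + 1 ≤ r → win v t (j+1) = win v (t+d) (j+1) := by
    intro t ht
    induction t, ht using Nat.le_induction with
    | base =>
      intro hroom
      exact ext i base hroom
    | succ t hti ih =>
      intro hroom
      have prev := ih (by omega)
      have hdrop : win v (t+1) j = win v ((t+1)+d) j := by
        have := congrArg (List.drop 1) prev
        rw [win_drop1, win_drop1] at this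
        rw [this]
        congr 1
        omega
      exact ext (t+1) hdrop hroom
  have hroom0 : i + d + j + 1 ≤ r := by omega
  have G : ∀ s, i ≤ s → s + d < r → v[s]? = v[s + d]? := by
    intro s hs hsd
    by_cases hbig : s + d + j + 1 ≤ r
    · have h0 := INV s hs hbig
      have hcc := congrArg (fun l : List α => l[0]?) h0
      have e1 : (win v s (j+1))[0]? = v[s + 0]? := win_getElem? (by omega)
      have e2 : (win v (s+d) (j+1))[0]? = v[(s+d) + 0]? := win_getElem? (by omega)
      rw [e1, e2] at hcc
      simpa using hcc
    · set t := r - (d + j + 1) with htdef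
      have hti : i ≤ t := by omega
      have htr : t + d + j + 1 ≤ r := by omega
      have hinv := INV t hti htr
      have hc : s - t < j + 1 := by omega
      have hcc := congrArg (fun l : List α => l[s - t]?) hinv
      have e1 : (win v t (j+1))[s - t]? = v[t + (s - t)]? := win_getElem? hc
      have e2 : (win v (t+d) (j+1))[s - t]? = v[(t+d) + (s - t)]? := win_getElem? hc
      rw [e1, e2] at hcc
      have h1 : t + (s - t) = s := by omega
      have h2 : t + d + (s - t) = s + d := by omega
      rwa [h1, h2] at hcc
  refine ⟨i, d, N - r, hid, hd1, by omega, ?_⟩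
  intro s h1 h2
  have hsr : s < r := by omega
  have hs' : i ≤ s - d := by omega
  have hsd : (s - d) + d < r := by omega
  have hG := G (s - d) hs' hsd
  have hsdd : s - d + d = s := by omega
  rw [hsdd] at hG
  have hv1 : v[s]? = w[s]? := by rw [hv, List.getElem?_take, if_pos hsr]
  have hv2 : v[s - d]? = w[s - d]? := by
    rw [hv, List.getElem?_take, if_pos (by omega : s - d < r)]
  rw [← hv1, ← hv2]
  exact hG.symm

section Language

variable [Fintype α] (W : Set (List α))

/-- number of words in `W` of length at most `n`. -/
noncomputable def cc (n : ℕ) : ℕ := {w ∈ W | w.length ≤ n}.ncard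

/-- number of words in `W` of length exactly `n`. -/
noncomputable def pp (n : ℕ) : ℕ := {w ∈ W | w.length = n}.ncard

lemma cfin (n : ℕ) : {w ∈ W | w.length ≤ n}.Finite :=
  (List.finite_length_le α n).subset (fun _ hw => hw.2)

lemma pfin (n : ℕ) : {w ∈ W | w.length = n}.Finite :=
  (List.finite_length_le α n).subset (fun _ hw => le_of_eq hw.2)

lemma pp_le_cc {N n : ℕ} (h : N ≤ n) : pp W N ≤ cc W n :=
  Set.ncard_le_ncard (fun w hw => ⟨hw.1, le_trans (le_of_eq hw.2) h⟩) (cfin W n)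

lemma crec (n : ℕ) : cc W (n+1) = cc W n + pp W (n+1) := by
  have hs : {w ∈ W | w.length ≤ n+1} = {w ∈ W | w.length ≤ n} ∪ {w ∈ W | w.length = n+1} := by
    ext w
    simp only [Set.mem_setOf_eq, Set.mem_union]
    constructor
    · rintro ⟨h1, h2⟩
      rcases Nat.lt_or_ge w.length (n+1) with h | h
      · exact Or.inl ⟨h1, by omega⟩
      · exact Or.inr ⟨h1, by omega⟩
    · rintro (⟨h1, h2⟩ | ⟨h1, h2⟩) <;> exact ⟨h1, by omega⟩
  have hdisj : Disjoint {w ∈ W | w.length ≤ n} {w ∈ W | w.length = n+1} := by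
    rw [Set.disjoint_left]
    rintro w ⟨_, h1⟩ ⟨_, h2⟩
    omega
  rw [cc, hs, Set.ncard_union_eq hdisj (cfin W n) (pfin W (n+1))]
  rfl

variable {W}

lemma factset_card_le_cc (hW : ∀ w ∈ W, ∀ u : List α, u <:+: w → u ∈ W)
    {w : List α} (hw : w ∈ W) {j m : ℕ} (hj : j ≤ m) :
    (factset w j).card ≤ cc W m := by
  rw [← Set.ncard_coe_finset]
  refine Set.ncard_le_ncard ?_ (cfin W m)
  intro u hu
  simp only [Finset.mem_coe] at hu
  obtain ⟨t, ht, rfl⟩ := mem_factset.1 hu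
  exact ⟨hW w hw _ (win_infix w t j), by rw [win_length ht]; exact hj⟩

lemma factset_card_le_pp (hW : ∀ w ∈ W, ∀ u : List α, u <:+: w → u ∈ W)
    {w : List α} (hw : w ∈ W) {m : ℕ} :
    (factset w m).card ≤ pp W m := by
  rw [← Set.ncard_coe_finset]
  refine Set.ncard_le_ncard ?_ (pfin W m)
  intro u hu
  simp only [Finset.mem_coe] at hu
  obtain ⟨t, ht, rfl⟩ := mem_factset.1 hu
  exact ⟨hW w hw _ (win_infix w t m), win_length ht⟩

lemma caseB (hp : ∀ m, 1 ≤ m → m + 1 ≤ pp W m) : ∀ n, n*n ≤ 2 * cc W n := by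
  intro n
  induction n with
  | zero => simp
  | succ n ih =>
    have h1 := crec W n
    have h2 := hp (n+1) (by omega)
    have h3 : (n+1)*(n+1) = n*n + 2*n + 1 := by ring
    omega

lemma caseA (hW : ∀ w ∈ W, ∀ u : List α, u <:+: w → u ∈ W)
    {m : ℕ} (hm : 1 ≤ m) (hpm : pp W m ≤ m) :
    ∃ B : ℕ, ∀ n, cc W n ≤ cc W 0 + B * n := by
  classical
  set Q := cc W m + 1 with hQdef
  set N₀ := m*Q + Q + m + 5 with hN₀
  set T : Set (List α × ℕ × ℕ × ℕ) :=
    {l : List α | l.length ≤ (Q+1) + m*Q} ×ˢ (Set.Iio (Q+2) ×ˢ Set.Iio (Q+2) ×ˢ Set.Iio (m*Q+1))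
    with hT
  have hTfin : T.Finite :=
    (List.finite_length_le α _).prod
      ((Set.finite_Iio _).prod ((Set.finite_Iio _).prod (Set.finite_Iio _)))
  set B := max (cc W N₀) T.ncard with hB
  have hppB : ∀ N, pp W N ≤ B := by
    intro N
    by_cases hNle : N ≤ N₀
    · exact le_trans (pp_le_cc W hNle) (le_max_left _ _)
    push_neg at hNle
    set P := {w ∈ W | w.length = N} with hP
    have hcore : ∀ w ∈ P, ∃ i d rr, i + d ≤ Q + 1 ∧ 1 ≤ d ∧ rr ≤ m*Q ∧
        ∀ s, i + d ≤ s → s + rr < w.length → w[s]? = w[s - d]? := by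
      intro w hw
      refine core hm w (fun j hj => ?_) ?_ ?_
      · exact le_trans (factset_card_le_cc hW hw.1 hj) (by omega)
      · exact le_trans (factset_card_le_pp hW hw.1) hpm
      · rw [hw.2]; omega
    set F : List α → ℕ × ℕ × ℕ := fun w =>
      if h : ∃ i d rr, i + d ≤ Q + 1 ∧ 1 ≤ d ∧ rr ≤ m*Q ∧
          ∀ s, i + d ≤ s → s + rr < w.length → w[s]? = w[s - d]? then
        (h.choose, h.choose_spec.choose, h.choose_spec.choose_spec.choose)
      else (0,0,0) with hF
    set E : List α → List α × ℕ × ℕ × ℕ := fun w =>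
      (w.take (Q+1) ++ w.drop (N - m*Q), F w) with hE
    have hFspec : ∀ w ∈ P, (F w).1 + (F w).2.1 ≤ Q + 1 ∧ 1 ≤ (F w).2.1 ∧ (F w).2.2 ≤ m*Q ∧
        ∀ s, (F w).1 + (F w).2.1 ≤ s → s + (F w).2.2 < w.length → w[s]? = w[s - (F w).2.1]? := by
      intro w hw
      have h := hcore w hw
      rw [hF]
      simp only [dif_pos h]
      exact h.choose_spec.choose_spec.choose_spec
    have hinj : Set.InjOn E P := by
      intro w1 hw1 w2 hw2 heq
      obtain ⟨hi1, hd1, hrr1, hp1⟩ := hFspec w1 hw1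
      obtain ⟨hi2, hd2, hrr2, hp2⟩ := hFspec w2 hw2
      rw [hE] at heq
      simp only [Prod.mk.injEq] at heq
      obtain ⟨hlist, hFeq⟩ := heq
      have hlen1 : w1.length = N := hw1.2
      have hlen2 : w2.length = N := hw2.2
      have htake1 : (w1.take (Q+1)).length = Q+1 := by rw [List.length_take]; omega
      have htake2 : (w2.take (Q+1)).length = Q+1 := by rw [List.length_take]; omega
      obtain ⟨tk, dr⟩ := List.append_inj hlist (htake1.trans htake2.symm)
      have hdeq : (F w1).2.1 = (F w2).2.1 := by rw [hFeq]
      have hieq : (F w1).1 = (F w2).1 := by rw [hFeq]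
      have hrreq : (F w1).2.2 = (F w2).2.2 := by rw [hFeq]
      apply List.ext_getElem?
      intro s
      induction s using Nat.strong_induction_on with
      | _ s ih =>
        by_cases hs1 : s < Q+1
        · have e1 := congrArg (fun l : List α => l[s]?) tk
          simp only [List.getElem?_take, if_pos hs1] at e1
          exact e1
        · by_cases hs2 : N - m*Q ≤ s
          · by_cases hsN : s < N
            · have e2 := congrArg (fun l : List α => l[s - (N - m*Q)]?) dr
              simp only [List.getElem?_drop] at e2
              have hplus : N - m*Q + (s - (N - m*Q)) = s := by omega
              rwa [hplus] at e2
            · push_neg at hsN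
              rw [List.getElem?_eq_none (by omega), List.getElem?_eq_none (by omega)]
          · push_neg at hs1 hs2
            have hkey1 := hp1 s (by omega) (by rw [hlen1]; omega)
            have hkey2 := hp2 s (by rw [← hieq, ← hdeq]; omega) (by rw [hlen2, ← hrreq]; omega)
            rw [← hdeq] at hkey2
            rw [hkey1, hkey2]
            exact ih (s - (F w1).2.1) (by omega)
    have himg : E '' P ⊆ T := by
      rintro _ ⟨w, hw, rfl⟩
      obtain ⟨hi, hd, hrr, _⟩ := hFspec w hw
      rw [hE, hT]
      simp only [Set.mem_prod, Set.mem_setOf_eq, Set.mem_Iio]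
      refine ⟨?_, by omega, by omega, by omega⟩
      rw [List.length_append, List.length_take, List.length_drop, hw.2]
      omega
    have : pp W N = (E '' P).ncard := (Set.ncard_image_of_injOn hinj).symm
    calc pp W N = (E '' P).ncard := this
      _ ≤ T.ncard := Set.ncard_le_ncard himg hTfin
      _ ≤ B := le_max_right _ _
  refine ⟨B, ?_⟩
  intro n
  induction n with
  | zero => simp
  | succ n ih =>
    have h1 := crec W n
    have h2 := hppB (n+1)
    have : B * (n + 1) = B * n + B := by ring
    omega

end Language


theorem gap [Fintype α] (W : Set (List α))
    (hW : ∀ w ∈ W, ∀ u : List α, u <:+: w → u ∈ W) :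
    Filter.limsup (fun n : ℕ => Real.log (cc W n : ℝ) / Real.log n) Filter.atTop
      ∉ Set.Ioo (1 : ℝ) 2 := by
  classical
  intro hL
  set f : ℕ → ℝ := fun n => Real.log (cc W n : ℝ) / Real.log n with hf
  have hL1 : 1 < Filter.limsup f Filter.atTop := hL.1
  have hL2 : Filter.limsup f Filter.atTop < 2 := hL.2
  set S := {a : ℝ | ∀ᶠ n in Filter.atTop, f n ≤ a} with hS
  have hls : Filter.limsup f Filter.atTop = sInf S := Filter.limsup_eq
  have hf0 : ∀ n, 0 ≤ f n := fun n =>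
    div_nonneg (Real.log_natCast_nonneg _) (Real.log_natCast_nonneg _)
  have hSbdd : BddBelow S := by
    refine ⟨0, fun a ha => ?_⟩
    obtain ⟨n, hn⟩ := ha.exists
    exact le_trans (hf0 n) hn
  by_cases hA : ∃ m, 1 ≤ m ∧ pp W m ≤ m
  · -- linear growth: limsup ≤ 1
    obtain ⟨m, hm, hpm⟩ := hA
    obtain ⟨B, hB⟩ := caseA hW hm hpm
    have hIoi : Set.Ioi (1:ℝ) ⊆ S := by
      intro a ha
      rw [Set.mem_Ioi] at ha
      set C : ℝ := ((cc W 0 + B + 1 : ℕ) : ℝ) with hC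
      have hC1 : (1:ℝ) ≤ C := by
        rw [hC]
        exact_mod_cast (by omega : (1:ℕ) ≤ cc W 0 + B + 1)
      obtain ⟨n₁, hn₁⟩ : ∃ n₁ : ℕ, Real.exp (Real.log C / (a - 1)) ≤ n₁ := exists_nat_ge _
      rw [hS, Set.mem_setOf_eq, Filter.eventually_atTop]
      refine ⟨max n₁ 2, fun n hn => ?_⟩
      have hn2 : 2 ≤ n := le_trans (le_max_right _ _) hn
      have hnn1 : (n₁ : ℝ) ≤ (n : ℝ) := by
        exact_mod_cast le_trans (le_max_left _ _) hn
      have hlogn : Real.log C / (a-1) ≤ Real.log n := by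
        calc Real.log C / (a-1) = Real.log (Real.exp (Real.log C / (a-1))) :=
              (Real.log_exp _).symm
          _ ≤ Real.log n := Real.log_le_log (Real.exp_pos _) (le_trans hn₁ hnn1)
      have hlognpos : 0 < Real.log n := Real.log_pos (by exact_mod_cast hn2)
      have hccle : ((cc W n : ℕ) : ℝ) ≤ C * n := by
        have h1 : cc W n ≤ cc W 0 + B * n := hB n
        have h2 : cc W 0 + B * n ≤ (cc W 0 + B + 1) * n := by nlinarith [hn2]
        calc ((cc W n : ℕ) : ℝ) ≤ ((cc W 0 + B*n : ℕ) : ℝ) := by exact_mod_cast h1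
          _ ≤ (((cc W 0 + B + 1) * n : ℕ) : ℝ) := by exact_mod_cast h2
          _ = C * n := by rw [hC]; push_cast; ring
      have hlogle : Real.log ((cc W n : ℕ) : ℝ) ≤ Real.log C + Real.log n := by
        rcases Nat.eq_zero_or_pos (cc W n) with h0 | h0
        · rw [h0]
          push_cast
          rw [Real.log_zero]
          have := Real.log_nonneg hC1
          linarith
        · calc Real.log ((cc W n : ℕ) : ℝ) ≤ Real.log (C * n) :=
              Real.log_le_log (by exact_mod_cast h0) hccle
            _ = Real.log C + Real.log n := Real.log_mul (by linarith)
                (by positivity)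
      have hCa : Real.log C ≤ (a - 1) * Real.log n := by
        rw [div_le_iff₀ (by linarith : (0:ℝ) < a - 1)] at hlogn
        linarith
      show Real.log (cc W n : ℝ) / Real.log n ≤ a
      rw [div_le_iff₀ hlognpos]
      nlinarith
    have hle1 : sInf S ≤ 1 := by
      calc sInf S ≤ sInf (Set.Ioi (1:ℝ)) :=
            csInf_le_csInf hSbdd ⟨2, by norm_num⟩ hIoi
        _ = 1 := csInf_Ioi
    rw [hls] at hL1
    linarith
  · -- quadratic growth: limsup ≥ 2 (or S empty and limsup = 0)
    push_neg at hA
    have hp : ∀ m, 1 ≤ m → m + 1 ≤ pp W m := by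
      intro m hm1
      have := hA m hm1
      omega
    have hquad := caseB hp
    rcases Set.eq_empty_or_nonempty S with hSe | hSne
    · rw [hls, hSe, Real.sInf_empty] at hL1
      linarith
    · have h2S : ∀ a ∈ S, (2:ℝ) ≤ a := by
        intro a ha
        by_contra hcon
        push_neg at hcon
        rw [hS, Set.mem_setOf_eq, Filter.eventually_atTop] at ha
        obtain ⟨n₀, hn₀⟩ := ha
        obtain ⟨n₁, hn₁⟩ : ∃ n₁ : ℕ, Real.exp (2 * Real.log 2 / (2 - a)) ≤ n₁ :=
          exists_nat_ge _
        set n := max n₀ (max n₁ 2) with hn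
        have hfa := hn₀ n (le_max_left _ _)
        have hn2 : 2 ≤ n := le_trans (le_max_right _ _) (le_max_right _ _)
        have hnn1 : (n₁ : ℝ) ≤ (n : ℝ) := by
          exact_mod_cast le_trans (le_max_left _ _) (le_max_right _ _)
        have hlognpos : 0 < Real.log n := Real.log_pos (by exact_mod_cast hn2)
        have hlogn : 2 * Real.log 2 / (2 - a) ≤ Real.log n := by
          calc 2 * Real.log 2 / (2 - a)
              = Real.log (Real.exp (2 * Real.log 2 / (2 - a))) := (Real.log_exp _).symm
            _ ≤ Real.log n := Real.log_le_log (Real.exp_pos _) (le_trans hn₁ hnn1)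
        have hnR : (2:ℝ) ≤ (n : ℝ) := by exact_mod_cast hn2
        have hcc : ((n:ℝ))^2 ≤ 2 * ((cc W n : ℕ) : ℝ) := by
          have := hquad n
          have hcast : ((n*n : ℕ) : ℝ) ≤ ((2 * cc W n : ℕ) : ℝ) := by exact_mod_cast this
          push_cast at hcast
          nlinarith [hcast]
        have hccpos : (0:ℝ) < ((cc W n : ℕ) : ℝ) := by nlinarith
        have hloglower : 2 * Real.log n - Real.log 2 ≤ Real.log ((cc W n : ℕ) : ℝ) := by
          have h1 : ((n:ℝ)^2) / 2 ≤ ((cc W n : ℕ) : ℝ) := by linarith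
          have h2 : (0:ℝ) < (n:ℝ)^2 / 2 := by positivity
          calc 2 * Real.log n - Real.log 2 = Real.log ((n:ℝ)^2 / 2) := by
                rw [Real.log_div (by positivity) (by norm_num), Real.log_pow]
                push_cast
                ring
            _ ≤ Real.log ((cc W n : ℕ) : ℝ) := Real.log_le_log h2 h1
        have hflow : 2 - Real.log 2 / Real.log n ≤ f n := by
          show 2 - Real.log 2 / Real.log n ≤ Real.log (cc W n : ℝ) / Real.log n
          rw [le_div_iff₀ hlognpos]
          have hexpand : (2 - Real.log 2 / Real.log n) * Real.log n
              = 2 * Real.log n - Real.log 2 := by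
            field_simp
          rw [hexpand]
          exact hloglower
        have hl2 : Real.log 2 / Real.log n ≤ (2 - a)/2 := by
          rw [div_le_iff₀ (by linarith : (0:ℝ) < 2 - a)] at hlogn
          rw [div_le_div_iff₀ hlognpos (by norm_num : (0:ℝ) < 2)]
          linarith
        have : a < f n := by linarith
        linarith
      have h2inf : 2 ≤ sInf S := le_csInf hSne h2S
      rw [hls] at hL2
      linarith

end Bergman5

/-- Bergman's gap theorem in the word setting: for a factor-closed set `W` of words over
a finite alphabet, the growth exponent `limsup log(c n) / log n`, where `c n` is the
number of words in `W` of length at most `n`, never lies strictly between `1` and `2`. -/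
theorem stmt5 {α : Type*} [Fintype α] (W : Set (List α))
    (hW : ∀ w ∈ W, ∀ u : List α, u <:+: w → u ∈ W) :
    Filter.limsup
        (fun n : ℕ => Real.log ({w ∈ W | w.length ≤ n}.ncard : ℝ) / Real.log n)
        Filter.atTop ∉ Set.Ioo (1 : ℝ) 2 := by
  exact Bergman5.gap W hW
end

section
/- Let g : ℕ → ℝ be a sequence with g(n) ≥ 0 for all n. Suppose that limsup_{n→∞} log(∑_{i=0}^{n} g(i))/log(n) < 2. Then for all positive real numbers a and b, the set {n ∈ ℕ : g(n) < a·n − b} is infinite. -/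
/-- Sequence form of Lemma 4.7: if a nonnegative sequence `g` satisfies
`limsup log(∑_{i=0}^n g i) / log n < 2`, then for all positive reals `a`, `b` there are
infinitely many `n` with `g n < a * n - b`. -/
theorem stmt6 (g : ℕ → ℝ) (hg : ∀ n, 0 ≤ g n)
    (h : Filter.limsup
        (fun n : ℕ =>
          ((Real.log (∑ i ∈ Finset.range (n + 1), g i) / Real.log n : ℝ) : EReal))
        Filter.atTop < 2) :
    ∀ a b : ℝ, 0 < a → 0 < b → {n : ℕ | g n < a * n - b}.Infinite := by
  intro a b ha hb
  by_contra hfin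
  rw [Set.not_infinite] at hfin
  obtain ⟨N, hN⟩ := hfin.bddAbove
  set M : ℕ := max (N + 1) ⌈2 * b / a⌉₊ with hM
  -- for i ≥ M, g i ≥ (a/2) * i
  have hMbound : ∀ i : ℕ, M ≤ i → a / 2 * i ≤ g i := by
    intro i hi
    have hiN : N + 1 ≤ i := le_trans (le_max_left _ _) hi
    have h1 : a * i - b ≤ g i := by
      by_contra hlt
      push_neg at hlt
      have : i ≤ N := hN hlt
      omega
    have h2 : (2 * b / a : ℝ) ≤ (i : ℝ) := by
      refine le_trans (Nat.le_ceil _) ?_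
      exact_mod_cast le_trans (le_max_right (N + 1) _) hi
    have hba : b ≤ a / 2 * i := by
      rw [div_le_iff₀ ha] at h2
      nlinarith
    linarith
  -- quadratic lower bound on partial sums
  have hsum : ∀ n : ℕ, 2 * M ≤ n →
      a / 8 * (n : ℝ) ^ 2 ≤ ∑ i ∈ Finset.range (n + 1), g i := by
    intro n hn
    have hsub : Finset.Ico ((n + 1) / 2) (n + 1) ⊆ Finset.range (n + 1) := by
      intro i hi
      rw [Finset.mem_Ico] at hi
      rw [Finset.mem_range]
      omega
    have h1 : ∑ i ∈ Finset.Ico ((n + 1) / 2) (n + 1), g i ≤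
        ∑ i ∈ Finset.range (n + 1), g i :=
      Finset.sum_le_sum_of_subset_of_nonneg hsub (fun i _ _ => hg i)
    have h2 : ∀ i ∈ Finset.Ico ((n + 1) / 2) (n + 1), a / 4 * n ≤ g i := by
      intro i hi
      rw [Finset.mem_Ico] at hi
      have hiM : M ≤ i := by omega
      have hgi := hMbound i hiM
      have hni : (n : ℝ) ≤ 2 * (i : ℝ) := by exact_mod_cast (by omega : n ≤ 2 * i)
      nlinarith
    have h3 : ((Finset.Ico ((n + 1) / 2) (n + 1)).card : ℝ) * (a / 4 * n) ≤
        ∑ i ∈ Finset.Ico ((n + 1) / 2) (n + 1), g i := by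
      have := Finset.card_nsmul_le_sum _ _ _ h2
      simpa [nsmul_eq_mul] using this
    have hcard : (n : ℝ) / 2 ≤ ((Finset.Ico ((n + 1) / 2) (n + 1)).card : ℝ) := by
      rw [Nat.card_Ico]
      have h4 : n ≤ 2 * (n + 1 - (n + 1) / 2) := by omega
      have h5 : (n : ℝ) ≤ 2 * ((n + 1 - (n + 1) / 2 : ℕ) : ℝ) := by exact_mod_cast h4
      linarith
    have hn0 : (0 : ℝ) ≤ (n : ℝ) := Nat.cast_nonneg n
    nlinarith [mul_le_mul_of_nonneg_right hcard (by positivity : (0:ℝ) ≤ a / 4 * n)]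
  -- extract a real r with limsup < r < 2
  obtain ⟨r, hr1, hr2⟩ := EReal.exists_between_coe_real h
  have hr2' : r < 2 := by
    rw [show (2 : EReal) = ((2 : ℝ) : EReal) by norm_cast] at hr2
    exact_mod_cast hr2
  have hev := Filter.eventually_lt_of_limsup_lt hr1
  set c : ℝ := a / 8 with hc
  have hcpos : 0 < c := by positivity
  have htend : Filter.Tendsto (fun n : ℕ => (n : ℝ) ^ (r - 2)) Filter.atTop (nhds 0) := by
    have h0 : Filter.Tendsto (fun x : ℝ => x ^ (-(2 - r))) Filter.atTop (nhds 0) :=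
      tendsto_rpow_neg_atTop (by linarith)
    have h1 : Filter.Tendsto (fun x : ℝ => x ^ (r - 2)) Filter.atTop (nhds 0) := by
      simpa [neg_sub] using h0
    exact h1.comp tendsto_natCast_atTop_atTop
  have hev2 : ∀ᶠ n : ℕ in Filter.atTop, (n : ℝ) ^ (r - 2) < c :=
    htend.eventually_lt_const hcpos
  have hfalse : ∀ᶠ n : ℕ in Filter.atTop, False := by
    filter_upwards [hev, hev2, Filter.eventually_ge_atTop (max (2 * M) 2)]
      with n h1 h2 h3
    have hn2 : 2 ≤ n := le_trans (le_max_right _ _) h3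
    have hnM : 2 * M ≤ n := le_trans (le_max_left _ _) h3
    have hn1 : (1 : ℝ) < (n : ℝ) := by exact_mod_cast (by omega : 1 < n)
    have hnpos : (0 : ℝ) < (n : ℝ) := by linarith
    have hlogn : 0 < Real.log n := Real.log_pos hn1
    set S : ℝ := ∑ i ∈ Finset.range (n + 1), g i with hS
    have hSlb : c * (n : ℝ) ^ 2 ≤ S := by
      have := hsum n hnM
      linarith [this]
    have hSpos : 0 < S := lt_of_lt_of_le (by positivity) hSlb
    have h1' : Real.log S / Real.log n < r := by exact_mod_cast h1
    have hlogS : Real.log S < r * Real.log n := by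
      rw [div_lt_iff₀ hlogn] at h1'
      linarith
    have hSub : S < (n : ℝ) ^ r := by
      have : S = Real.exp (Real.log S) := (Real.exp_log hSpos).symm
      rw [this, Real.rpow_def_of_pos hnpos]
      exact Real.exp_lt_exp.2 (by linarith [hlogS])
    have hsplit : (n : ℝ) ^ r = (n : ℝ) ^ 2 * (n : ℝ) ^ (r - 2) := by
      rw [← Real.rpow_two, ← Real.rpow_add hnpos]
      ring_nf
    have hlt : (n : ℝ) ^ r < (n : ℝ) ^ 2 * c := by
      rw [hsplit]
      have hn2pos : (0 : ℝ) < (n : ℝ) ^ 2 := by positivity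
      exact mul_lt_mul_of_pos_left h2 hn2pos
    nlinarith
  obtain ⟨n, hn⟩ := hfalse.exists
  exact hn
end

section
/- Let f : ℕ → ℚ be a sequence such that (i) the set {n ∈ ℕ : f(n) ≠ 0} is infinite, and (ii) for every k ∈ ℕ there exist natural numbers i ≤ j with j − i ≥ k such that f(n) = 0 for all n with i ≤ n ≤ j. Then f is not P-recursive. -/
/-- A sequence `f : ℕ → ℚ` is P-recursive if there are `m ∈ ℕ`, polynomials
`c 0, …, c m` with `c 0 ≠ 0`, and `N ≥ m` such that
`∑_{k=0}^{m} (c k)(n) * f (n - k) = 0` for all `n ≥ N`. -/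
def PRecursive (f : ℕ → ℚ) : Prop :=
  ∃ (m : ℕ) (c : ℕ → Polynomial ℚ), c 0 ≠ 0 ∧
    ∃ N : ℕ, m ≤ N ∧ ∀ n : ℕ, N ≤ n →
      ∑ k ∈ Finset.range (m + 1), (c k).eval (n : ℚ) * f (n - k) = 0

/-- Lemma 6.1: a sequence with infinitely many nonzero terms, whose runs of consecutive
zeros have unbounded length, is not P-recursive. -/
theorem stmt7 (f : ℕ → ℚ)
    (h1 : {n : ℕ | f n ≠ 0}.Infinite)
    (h2 : ∀ k : ℕ, ∃ i j : ℕ, i ≤ j ∧ k ≤ j - i ∧ ∀ n : ℕ, i ≤ n → n ≤ j → f n = 0) :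
    ¬ PRecursive f := by
  rintro ⟨m, c, hc0, N, hmN, hrec⟩
  -- the roots of `c 0` among naturals form a finite set
  have hS : {x : ℚ | (c 0).IsRoot x}.Finite := Polynomial.finite_setOf_isRoot hc0
  have hSn : {n : ℕ | (c 0).eval (n : ℚ) = 0}.Finite := by
    apply Set.Finite.preimage (f := fun n : ℕ => (n : ℚ)) _ hS
    intro a _ b _ h
    exact Nat.cast_injective h
  obtain ⟨M, hM⟩ := hSn.bddAbove
  set B := max N (M + 1) with hB
  obtain ⟨i, j, hij, hk, hz⟩ := h2 (m + B)
  have hj : m + B ≤ j := by omega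
  have key : ∀ n, j - m ≤ n → f n = 0 := by
    intro n
    induction n using Nat.strong_induction_on with
    | _ n ih =>
      intro hn
      by_cases hnj : n ≤ j
      · exact hz n (by omega) hnj
      · have hnN : N ≤ n := by omega
        have h := hrec n hnN
        have hsum : ∑ k ∈ Finset.range (m + 1), (c k).eval (n : ℚ) * f (n - k)
            = (c 0).eval (n : ℚ) * f n := by
          rw [Finset.sum_eq_single_of_mem 0 (Finset.mem_range.mpr (by omega))]
          · simp
          · intro k hk hk0
            rw [Finset.mem_range] at hk
            have : f (n - k) = 0 := ih (n - k) (by omega) (by omega)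
            rw [this, mul_zero]
        rw [hsum] at h
        have hne : (c 0).eval (n : ℚ) ≠ 0 := by
          intro h0
          have : n ≤ M := hM h0
          omega
        exact (mul_eq_zero.mp h).resolve_left hne
  have : {n : ℕ | f n ≠ 0} ⊆ Set.Iio (j - m) := by
    intro n hn
    simp only [Set.mem_setOf_eq] at hn
    by_contra hlt
    exact hn (key n (by simpa using Set.notMem_Iio.mp hlt))
  exact h1 (Set.Finite.subset (Set.finite_Iio _) this)
end

section
/- Let Λ := {n ∈ ℕ : there exists m ∈ ℕ with (2m+1)^{2m+1} + 1 ≤ n ≤ (2m+2)^{2m+2} + 1}, and define δ : ℕ → ℚ by δ(n) = 0 if n ∈ Λ and δ(n) = 1 otherwise. Then δ is not P-recursive. -/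
private lemma pp_mono {a b : ℕ} (ha : 1 ≤ a) (h : a ≤ b) : a ^ a ≤ b ^ b :=
  le_trans (Nat.pow_le_pow_left h a) (Nat.pow_le_pow_right (le_trans ha h) h)

private lemma pp_strict {a b : ℕ} (ha : 1 ≤ a) (h : a < b) : a ^ a < b ^ b :=
  lt_of_le_of_lt (Nat.pow_le_pow_left h.le a)
    (Nat.pow_lt_pow_right (lt_of_le_of_lt ha h) h)

/-- `g j = (2j+2)^{2j+2} + 2` is not in `Λ`. -/
private lemma key1 (j : ℕ) :
    ¬ (∃ m : ℕ, (2 * m + 1) ^ (2 * m + 1) + 1 ≤ (2 * j + 2) ^ (2 * j + 2) + 2 ∧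
        (2 * j + 2) ^ (2 * j + 2) + 2 ≤ (2 * m + 2) ^ (2 * m + 2) + 1) := by
  rintro ⟨m, h1, h2⟩
  rcases le_or_gt m j with hmj | hjm
  · have : (2 * m + 2) ^ (2 * m + 2) ≤ (2 * j + 2) ^ (2 * j + 2) :=
      pp_mono (by omega) (by omega)
    omega
  · -- j + 1 ≤ m, so (2j+3)^{2j+3} ≤ (2m+1)^{2m+1}
    have hA : (2 * j + 3) ^ (2 * j + 3) ≤ (2 * m + 1) ^ (2 * m + 1) :=
      pp_mono (by omega) (by omega)
    have hB : 3 * (2 * j + 2) ^ (2 * j + 2) ≤ (2 * j + 3) ^ (2 * j + 3) := by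
      calc 3 * (2 * j + 2) ^ (2 * j + 2)
          ≤ (2 * j + 3) * (2 * j + 3) ^ (2 * j + 2) :=
            Nat.mul_le_mul (by omega) (Nat.pow_le_pow_left (by omega) _)
        _ = (2 * j + 3) ^ (2 * j + 3) := by rw [← pow_succ']
    have hC : 1 ≤ (2 * j + 2) ^ (2 * j + 2) := Nat.one_le_pow _ _ (by omega)
    omega

/-- For `1 ≤ k ≤ j`, `g j - k` is in `Λ` (witness `m = j`). -/
private lemma key2 (j k : ℕ) (h1 : 1 ≤ k) (h2 : k ≤ j) :
    ∃ m : ℕ, (2 * m + 1) ^ (2 * m + 1) + 1 ≤ (2 * j + 2) ^ (2 * j + 2) + 2 - k ∧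
      (2 * j + 2) ^ (2 * j + 2) + 2 - k ≤ (2 * m + 2) ^ (2 * m + 2) + 1 := by
  refine ⟨j, ?_, by omega⟩
  have hA : 2 * (2 * j + 1) ^ (2 * j + 1) ≤ (2 * j + 2) ^ (2 * j + 2) := by
    calc 2 * (2 * j + 1) ^ (2 * j + 1)
        ≤ (2 * j + 2) * (2 * j + 2) ^ (2 * j + 1) :=
          Nat.mul_le_mul (by omega) (Nat.pow_le_pow_left (by omega) _)
      _ = (2 * j + 2) ^ (2 * j + 2) := by rw [← pow_succ']
  have hB : 2 * j + 1 ≤ (2 * j + 1) ^ (2 * j + 1) := Nat.le_self_pow (by omega) _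
  omega

/-- Example 6.2: the indicator sequence `δ` of the complement of
`Λ = ⋃_m [(2m+1)^{2m+1} + 1, (2m+2)^{2m+2} + 1]` is not P-recursive. -/
theorem stmt8 (δ : ℕ → ℚ)
    (hδ0 : ∀ n : ℕ,
      (∃ m : ℕ, (2 * m + 1) ^ (2 * m + 1) + 1 ≤ n ∧ n ≤ (2 * m + 2) ^ (2 * m + 2) + 1) →
      δ n = 0)
    (hδ1 : ∀ n : ℕ,
      ¬ (∃ m : ℕ, (2 * m + 1) ^ (2 * m + 1) + 1 ≤ n ∧ n ≤ (2 * m + 2) ^ (2 * m + 2) + 1) →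
      δ n = 1) :
    ¬ PRecursive δ := by
  rintro ⟨m, c, hc0, N, hNm, hrec⟩
  set g : ℕ → ℕ := fun j => (2 * j + 2) ^ (2 * j + 2) + 2 with hg
  -- each g (j + m + N) is a root of c 0
  have hroot : ∀ j : ℕ, (c 0).IsRoot ((g (j + m + N) : ℕ) : ℚ) := by
    intro j
    set J := j + m + N with hJ
    have hJself : 2 * J + 2 ≤ (2 * J + 2) ^ (2 * J + 2) := Nat.le_self_pow (by omega) _
    have hgN : N ≤ g J := by simp only [hg]; omega
    have hsum := hrec (g J) hgN
    have hδn : δ (g J) = 1 := hδ1 _ (key1 J)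
    rw [Finset.sum_eq_single_of_mem 0 (Finset.mem_range.mpr (by omega)) ?_] at hsum
    · simpa [hδn, Polynomial.IsRoot] using hsum
    · intro k hk hk0
      have hkm : k ≤ m := by have := Finset.mem_range.mp hk; omega
      have : δ (g J - k) = 0 := hδ0 _ (key2 J k (by omega) (by omega))
      simp [this]
  -- so c 0 has infinitely many roots
  apply hc0
  apply Polynomial.eq_zero_of_infinite_isRoot
  apply Set.infinite_of_injective_forall_mem (f := fun j : ℕ => ((g (j + m + N) : ℕ) : ℚ))
  · intro a b hab
    have hmono : StrictMono g := by
      apply strictMono_nat_of_lt_succ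
      intro j
      simp only [hg]
      have := pp_strict (a := 2 * j + 2) (b := 2 * (j + 1) + 2) (by omega) (by omega)
      omega
    simp only [] at hab
    have : g (a + m + N) = g (b + m + N) := Nat.cast_injective hab
    have := hmono.injective this
    omega
  · intro j
    exact hroot j
end

section
/- Let f : ℕ → ℚ be a sequence. Then f is P-recursive if and only if the sequence n ↦ f(n)/n! is P-recursive. -/
private lemma fact_ratio (n : ℕ) : ∀ m k, k ≤ m → m ≤ n →
    (n - k).factorial = (n - m).factorial * ∏ j ∈ Finset.Ico k m, (n - j) := by
  intro m
  induction m with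
  | zero => intro k hk _; interval_cases k; simp
  | succ m ih =>
    intro k hk hm
    rcases Nat.eq_or_lt_of_le hk with rfl | hlt
    · simp
    · have hk' : k ≤ m := Nat.lt_succ_iff.mp hlt
      rw [Finset.prod_Ico_succ_top hk', ih k hk' (le_of_lt hm)]
      have h1 : n - m = (n - (m + 1)) + 1 := by omega
      rw [h1, Nat.factorial_succ]
      ring

private lemma fact_ratio_q {n m k : ℕ} (hk : k ≤ m) (hm : m ≤ n) :
    ((n - k).factorial : ℚ)
      = ((n - m).factorial : ℚ) * ∏ j ∈ Finset.Ico k m, ((n : ℚ) - j) := by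
  rw [fact_ratio n m k hk hm]
  push_cast
  rw [Finset.prod_congr rfl]
  intro j hj
  have : j ≤ n := by
    have := (Finset.mem_Ico.mp hj).2; omega
  push_cast [Nat.cast_sub this]
  ring

private lemma eval_prod_sub (S : Finset ℕ) (x : ℚ) :
    (∏ j ∈ S, (Polynomial.X - Polynomial.C (j : ℚ))).eval x
      = ∏ j ∈ S, (x - j) := by
  simp [Polynomial.eval_prod]

private lemma prod_sub_ne_zero (S : Finset ℕ) :
    (∏ j ∈ S, (Polynomial.X - Polynomial.C ((j : ℚ)))) ≠ 0 :=
  Finset.prod_ne_zero_iff.mpr fun j _ => Polynomial.X_sub_C_ne_zero _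

private lemma prec_mul {g : ℕ → ℚ} (h : PRecursive g) :
    PRecursive (fun n => g n * (Nat.factorial n : ℚ)) := by
  obtain ⟨m, c, hc0, N, hN, hrec⟩ := h
  refine ⟨m, fun k => c k * ∏ j ∈ Finset.range k, (Polynomial.X - Polynomial.C (j : ℚ)),
    by simpa using hc0, N, hN, ?_⟩
  intro n hn
  have key : ∀ k ∈ Finset.range (m + 1),
      (c k * ∏ j ∈ Finset.range k, (Polynomial.X - Polynomial.C (j : ℚ))).eval (n : ℚ) *
        (g (n - k) * ((n - k).factorial : ℚ))
      = ((n.factorial : ℚ)) * ((c k).eval (n : ℚ) * g (n - k)) := by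
    intro k hk
    have hkm : k ≤ m := Nat.lt_succ_iff.mp (Finset.mem_range.mp hk)
    have hmn : m ≤ n := le_trans hN hn
    have hfac : (n.factorial : ℚ)
        = ((n - k).factorial : ℚ) * ∏ j ∈ Finset.range k, ((n : ℚ) - j) := by
      have := fact_ratio_q (n := n) (m := k) (k := 0) (Nat.zero_le k) (le_trans hkm hmn)
      rw [Finset.range_eq_Ico]
      simpa using this
    rw [Polynomial.eval_mul, eval_prod_sub, hfac]
    ring
  rw [Finset.sum_congr rfl key, ← Finset.mul_sum, hrec n hn, mul_zero]

private lemma prec_div {g : ℕ → ℚ} (h : PRecursive g) :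
    PRecursive (fun n => g n / (Nat.factorial n : ℚ)) := by
  obtain ⟨m, c, hc0, N, hN, hrec⟩ := h
  refine ⟨m, fun k => c k * ∏ j ∈ Finset.Ico k m, (Polynomial.X - Polynomial.C (j : ℚ)),
    mul_ne_zero hc0 (prod_sub_ne_zero _), N, hN, ?_⟩
  intro n hn
  have key : ∀ k ∈ Finset.range (m + 1),
      (c k * ∏ j ∈ Finset.Ico k m, (Polynomial.X - Polynomial.C (j : ℚ))).eval (n : ℚ) *
        (g (n - k) / ((n - k).factorial : ℚ))
      = (((n - m).factorial : ℚ))⁻¹ * ((c k).eval (n : ℚ) * g (n - k)) := by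
    intro k hk
    have hkm : k ≤ m := Nat.lt_succ_iff.mp (Finset.mem_range.mp hk)
    have hmn : m ≤ n := le_trans hN hn
    have hfac : ((n - k).factorial : ℚ)
        = ((n - m).factorial : ℚ) * ∏ j ∈ Finset.Ico k m, ((n : ℚ) - j) :=
      fact_ratio_q hkm hmn
    have h1 : ((n - k).factorial : ℚ) ≠ 0 := Nat.cast_ne_zero.mpr (Nat.factorial_ne_zero _)
    have h2 : ((n - m).factorial : ℚ) ≠ 0 := Nat.cast_ne_zero.mpr (Nat.factorial_ne_zero _)
    rw [Polynomial.eval_mul, eval_prod_sub]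
    field_simp
    rw [hfac]
    ring
  rw [Finset.sum_congr rfl key, ← Finset.mul_sum, hrec n hn, mul_zero]

/-- Claim (E6.0.3): `f` is P-recursive if and only if `n ↦ f n / n!` is P-recursive. -/
theorem stmt9 (f : ℕ → ℚ) :
    PRecursive f ↔ PRecursive (fun n => f n / (Nat.factorial n : ℚ)) := by
  constructor
  · exact prec_div
  · intro h
    have := prec_mul h
    have heq : (fun n => f n / (Nat.factorial n : ℚ) * (Nat.factorial n : ℚ)) = f := by
      funext n
      exact div_mul_cancel₀ _ (Nat.cast_ne_zero.mpr (Nat.factorial_ne_zero n))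
    rwa [heq] at this
end

section
/- Let q be a real number with 1/2 < q < 1 and define f : ℕ → ℝ by f(0) = 1, f(1) = 2, and f(n) = 1 + n + (⌊n^q⌋ − 1)·⌊n^q⌋/2 for n ≥ 2, where ⌊n^q⌋ denotes the integer floor of the real number n^q. Then limsup_{n→∞} log(∑_{i=0}^{n} f(i))/log(n) = 1 + 2q. -/
open Filter

-- auxiliary lemma: upper bound on individual terms
lemma aux_ub (q : ℝ) (hq1 : 1 / 2 < q) (hq2 : q < 1) (f : ℕ → ℝ)
    (hf0 : f 0 = 1) (hf1 : f 1 = 2)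
    (hf : ∀ n : ℕ, 2 ≤ n →
      f n = 1 + (n : ℝ) + ((⌊(n : ℝ) ^ q⌋ : ℝ) - 1) * (⌊(n : ℝ) ^ q⌋ : ℝ) / 2)
    (n : ℕ) (hn : 2 ≤ n) :
    ∀ i ∈ Finset.range (n + 1), f i ≤ 3 * (n : ℝ) ^ (2 * q) := by
  have hq0 : (0:ℝ) < q := by linarith
  have hn1 : (1:ℝ) ≤ (n:ℝ) := by exact_mod_cast Nat.one_le_of_lt hn
  have h2q : (1:ℝ) ≤ 2 * q := by linarith
  have hone : (1:ℝ) ≤ (n:ℝ) ^ (2*q) := Real.one_le_rpow hn1 (by linarith)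
  have hnle : (n:ℝ) ≤ (n:ℝ) ^ (2*q) := by
    calc (n:ℝ) = (n:ℝ) ^ (1:ℝ) := (Real.rpow_one _).symm
    _ ≤ (n:ℝ) ^ (2*q) := Real.rpow_le_rpow_of_exponent_le hn1 h2q
  intro i hi
  simp only [Finset.mem_range] at hi
  have hile : (i:ℝ) ≤ (n:ℝ) := by exact_mod_cast Nat.lt_succ_iff.mp hi
  match i with
  | 0 => rw [hf0]; linarith
  | 1 => rw [hf1]; linarith
  | (k+2) =>
    have hik : 2 ≤ k + 2 := by omega
    rw [hf _ hik]
    set x := ((k+2:ℕ):ℝ) ^ q with hxdef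
    have hi1 : (1:ℝ) ≤ ((k+2:ℕ):ℝ) := by exact_mod_cast Nat.one_le_iff_ne_zero.mpr (by omega)
    have hx1 : (1:ℝ) ≤ x := Real.one_le_rpow hi1 hq0.le
    have hfl1 : (1:ℝ) ≤ (⌊x⌋:ℝ) := by exact_mod_cast Int.le_floor.mpr (by exact_mod_cast hx1)
    have hflx : ((⌊x⌋:ℝ)) ≤ x := Int.floor_le x
    have hxx : x * x = ((k+2:ℕ):ℝ) ^ (2*q) := by
      rw [hxdef, ← Real.rpow_add (by positivity)]; ring_nf
    have hxn : ((k+2:ℕ):ℝ) ^ (2*q) ≤ (n:ℝ) ^ (2*q) :=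
      Real.rpow_le_rpow (by positivity) hile (by linarith)
    have hprod : ((⌊x⌋:ℝ) - 1) * (⌊x⌋:ℝ) ≤ x * x := by nlinarith
    have : ((k+2:ℕ):ℝ) ≤ (n:ℝ)^(2*q) := le_trans hile hnle
    push_cast at this ⊢
    nlinarith

lemma aux_nonneg (q : ℝ) (hq1 : 1 / 2 < q) (f : ℕ → ℝ)
    (hf0 : f 0 = 1) (hf1 : f 1 = 2)
    (hf : ∀ n : ℕ, 2 ≤ n →
      f n = 1 + (n : ℝ) + ((⌊(n : ℝ) ^ q⌋ : ℝ) - 1) * (⌊(n : ℝ) ^ q⌋ : ℝ) / 2)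
    (i : ℕ) : 0 ≤ f i := by
  have hq0 : (0:ℝ) < q := by linarith
  match i with
  | 0 => rw [hf0]; norm_num
  | 1 => rw [hf1]; norm_num
  | (k+2) =>
    rw [hf _ (by omega)]
    set x := ((k+2:ℕ):ℝ) ^ q
    have hi1 : (1:ℝ) ≤ ((k+2:ℕ):ℝ) := by exact_mod_cast Nat.one_le_iff_ne_zero.mpr (by omega)
    have hx1 : (1:ℝ) ≤ x := Real.one_le_rpow hi1 hq0.le
    have hfl1 : (1:ℝ) ≤ (⌊x⌋:ℝ) := by exact_mod_cast Int.le_floor.mpr (by exact_mod_cast hx1)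
    have : (0:ℝ) ≤ ((k+2:ℕ):ℝ) := by positivity
    nlinarith

lemma aux_lb_term (q : ℝ) (hq1 : 1 / 2 < q) (hq2 : q < 1) (f : ℕ → ℝ)
    (hf : ∀ n : ℕ, 2 ≤ n →
      f n = 1 + (n : ℝ) + ((⌊(n : ℝ) ^ q⌋ : ℝ) - 1) * (⌊(n : ℝ) ^ q⌋ : ℝ) / 2)
    (n : ℕ) (hn : 32 ≤ n) :
    ∀ i ∈ Finset.Icc (n / 2) n, ((n:ℝ)/4) ^ (2*q) / 8 ≤ f i := by
  have hq0 : (0:ℝ) < q := by linarith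
  intro i hi
  simp only [Finset.mem_Icc] at hi
  have hi16 : 16 ≤ i := le_trans (by omega) hi.1
  rw [hf i (by omega)]
  set x := ((i:ℕ):ℝ) ^ q with hxdef
  -- x ≥ 4
  have h16 : (16:ℝ) ≤ (i:ℝ) := by exact_mod_cast hi16
  have hx4 : (4:ℝ) ≤ x := by
    have h1 : (16:ℝ) ^ (1/2:ℝ) ≤ (16:ℝ) ^ q :=
      Real.rpow_le_rpow_of_exponent_le (by norm_num) hq1.le
    have h2 : (16:ℝ) ^ (1/2:ℝ) = 4 := by
      rw [show (16:ℝ) = 4 ^ (2:ℕ) by norm_num, ← Real.rpow_natCast,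
        ← Real.rpow_mul (by norm_num)]
      norm_num
    have h3 : (16:ℝ) ^ q ≤ x := Real.rpow_le_rpow (by norm_num) h16 hq0.le
    linarith
  have hfl : x - 1 < (⌊x⌋:ℝ) := Int.sub_one_lt_floor x
  have hflx : ((⌊x⌋:ℝ)) ≤ x := Int.floor_le x
  -- (⌊x⌋-1)⌊x⌋ ≥ (x/2)^2
  have hprod : (x/2) * (x/2) ≤ ((⌊x⌋:ℝ) - 1) * (⌊x⌋:ℝ) := by nlinarith
  -- i ≥ n/4 as reals
  have hndiv : (n:ℝ)/4 ≤ ((n/2:ℕ):ℝ) := by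
    have h1 : n ≤ 2 * (n/2) + 1 := by omega
    have h2 : (n:ℝ) ≤ 2 * ((n/2:ℕ):ℝ) + 1 := by exact_mod_cast h1
    have h3 : (32:ℝ) ≤ (n:ℝ) := by exact_mod_cast hn
    linarith
  have hin : (n:ℝ)/4 ≤ (i:ℝ) := le_trans hndiv (by exact_mod_cast hi.1)
  have hxx : ((n:ℝ)/4) ^ (2*q) ≤ x * x := by
    have h1 : ((n:ℝ)/4) ^ (2*q) ≤ (i:ℝ) ^ (2*q) :=
      Real.rpow_le_rpow (by positivity) hin (by linarith)
    have h2 : x * x = (i:ℝ) ^ (2*q) := by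
      rw [hxdef, ← Real.rpow_add (by positivity)]; ring_nf
    linarith
  have hipos : (0:ℝ) ≤ (i:ℝ) := by positivity
  nlinarith

lemma aux_sum_ub (q : ℝ) (hq1 : 1 / 2 < q) (hq2 : q < 1) (f : ℕ → ℝ)
    (hf0 : f 0 = 1) (hf1 : f 1 = 2)
    (hf : ∀ n : ℕ, 2 ≤ n →
      f n = 1 + (n : ℝ) + ((⌊(n : ℝ) ^ q⌋ : ℝ) - 1) * (⌊(n : ℝ) ^ q⌋ : ℝ) / 2)
    (n : ℕ) (hn : 2 ≤ n) :
    ∑ i ∈ Finset.range (n + 1), f i ≤ 6 * (n : ℝ) ^ (1 + 2 * q) := by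
  have hnpos : (0:ℝ) < (n:ℝ) := by exact_mod_cast Nat.pos_of_ne_zero (by omega)
  have h1 : ∑ i ∈ Finset.range (n + 1), f i ≤ (n+1) • (3 * (n:ℝ) ^ (2*q)) := by
    have := Finset.sum_le_card_nsmul (Finset.range (n+1)) f (3 * (n:ℝ) ^ (2*q))
      (aux_ub q hq1 hq2 f hf0 hf1 hf n hn)
    simpa using this
  rw [nsmul_eq_mul] at h1
  have h2 : ((n+1:ℕ):ℝ) ≤ 2 * (n:ℝ) := by
    have : (2:ℝ) ≤ (n:ℝ) := by exact_mod_cast hn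
    push_cast; linarith
  have h3 : (n:ℝ) ^ (1 + 2*q) = (n:ℝ) * (n:ℝ) ^ (2*q) := by
    rw [Real.rpow_add hnpos, Real.rpow_one]
  have h4 : (0:ℝ) ≤ (n:ℝ) ^ (2*q) := by positivity
  push_cast at h2
  calc ∑ i ∈ Finset.range (n + 1), f i ≤ ((n:ℝ)+1) * (3 * (n:ℝ) ^ (2*q)) := by push_cast at h1; linarith
    _ ≤ (2*(n:ℝ)) * (3 * (n:ℝ) ^ (2*q)) := by nlinarith
    _ = 6 * ((n:ℝ) * (n:ℝ) ^ (2*q)) := by ring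
    _ = 6 * (n:ℝ) ^ (1+2*q) := by rw [h3]

lemma aux_sum_lb (q : ℝ) (hq1 : 1 / 2 < q) (hq2 : q < 1) (f : ℕ → ℝ)
    (hf0 : f 0 = 1) (hf1 : f 1 = 2)
    (hf : ∀ n : ℕ, 2 ≤ n →
      f n = 1 + (n : ℝ) + ((⌊(n : ℝ) ^ q⌋ : ℝ) - 1) * (⌊(n : ℝ) ^ q⌋ : ℝ) / 2)
    (n : ℕ) (hn : 32 ≤ n) :
    (n : ℝ) ^ (1 + 2 * q) / 512 ≤ ∑ i ∈ Finset.range (n + 1), f i := by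
  have hq0 : (0:ℝ) < q := by linarith
  have hnpos : (0:ℝ) < (n:ℝ) := by exact_mod_cast Nat.pos_of_ne_zero (by omega)
  have hn32 : (32:ℝ) ≤ (n:ℝ) := by exact_mod_cast hn
  -- restrict the sum to Icc (n/2) n
  have hsub : Finset.Icc (n / 2) n ⊆ Finset.range (n + 1) := by
    intro i hi
    simp only [Finset.mem_Icc, Finset.mem_range] at *
    omega
  have h1 : ∑ i ∈ Finset.Icc (n / 2) n, f i ≤ ∑ i ∈ Finset.range (n + 1), f i :=
    Finset.sum_le_sum_of_subset_of_nonneg hsub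
      (fun i _ _ => aux_nonneg q hq1 f hf0 hf1 hf i)
  have h2 : (Finset.Icc (n / 2) n).card • (((n:ℝ)/4) ^ (2*q) / 8) ≤
      ∑ i ∈ Finset.Icc (n / 2) n, f i :=
    Finset.card_nsmul_le_sum _ _ _ (aux_lb_term q hq1 hq2 f hf n hn)
  rw [nsmul_eq_mul, Nat.card_Icc] at h2
  -- card ≥ n/4
  have hcard : (n:ℝ)/4 ≤ ((n + 1 - n/2 : ℕ):ℝ) := by
    have h3 : n/2 ≤ n + 1 := by omega
    rw [Nat.cast_sub h3]
    have h4 : ((n/2:ℕ):ℝ) ≤ (n:ℝ)/2 := by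
      have := Nat.cast_div_le (α := ℝ) (m := n) (n := 2)
      simpa using this
    push_cast
    linarith
  have hb : (0:ℝ) ≤ ((n:ℝ)/4) ^ (2*q) / 8 := by positivity
  have h5 : (n:ℝ)/4 * (((n:ℝ)/4) ^ (2*q) / 8) ≤ ∑ i ∈ Finset.range (n + 1), f i := by
    calc (n:ℝ)/4 * (((n:ℝ)/4) ^ (2*q) / 8)
        ≤ ((n + 1 - n/2 : ℕ):ℝ) * (((n:ℝ)/4) ^ (2*q) / 8) :=
          mul_le_mul_of_nonneg_right hcard hb
      _ ≤ ∑ i ∈ Finset.Icc (n / 2) n, f i := h2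
      _ ≤ _ := h1
  -- (n/4) * (n/4)^(2q) = (n/4)^(1+2q) ≥ n^(1+2q)/64
  have h6 : (n:ℝ)/4 * (((n:ℝ)/4) ^ (2*q)) = ((n:ℝ)/4) ^ (1+2*q) := by
    rw [Real.rpow_add (by linarith), Real.rpow_one]
  have h7 : ((n:ℝ)/4) ^ (1+2*q) = (n:ℝ) ^ (1+2*q) / (4:ℝ) ^ (1+2*q) :=
    Real.div_rpow (by linarith) (by norm_num) _
  have h8 : (4:ℝ) ^ (1+2*q) ≤ 64 := by
    have h9 : (4:ℝ) ^ (1+2*q) ≤ (4:ℝ) ^ (3:ℝ) :=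
      Real.rpow_le_rpow_of_exponent_le (by norm_num) (by linarith)
    have h10 : (4:ℝ) ^ (3:ℝ) = 64 := by
      rw [show (3:ℝ) = ((3:ℕ):ℝ) by norm_num, Real.rpow_natCast]; norm_num
    linarith
  have h11 : (n:ℝ) ^ (1+2*q) / 64 ≤ ((n:ℝ)/4) ^ (1+2*q) := by
    rw [h7]
    have hp : (0:ℝ) < (4:ℝ) ^ (1+2*q) := by positivity
    have hnn : (0:ℝ) ≤ (n:ℝ) ^ (1+2*q) := by positivity
    exact div_le_div_of_nonneg_left hnn hp h8
  have h12 : (n:ℝ)/4 * (((n:ℝ)/4) ^ (2*q) / 8) = ((n:ℝ)/4) ^ (1+2*q) / 8 := by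
    rw [← h6]; ring
  rw [h12] at h5
  linarith

/-- Example 3.5(3): for `1/2 < q < 1`, the sequence with `f 0 = 1`, `f 1 = 2` and
`f n = 1 + n + (⌊n^q⌋ - 1)⌊n^q⌋/2` for `n ≥ 2` has growth exponent
`limsup log(∑_{i=0}^n f i)/log n = 1 + 2q`. -/
theorem stmt12 (q : ℝ) (hq1 : 1 / 2 < q) (hq2 : q < 1) (f : ℕ → ℝ)
    (hf0 : f 0 = 1) (hf1 : f 1 = 2)
    (hf : ∀ n : ℕ, 2 ≤ n →
      f n = 1 + (n : ℝ) + ((⌊(n : ℝ) ^ q⌋ : ℝ) - 1) * (⌊(n : ℝ) ^ q⌋ : ℝ) / 2) :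
    limsup (fun n : ℕ => Real.log (∑ i ∈ Finset.range (n + 1), f i) / Real.log n)
      atTop = 1 + 2 * q := by
  set r := 1 + 2 * q with hrdef
  have hlogtop : Tendsto (fun n : ℕ => Real.log n) atTop atTop :=
    Real.tendsto_log_atTop.comp tendsto_natCast_atTop_atTop
  have hzero : ∀ c : ℝ, Tendsto (fun n : ℕ => c / Real.log n) atTop (nhds 0) :=
    fun c => Tendsto.div_atTop tendsto_const_nhds hlogtop
  have hlow : Tendsto (fun n : ℕ => r - Real.log 512 / Real.log n) atTop (nhds r) := by
    simpa using tendsto_const_nhds.sub (hzero (Real.log 512))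
  have hup : Tendsto (fun n : ℕ => r + Real.log 6 / Real.log n) atTop (nhds r) := by
    simpa using tendsto_const_nhds.add (hzero (Real.log 6))
  apply Tendsto.limsup_eq
  apply tendsto_of_tendsto_of_tendsto_of_le_of_le' hlow hup
  · -- lower bound eventually
    filter_upwards [eventually_ge_atTop 32] with n hn
    have hn32 : (32:ℝ) ≤ (n:ℝ) := by exact_mod_cast hn
    have hlogn : 0 < Real.log n := Real.log_pos (by linarith)
    have hS := aux_sum_lb q hq1 hq2 f hf0 hf1 hf n hn
    have hnr : (0:ℝ) < (n:ℝ) ^ r := by positivity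
    have hSpos : 0 < ∑ i ∈ Finset.range (n + 1), f i := lt_of_lt_of_le (by positivity) hS
    have h1 : Real.log ((n:ℝ) ^ r / 512) ≤ Real.log (∑ i ∈ Finset.range (n + 1), f i) :=
      Real.log_le_log (by positivity) hS
    rw [Real.log_div (by positivity) (by norm_num), Real.log_rpow (by linarith)] at h1
    have h2 : (r * Real.log n - Real.log 512) / Real.log n ≤
        Real.log (∑ i ∈ Finset.range (n + 1), f i) / Real.log n := by gcongr
    rw [sub_div, mul_div_cancel_right₀ _ (ne_of_gt hlogn)] at h2
    exact h2
  · -- upper bound eventually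
    filter_upwards [eventually_ge_atTop 32] with n hn
    have hn32 : (32:ℝ) ≤ (n:ℝ) := by exact_mod_cast hn
    have hlogn : 0 < Real.log n := Real.log_pos (by linarith)
    have hS := aux_sum_ub q hq1 hq2 f hf0 hf1 hf n (by omega)
    have hSlb := aux_sum_lb q hq1 hq2 f hf0 hf1 hf n hn
    have hSpos : 0 < ∑ i ∈ Finset.range (n + 1), f i :=
      lt_of_lt_of_le (by positivity) hSlb
    have h1 : Real.log (∑ i ∈ Finset.range (n + 1), f i) ≤ Real.log (6 * (n:ℝ) ^ r) :=
      Real.log_le_log hSpos hS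
    rw [Real.log_mul (by norm_num) (by positivity), Real.log_rpow (by linarith)] at h1
    have h2 : Real.log (∑ i ∈ Finset.range (n + 1), f i) / Real.log n ≤
        (Real.log 6 + r * Real.log n) / Real.log n := by gcongr
    rw [add_div, mul_div_cancel_right₀ _ (ne_of_gt hlogn)] at h2
    linarith
end

section
/- Let q be a real number with 1/2 < q < 1 and let n ≥ 2 be a natural number. Consider words w over the two-letter alphabet {0, 1} of length n satisfying: (i) w contains at most two occurrences of the letter 1, and (ii) for every factor u of w containing exactly two occurrences of the letter 1, if j denotes the number of letters of u lying strictly between the two occurrences of 1 (all of which are 0), then j ≥ |u| − ⌊|u|^q⌋, where |u| is the length of u and ⌊|u|^q⌋ is the integer floor of the real number |u|^q. Then the number of such words w equals 1 + n + (⌊n^q⌋ − 1)·⌊n^q⌋/2. -/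
private def rp (k : ℕ) : List (Fin 2) := List.replicate k 0

private lemma rp_count (k : ℕ) : (rp k).count 1 = 0 := by
  simp [rp, List.count_replicate]

private lemma all_zero {l : List (Fin 2)} (h : l.count 1 = 0) : l = rp l.length := by
  rw [rp, List.eq_replicate_iff]
  refine ⟨rfl, fun b hb => ?_⟩
  have hb1 : b ≠ 1 := fun e => by
    rw [List.count_eq_zero] at h; exact h (e ▸ hb)
  fin_cases b <;> simp_all

private lemma uniq : ∀ (a : ℕ) {c : ℕ} {v v' : List (Fin 2)},
    rp a ++ 1 :: v = rp c ++ 1 :: v' → a = c ∧ v = v' := by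
  intro a
  induction a with
  | zero =>
    intro c v v' h
    cases c with
    | zero => simpa [rp] using h
    | succ c => simp [rp, List.replicate_succ] at h
  | succ a ih =>
    intro c v v' h
    cases c with
    | zero => simp [rp, List.replicate_succ] at h
    | succ c =>
      simp only [rp, List.replicate_succ, List.cons_append, List.cons.injEq] at h
      obtain ⟨ha, hv⟩ := ih (h.2 ▸ rfl : rp a ++ 1 :: v = rp c ++ 1 :: v')
      exact ⟨by omega, hv⟩

private lemma decomp1 : ∀ (w : List (Fin 2)), w.count 1 = 1 →
    ∃ a b, w = rp a ++ 1 :: rp b := by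
  intro w
  induction w with
  | nil => simp
  | cons h t ih =>
    intro hc
    rcases (by fin_cases h <;> simp : h = 0 ∨ h = 1) with h0 | h1
    · subst h0
      have hc' : t.count 1 = 1 := by simpa [List.count_cons] using hc
      obtain ⟨a, b, hab⟩ := ih hc'
      exact ⟨a + 1, b, by simp [rp, hab, List.replicate_succ]⟩
    · subst h1
      have hc' : t.count 1 = 0 := by simpa [List.count_cons] using hc
      exact ⟨0, t.length, by simpa [rp] using congrArg (List.cons 1) (all_zero hc')⟩

private lemma decomp2 : ∀ (w : List (Fin 2)), w.count 1 = 2 →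
    ∃ a j b, w = rp a ++ 1 :: (rp j ++ 1 :: rp b) := by
  intro w
  induction w with
  | nil => simp
  | cons h t ih =>
    intro hc
    rcases (by fin_cases h <;> simp : h = 0 ∨ h = 1) with h0 | h1
    · subst h0
      have hc' : t.count 1 = 2 := by simpa [List.count_cons] using hc
      obtain ⟨a, j, b, hab⟩ := ih hc'
      exact ⟨a + 1, j, b, by simp [rp, hab, List.replicate_succ]⟩
    · subst h1
      have hc' : t.count 1 = 1 := by simpa [List.count_cons] using hc
      obtain ⟨j, b, hjb⟩ := decomp1 t hc'
      exact ⟨0, j, b, by simp [rp, hjb]⟩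

private lemma real_subadd {q a b : ℝ} (hq0 : 0 ≤ q) (hq1 : q ≤ 1)
    (ha : 0 ≤ a) (hb : 0 ≤ b) : (a + b) ^ q ≤ a ^ q + b ^ q := by
  have h := NNReal.rpow_add_le_add_rpow a.toNNReal b.toNNReal hq0 hq1
  have := NNReal.coe_le_coe.mpr h
  simpa [NNReal.coe_rpow, Real.coe_toNNReal a ha, Real.coe_toNNReal b hb,
    Real.toNNReal_add ha hb] using this

private lemma floor_mono_gap {q : ℝ} (hq0 : 0 ≤ q) (hq1 : q ≤ 1) {m n : ℕ}
    (hm : 1 ≤ m) (hmn : m ≤ n) :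
    (m : ℤ) - ⌊(m : ℝ) ^ q⌋ ≤ (n : ℤ) - ⌊(n : ℝ) ^ q⌋ := by
  have key : ⌊(n : ℝ) ^ q⌋ ≤ ⌊(m : ℝ) ^ q⌋ + ((n : ℤ) - m) := by
    rcases eq_or_lt_of_le hmn with rfl | hlt
    · simp
    · set d : ℕ := n - m with hd
      have hd1 : 1 ≤ d := by omega
      have hnd : (n : ℝ) = (m : ℝ) + d := by rw [hd]; push_cast [Nat.cast_sub hmn]; ring
      have h1 : (n : ℝ) ^ q ≤ (m : ℝ) ^ q + (d : ℝ) ^ q := by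
        rw [hnd]
        exact real_subadd hq0 hq1 (by positivity) (by positivity)
      have h2 : (d : ℝ) ^ q ≤ (d : ℝ) := by
        calc (d : ℝ) ^ q ≤ (d : ℝ) ^ (1 : ℝ) :=
              Real.rpow_le_rpow_of_exponent_le (by exact_mod_cast hd1) hq1
          _ = d := Real.rpow_one _
      have h3 : (n : ℝ) ^ q ≤ (m : ℝ) ^ q + ((n : ℤ) - m : ℤ) := by
        push_cast
        have : ((n:ℝ) - m) = (d : ℝ) := by rw [hd]; push_cast [Nat.cast_sub hmn]; ring
        linarith [this ▸ h2, h1]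
      calc ⌊(n : ℝ) ^ q⌋ ≤ ⌊(m : ℝ) ^ q + ((n : ℤ) - m : ℤ)⌋ := Int.floor_le_floor h3
        _ = ⌊(m : ℝ) ^ q⌋ + ((n : ℤ) - m) := Int.floor_add_intCast _ _
  omega

private lemma floor_ge_one {q : ℝ} (hq0 : 0 ≤ q) {n : ℕ} (hn : 1 ≤ n) :
    1 ≤ ⌊(n : ℝ) ^ q⌋ := by
  have : (1 : ℝ) ≤ (n : ℝ) ^ q := Real.one_le_rpow (by exact_mod_cast hn) hq0
  exact_mod_cast Int.le_floor.mpr (by exact_mod_cast this)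

private lemma floor_lt_n {q : ℝ} (hq : q < 1) {n : ℕ} (hn : 2 ≤ n) :
    ⌊(n : ℝ) ^ q⌋ < n := by
  have h1 : (1 : ℝ) < n := by exact_mod_cast hn
  have : (n : ℝ) ^ q < (n : ℝ) ^ (1 : ℝ) := Real.rpow_lt_rpow_of_exponent_lt h1 hq
  rw [Real.rpow_one] at this
  exact Int.floor_lt.mpr (by exact_mod_cast this)


private lemma count_w2 (a j b : ℕ) :
    (rp a ++ 1 :: (rp j ++ 1 :: rp b)).count (1 : Fin 2) = 2 := by
  simp [rp, List.count_append, List.count_cons, List.count_replicate]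

private lemma len_w2 (a j b : ℕ) :
    (rp a ++ 1 :: (rp j ++ 1 :: rp b)).length = a + j + b + 2 := by
  simp [rp]; omega

private lemma count_w1 (a b : ℕ) :
    (rp a ++ 1 :: rp b).count (1 : Fin 2) = 1 := by
  simp [rp, List.count_append, List.count_cons, List.count_replicate]

private lemma len_w1 (a b : ℕ) : (rp a ++ 1 :: rp b).length = a + b + 1 := by
  simp [rp]; omega

/-- Condition (ii) holds for the two-one word iff the gap is large enough. -/
private lemma cond_w2 {q : ℝ} (hq0 : 0 ≤ q) (hq1 : q ≤ 1) {n a j b : ℕ}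
    (hsum : a + j + b + 2 = n) (hj : (n : ℤ) - ⌊(n : ℝ) ^ q⌋ ≤ (j : ℤ)) :
    ∀ x y z : List (Fin 2),
      (x ++ 1 :: (y ++ 1 :: z)) <:+: (rp a ++ 1 :: (rp j ++ 1 :: rp b)) →
      (x ++ 1 :: (y ++ 1 :: z)).count (1 : Fin 2) = 2 →
      ((x ++ 1 :: (y ++ 1 :: z)).length : ℤ) -
          ⌊((x ++ 1 :: (y ++ 1 :: z)).length : ℝ) ^ q⌋ ≤ (y.length : ℤ) := by
  intro x y z hinf hcnt
  obtain ⟨s, t, hst⟩ := hinf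
  -- all of x, y, z consist of zeros
  have hxyz : x.count 1 = 0 ∧ y.count 1 = 0 ∧ z.count 1 = 0 := by
    simp [List.count_append, List.count_cons] at hcnt
    omega
  -- s and t consist of zeros
  have hst0 : s.count 1 = 0 ∧ t.count 1 = 0 := by
    have h5 := congrArg (List.count (1 : Fin 2)) hst
    rw [count_w2] at h5
    simp [List.count_append, hcnt] at h5
    omega
  obtain ⟨nx, rfl⟩ : ∃ k, x = rp k := ⟨_, all_zero hxyz.1⟩
  obtain ⟨ny, rfl⟩ : ∃ k, y = rp k := ⟨_, all_zero hxyz.2.1⟩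
  obtain ⟨nz, rfl⟩ : ∃ k, z = rp k := ⟨_, all_zero hxyz.2.2⟩
  obtain ⟨ns, rfl⟩ : ∃ k, s = rp k := ⟨_, all_zero hst0.1⟩
  obtain ⟨nt, rfl⟩ : ∃ k, t = rp k := ⟨_, all_zero hst0.2⟩
  have key : rp (ns + nx) ++ 1 :: (rp ny ++ 1 :: rp (nz + nt)) =
      rp a ++ 1 :: (rp j ++ 1 :: rp b) := by
    rw [← hst]
    simp only [rp, List.replicate_add, List.append_assoc, List.cons_append]
  obtain ⟨h1, h2⟩ := uniq _ key
  obtain ⟨h3, h4⟩ := uniq _ h2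
  have hb' : nz + nt = b := by simpa [rp] using congrArg List.length h4
  rw [len_w2, h3]
  have hlen : nx + j + nz + 2 ≤ n := by omega
  have hrpj : ((rp j).length : ℤ) = (j : ℤ) := by simp [rp]
  rw [hrpj]
  calc ((nx + j + nz + 2 : ℕ) : ℤ) - ⌊((nx + j + nz + 2 : ℕ) : ℝ) ^ q⌋
      ≤ (n : ℤ) - ⌊(n : ℝ) ^ q⌋ := floor_mono_gap hq0 hq1 (by omega) hlen
    _ ≤ (j : ℤ) := hj

/-- The dimension count of Example 3.5: for `1/2 < q < 1` and `n ≥ 2`, the number of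
words `w` over the two-letter alphabet `Fin 2` of length `n` such that (i) `w` contains
at most two occurrences of the letter `1`, and (ii) every factor `u = x ++ 1 :: (y ++ 1 :: z)`
of `w` containing exactly two occurrences of `1` satisfies
`|u| - ⌊|u|^q⌋ ≤ j` where `j = |y|` is the number of letters strictly between the two
occurrences of `1`, equals `1 + n + (⌊n^q⌋ - 1)⌊n^q⌋/2`. -/
theorem stmt13 (q : ℝ) (hq1 : 1 / 2 < q) (hq2 : q < 1) (n : ℕ) (hn : 2 ≤ n) :
    (({w : List (Fin 2) | w.length = n ∧ w.count 1 ≤ 2 ∧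
        ∀ x y z : List (Fin 2),
          (x ++ 1 :: (y ++ 1 :: z)) <:+: w →
          (x ++ 1 :: (y ++ 1 :: z)).count (1 : Fin 2) = 2 →
          ((x ++ 1 :: (y ++ 1 :: z)).length : ℤ) -
              ⌊((x ++ 1 :: (y ++ 1 :: z)).length : ℝ) ^ q⌋ ≤ (y.length : ℤ)}.ncard : ℝ)) =
      1 + (n : ℝ) + ((⌊(n : ℝ) ^ q⌋ : ℝ) - 1) * (⌊(n : ℝ) ^ q⌋ : ℝ) / 2 := by
  have hq0 : (0 : ℝ) ≤ q := by linarith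
  have hq1' : q ≤ 1 := le_of_lt hq2
  set K : ℕ := (⌊(n : ℝ) ^ q⌋).toNat with hKdef
  have hKfl : (K : ℤ) = ⌊(n : ℝ) ^ q⌋ :=
    Int.toNat_of_nonneg (le_trans (by norm_num) (floor_ge_one hq0 (by omega)))
  have hK1 : 1 ≤ K := by
    have := floor_ge_one hq0 (show 1 ≤ n by omega); omega
  have hKn : K ≤ n - 1 := by
    have := floor_lt_n hq2 hn; omega
  clear_value K
  -- the explicit finset of words
  set F : Finset (List (Fin 2)) :=
    ({rp n} ∪ (Finset.range n).image (fun a => rp a ++ 1 :: rp (n - 1 - a))) ∪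
      ((Finset.Icc (n - K) (n - 2)).sigma (fun j => Finset.range (n - 1 - j))).image
        (fun p => rp p.2 ++ 1 :: (rp p.1 ++ 1 :: rp (n - 2 - p.1 - p.2))) with hF
  have hset : {w : List (Fin 2) | w.length = n ∧ w.count 1 ≤ 2 ∧
        ∀ x y z : List (Fin 2),
          (x ++ 1 :: (y ++ 1 :: z)) <:+: w →
          (x ++ 1 :: (y ++ 1 :: z)).count (1 : Fin 2) = 2 →
          ((x ++ 1 :: (y ++ 1 :: z)).length : ℤ) -
              ⌊((x ++ 1 :: (y ++ 1 :: z)).length : ℝ) ^ q⌋ ≤ (y.length : ℤ)} = ↑F := by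
    ext w
    simp only [Set.mem_setOf_eq, hF, Finset.coe_union, Set.mem_union, Finset.coe_image,
      Set.mem_image, Finset.coe_singleton, Set.mem_singleton_iff, Finset.mem_coe,
      Finset.mem_range, Finset.mem_sigma, Finset.mem_Icc]
    constructor
    · rintro ⟨hlen, hcnt, hcond⟩
      interval_cases hc : (w.count 1)
      · -- zero ones
        left; left
        have := all_zero hc
        rw [this, hlen]
      · -- one one
        left; right
        obtain ⟨a, b, rfl⟩ := decomp1 w hc
        have hl : a + b + 1 = n := by rw [← hlen, len_w1]
        exact ⟨a, by omega, by rw [show n - 1 - a = b by omega]⟩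
      · -- two ones
        right
        obtain ⟨a, j, b, rfl⟩ := decomp2 w hc
        have hl : a + j + b + 2 = n := by rw [← hlen, len_w2]
        have hcd := hcond (rp a) (rp j) (rp b) (List.infix_refl _) (count_w2 a j b)
        rw [len_w2, hl] at hcd
        simp only [rp, List.length_replicate] at hcd
        have hjK : n - K ≤ j := by omega
        refine ⟨⟨j, a⟩, ⟨⟨hjK, by dsimp only; omega⟩, by dsimp only; omega⟩, ?_⟩
        dsimp only
        rw [show n - 2 - j - a = b by omega]
    · intro hw
      rcases hw with (hw | ⟨a, ha, rfl⟩) | ⟨⟨j, a⟩, ⟨⟨hj1, hj2⟩, ha⟩, rfl⟩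
      · subst hw
        refine ⟨by simp [rp], by simp [rp_count], fun x y z hinf hcnt => ?_⟩
        have h5 := hinf.sublist.count_le (1 : Fin 2)
        rw [hcnt, rp_count] at h5
        exact absurd h5 (by norm_num)
      · refine ⟨by rw [len_w1]; omega, by rw [count_w1]; omega,
          fun x y z hinf hcnt => ?_⟩
        have h5 := hinf.sublist.count_le (1 : Fin 2)
        rw [hcnt, count_w1] at h5
        exact absurd h5 (by norm_num)
      · dsimp only at hj1 hj2 ha ⊢
        have hl : a + j + (n - 2 - j - a) + 2 = n := by omega
        refine ⟨by rw [len_w2]; omega, by rw [count_w2], cond_w2 hq0 hq1' hl ?_⟩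
        rw [← hKfl]
        omega
  rw [hset, Set.ncard_coe_finset]
  -- cardinality computation
  have hcard : F.card = 1 + n + K * (K - 1) / 2 := by
    have hdisj1 : Disjoint ({rp n} : Finset (List (Fin 2)))
        ((Finset.range n).image (fun a => rp a ++ 1 :: rp (n - 1 - a))) := by
      rw [Finset.disjoint_left]
      rintro w hw1 hw2
      rw [Finset.mem_singleton] at hw1
      rw [Finset.mem_image] at hw2
      obtain ⟨a, _, rfl⟩ := hw2
      have := count_w1 a (n - 1 - a)
      rw [hw1, rp_count] at this
      exact absurd this (by norm_num)
    have hdisj2 : Disjoint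
        (({rp n} : Finset (List (Fin 2))) ∪
          (Finset.range n).image (fun a => rp a ++ 1 :: rp (n - 1 - a)))
        (((Finset.Icc (n - K) (n - 2)).sigma (fun j => Finset.range (n - 1 - j))).image
          (fun p => rp p.2 ++ 1 :: (rp p.1 ++ 1 :: rp (n - 2 - p.1 - p.2)))) := by
      rw [Finset.disjoint_left]
      rintro w hw1 hw2
      rw [Finset.mem_image] at hw2
      obtain ⟨⟨j, a⟩, _, rfl⟩ := hw2
      have h2 := count_w2 a j (n - 2 - j - a)
      rw [Finset.mem_union] at hw1
      rcases hw1 with hw1 | hw1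
      · rw [Finset.mem_singleton] at hw1
        rw [hw1, rp_count] at h2
        exact absurd h2 (by norm_num)
      · rw [Finset.mem_image] at hw1
        obtain ⟨a', _, ha'⟩ := hw1
        rw [← ha', count_w1] at h2
        exact absurd h2 (by norm_num)
    have hcard1 : (({rp n} : Finset (List (Fin 2)))).card = 1 := Finset.card_singleton _
    have hcard2 : ((Finset.range n).image
        (fun a => rp a ++ 1 :: rp (n - 1 - a))).card = n := by
      rw [Finset.card_image_of_injOn, Finset.card_range]
      intro a _ a' _ h
      exact (uniq _ h).1
    have hcard3 : (((Finset.Icc (n - K) (n - 2)).sigma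
          (fun j => Finset.range (n - 1 - j))).image
        (fun p => rp p.2 ++ 1 :: (rp p.1 ++ 1 :: rp (n - 2 - p.1 - p.2)))).card
        = K * (K - 1) / 2 := by
      rw [Finset.card_image_of_injOn]
      · rw [Finset.card_sigma]
        simp only [Finset.card_range]
        have hre : ∑ j ∈ Finset.Icc (n - K) (n - 2), (n - 1 - j)
            = ∑ i ∈ Finset.Icc 1 (K - 1), i := by
          refine Finset.sum_nbij' (fun j => n - 1 - j) (fun i => n - 1 - i) ?_ ?_ ?_ ?_ ?_ <;>
            simp only [Finset.mem_Icc] <;> intro a ha <;> first | trivial | omega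
        rw [hre]
        have hins : Finset.range K = insert 0 (Finset.Icc 1 (K - 1)) := by
          ext i
          simp only [Finset.mem_range, Finset.mem_insert, Finset.mem_Icc]
          omega
        have h0 : (0 : ℕ) ∉ Finset.Icc 1 (K - 1) := by simp
        have := Finset.sum_range_id K
        rw [hins, Finset.sum_insert h0] at this
        omega
      · rintro ⟨j, a⟩ hja ⟨j', a'⟩ hja' h
        simp only [Finset.mem_coe, Finset.mem_sigma, Finset.mem_Icc, Finset.mem_range] at hja hja'
        dsimp only at h
        obtain ⟨e1, e2⟩ := uniq _ h
        obtain ⟨e3, _⟩ := uniq _ e2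
        subst e1
        subst e3
        rfl
    rw [hF, Finset.card_union_of_disjoint hdisj2, Finset.card_union_of_disjoint hdisj1,
      hcard1, hcard2, hcard3]
  rw [hcard]
  have hKR : ((K : ℝ)) = (⌊(n : ℝ) ^ q⌋ : ℝ) := by exact_mod_cast congrArg Int.cast hKfl
  have heven : 2 ∣ K * (K - 1) := (Nat.even_mul_pred_self K).two_dvd
  have h2 : (K * (K - 1) / 2 : ℕ) * 2 = K * (K - 1) := Nat.div_mul_cancel heven
  have hcast : ((K * (K - 1) / 2 : ℕ) : ℝ) = ((K : ℝ) - 1) * K / 2 := by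
    have h2' : ((K * (K - 1) / 2 : ℕ) : ℝ) * 2 = (K : ℝ) * ((K : ℝ) - 1) := by
      have h6 := congrArg (fun m : ℕ => (m : ℝ)) h2
      push_cast [Nat.cast_sub hK1] at h6
      linarith
    linarith
  push_cast [hcast]
  rw [← hKR]
end

section
/- Let u, v : ℕ → ℝ be nondecreasing sequences with u(n) ≥ 1 and v(n) ≥ 1 for all n, and let s and t be integers with s ≥ 1 and t ≥ 2. Suppose that for all n ≥ 1, v(n) ≤ u(n·t − (n − 1)) and u(n·t − (n − 1)) ≤ v(n·s). Then limsup_{n→∞} log(u(n))/log(n) = limsup_{n→∞} log(v(n))/log(n). -/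
open Filter

private lemma aux_ev (f g : ℕ → ℝ) (hf1 : ∀ n, 1 ≤ f n) (hg1 : ∀ n, 1 ≤ g n)
    (c : ℕ) (hc : 1 ≤ c) (hfg : ∀ n : ℕ, 1 ≤ n → f n ≤ g (n * c))
    (hB : IsBoundedUnder (· ≤ ·) atTop (fun n : ℕ => Real.log (g n) / Real.log n))
    (ε : ℝ) (hε : 0 < ε) :
    ∀ᶠ n : ℕ in atTop, Real.log (f n) / Real.log n ≤
      limsup (fun n : ℕ => Real.log (g n) / Real.log n) atTop + ε := by
  set L := limsup (fun n : ℕ => Real.log (g n) / Real.log n) atTop with hL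
  have hev : ∀ᶠ m : ℕ in atTop, Real.log (g m) / Real.log m < L + ε / 2 :=
    eventually_lt_of_limsup_lt (by linarith) hB
  obtain ⟨N, hN⟩ := eventually_atTop.1 hev
  have hlog : Tendsto (fun n : ℕ => Real.log n) atTop atTop :=
    Real.tendsto_log_atTop.comp tendsto_natCast_atTop_atTop
  have htend : Tendsto (fun n : ℕ => (L + ε / 2) * Real.log c / Real.log n) atTop (nhds 0) :=
    Tendsto.div_atTop tendsto_const_nhds hlog
  have hsmall : ∀ᶠ n : ℕ in atTop, (L + ε / 2) * Real.log c / Real.log n < ε / 2 :=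
    htend.eventually_lt_const (by linarith)
  filter_upwards [hsmall, eventually_ge_atTop (max N 2)] with n hn1 hn2
  have hn2' : 2 ≤ n := le_trans (le_max_right N 2) hn2
  have hnN : N ≤ n := le_trans (le_max_left N 2) hn2
  have hn0 : n ≠ 0 := by omega
  have hc0 : c ≠ 0 := by omega
  have hlogn : 0 < Real.log n := Real.log_pos (by exact_mod_cast by omega)
  have hnc : N ≤ n * c := le_trans hnN (Nat.le_mul_of_pos_right n (by omega))
  have hlognc : 0 < Real.log (n * c : ℕ) := Real.log_pos (by exact_mod_cast by nlinarith)
  have hgnc : Real.log (g (n * c)) < (L + ε / 2) * Real.log (n * c : ℕ) :=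
    (div_lt_iff₀ hlognc).1 (hN _ hnc)
  have hlogmul : Real.log ((n * c : ℕ) : ℝ) = Real.log n + Real.log c := by
    push_cast
    exact Real.log_mul (by exact_mod_cast hn0) (by exact_mod_cast hc0)
  have h1 : Real.log (f n) ≤ Real.log (g (n * c)) := by
    apply Real.log_le_log (by linarith [hf1 n]) (hfg n (by omega))
  have key : Real.log (f n) / Real.log n ≤
      (L + ε / 2) + (L + ε / 2) * Real.log c / Real.log n := by
    rw [div_le_iff₀ hlogn]
    have : (L + ε / 2) * Real.log (n * c : ℕ) =
        ((L + ε / 2) + (L + ε / 2) * Real.log c / Real.log n) * Real.log n := by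
      rw [hlogmul]
      field_simp
    nlinarith [hgnc, h1]
  linarith

private lemma aux_main (f g : ℕ → ℝ) (hf1 : ∀ n, 1 ≤ f n) (hg1 : ∀ n, 1 ≤ g n)
    (c : ℕ) (hc : 1 ≤ c) (hfg : ∀ n : ℕ, 1 ≤ n → f n ≤ g (n * c))
    (hB : IsBoundedUnder (· ≤ ·) atTop (fun n : ℕ => Real.log (g n) / Real.log n)) :
    IsBoundedUnder (· ≤ ·) atTop (fun n : ℕ => Real.log (f n) / Real.log n) ∧
    limsup (fun n : ℕ => Real.log (f n) / Real.log n) atTop ≤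
      limsup (fun n : ℕ => Real.log (g n) / Real.log n) atTop := by
  have hbdd : IsBoundedUnder (· ≤ ·) atTop (fun n : ℕ => Real.log (f n) / Real.log n) :=
    isBoundedUnder_of_eventually_le (aux_ev f g hf1 hg1 c hc hfg hB 1 one_pos)
  refine ⟨hbdd, ?_⟩
  have hcobdd : IsCoboundedUnder (· ≤ ·) atTop (fun n : ℕ => Real.log (f n) / Real.log n) := by
    apply IsBoundedUnder.isCoboundedUnder_le
    exact ⟨0, eventually_map.2 <| Eventually.of_forall fun n =>
      div_nonneg (Real.log_nonneg (hf1 n)) (Real.log_natCast_nonneg n)⟩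
  exact le_of_forall_pos_le_add fun ε hε =>
    limsup_le_of_le hcobdd (aux_ev f g hf1 hg1 c hc hfg hB ε hε)

private lemma limsup_unbdd (w : ℕ → ℝ)
    (hw : ¬ IsBoundedUnder (· ≤ ·) atTop w) : limsup w atTop = 0 := by
  rw [limsup_eq]
  have : {a : ℝ | ∀ᶠ n : ℕ in atTop, w n ≤ a} = ∅ := by
    ext a
    simp only [Set.mem_setOf_eq, Set.mem_empty_iff_false, iff_false]
    exact fun h => hw ⟨a, eventually_map.2 h⟩
  rw [this, Real.sInf_empty]

/-- Abstract sequence form of Lemma 3.3: if two nondecreasing sequences `u, v ≥ 1`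
satisfy `v n ≤ u (n*t - (n-1)) ≤ v (n*s)` for all `n ≥ 1` (with `s ≥ 1`, `t ≥ 2`),
then they have the same growth exponent `limsup log(u n)/log n = limsup log(v n)/log n`. -/
theorem stmt14 (u v : ℕ → ℝ) (hu : Monotone u) (hv : Monotone v)
    (hu1 : ∀ n, 1 ≤ u n) (hv1 : ∀ n, 1 ≤ v n)
    (s t : ℕ) (hs : 1 ≤ s) (ht : 2 ≤ t)
    (h1 : ∀ n : ℕ, 1 ≤ n → v n ≤ u (n * t - (n - 1)))
    (h2 : ∀ n : ℕ, 1 ≤ n → u (n * t - (n - 1)) ≤ v (n * s)) :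
    limsup (fun n : ℕ => Real.log (u n) / Real.log n) atTop =
      limsup (fun n : ℕ => Real.log (v n) / Real.log n) atTop := by
  have hUV : ∀ n : ℕ, 1 ≤ n → u n ≤ v (n * s) := by
    intro n hn
    have h2t : n * 2 ≤ n * t := Nat.mul_le_mul_left n ht
    have : n ≤ n * t - (n - 1) := by omega
    exact le_trans (hu this) (h2 n hn)
  have hVU : ∀ n : ℕ, 1 ≤ n → v n ≤ u (n * t) := by
    intro n hn
    have : n * t - (n - 1) ≤ n * t := by omega
    exact le_trans (h1 n hn) (hu this)
  by_cases hb : IsBoundedUnder (· ≤ ·) atTop (fun n : ℕ => Real.log (v n) / Real.log n)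
  · obtain ⟨hA, hAB⟩ := aux_main u v hu1 hv1 s hs hUV hb
    obtain ⟨-, hBA⟩ := aux_main v u hv1 hu1 t (by omega) hVU hA
    exact le_antisymm hAB hBA
  · have ha : ¬ IsBoundedUnder (· ≤ ·) atTop (fun n : ℕ => Real.log (u n) / Real.log n) := by
      intro hA
      exact hb (aux_main v u hv1 hu1 t (by omega) hVU hA).1
    rw [limsup_unbdd _ ha, limsup_unbdd _ hb]
end

section
/- Let f : ℕ → ℝ be a nondecreasing sequence with f(n) ≥ 1 for all n. Then limsup_{n→∞} log(∑_{i=1}^{n} i·f(i−1))/log(n) = 1 + limsup_{n→∞} log(∑_{i=0}^{n} f(i))/log(n). -/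
open Filter

/-- Key computation in the proof of Theorem 0.7(2): for a nondecreasing sequence
`f ≥ 1`, the growth exponent of `n ↦ ∑_{i=1}^n i * f (i-1)` is one more than the
growth exponent of `n ↦ ∑_{i=0}^n f i` (limsups taken in the extended reals, so that
the identity also covers the case of infinite growth exponents). -/
theorem stmt15 (f : ℕ → ℝ) (hf : Monotone f) (hf1 : ∀ n, 1 ≤ f n) :
    limsup
        (fun n : ℕ =>
          ((Real.log (∑ i ∈ Finset.Icc 1 n, (i : ℝ) * f (i - 1)) / Real.log n : ℝ) :
            EReal))
        atTop =
      1 + limsup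
        (fun n : ℕ =>
          ((Real.log (∑ i ∈ Finset.range (n + 1), f i) / Real.log n : ℝ) : EReal))
        atTop := by
  have hf0 : ∀ n, (0:ℝ) < f n := fun n => zero_lt_one.trans_le (hf1 n)
  set S : ℕ → ℝ := fun n => ∑ i ∈ Finset.range (n + 1), f i with hSdef
  set T : ℕ → ℝ := fun n => ∑ i ∈ Finset.Icc 1 n, (i : ℝ) * f (i - 1) with hTdef
  set g : ℕ → ℝ := fun n => Real.log (S n) / Real.log n with hgdef
  set h : ℕ → ℝ := fun n => Real.log (T n) / Real.log n with hhdef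
  -- basic positivity facts
  have hSge : ∀ n : ℕ, ((n:ℝ) + 1) ≤ S n := by
    intro n
    calc ((n:ℝ) + 1) = ∑ _i ∈ Finset.range (n+1), (1:ℝ) := by simp
    _ ≤ S n := Finset.sum_le_sum fun i _ => hf1 i
  have hSpos : ∀ n : ℕ, (0:ℝ) < S n := fun n =>
    lt_of_lt_of_le (by positivity) (hSge n)
  have hT1 : ∀ n : ℕ, 1 ≤ n → (1:ℝ) ≤ T n := by
    intro n hn
    have h1 : (1:ℕ) ∈ Finset.Icc 1 n := Finset.mem_Icc.2 ⟨le_rfl, hn⟩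
    have := Finset.single_le_sum (f := fun i : ℕ => (i:ℝ) * f (i-1))
      (fun i _ => mul_nonneg (Nat.cast_nonneg i) (hf0 _).le) h1
    simp only [Nat.cast_one, one_mul] at this
    exact le_trans (hf1 0) this
  -- reindexing
  have reidx : ∀ n : ℕ, ∑ i ∈ Finset.Icc 1 n, f (i - 1) = ∑ j ∈ Finset.range n, f j := by
    intro n
    rw [← Finset.Ico_add_one_right_eq_Icc, Finset.sum_Ico_eq_sum_range]
    simp
  -- upper bound on T
  have hTle : ∀ n : ℕ, T n ≤ n * S n := by
    intro n
    calc T n ≤ ∑ i ∈ Finset.Icc 1 n, (n:ℝ) * f (i-1) := by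
          refine Finset.sum_le_sum fun i hi => ?_
          have hi' : i ≤ n := (Finset.mem_Icc.1 hi).2
          exact mul_le_mul_of_nonneg_right (by exact_mod_cast hi') (hf0 _).le
    _ = n * ∑ i ∈ Finset.Icc 1 n, f (i-1) := by rw [Finset.mul_sum]
    _ = n * ∑ j ∈ Finset.range n, f j := by rw [reidx]
    _ ≤ n * S n := by
          refine mul_le_mul_of_nonneg_left ?_ (Nat.cast_nonneg n)
          exact Finset.sum_le_sum_of_subset_of_nonneg
            (Finset.range_subset_range.2 (Nat.le_succ n)) (fun i _ _ => (hf0 i).le)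
  -- lower bound on T at 2n
  have hTge : ∀ n : ℕ, 1 ≤ n → (n:ℝ) * S n ≤ T (2*n) := by
    intro n hn
    have h1 : S n ≤ ((n:ℝ)+1) * f n := by
      calc S n ≤ ∑ _i ∈ Finset.range (n+1), f n :=
            Finset.sum_le_sum fun i hi => hf (Nat.lt_succ_iff.1 (Finset.mem_range.1 hi))
      _ = ((n:ℝ)+1) * f n := by
            rw [Finset.sum_const, Finset.card_range, nsmul_eq_mul]
            push_cast
            ring
    have h2 : (n:ℝ) * (((n:ℝ)+1) * f n) ≤ T (2*n) := by
      have hsub : Finset.Icc (n+1) (2*n) ⊆ Finset.Icc 1 (2*n) :=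
        Finset.Icc_subset_Icc (by omega) le_rfl
      calc (n:ℝ) * (((n:ℝ)+1) * f n)
          = ∑ _i ∈ Finset.Icc (n+1) (2*n), ((n:ℝ)+1) * f n := by
            rw [Finset.sum_const, Nat.card_Icc]
            have hcard : 2*n + 1 - (n+1) = n := by omega
            rw [hcard, nsmul_eq_mul]
      _ ≤ ∑ i ∈ Finset.Icc (n+1) (2*n), (i:ℝ) * f (i-1) := by
            refine Finset.sum_le_sum fun i hi => ?_
            obtain ⟨hi1, hi2⟩ := Finset.mem_Icc.1 hi
            have hcast : ((n:ℝ)+1) ≤ (i:ℝ) := by exact_mod_cast hi1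
            exact mul_le_mul hcast (hf (by omega)) (hf0 n).le (Nat.cast_nonneg i)
      _ ≤ T (2*n) := Finset.sum_le_sum_of_subset_of_nonneg hsub
            (fun i _ _ => mul_nonneg (Nat.cast_nonneg i) (hf0 _).le)
    calc (n:ℝ) * S n ≤ (n:ℝ) * (((n:ℝ)+1) * f n) :=
          mul_le_mul_of_nonneg_left h1 (Nat.cast_nonneg n)
    _ ≤ T (2*n) := h2
  -- EReal versions
  set gE : ℕ → EReal := fun n => ((g n : ℝ) : EReal) with hgEdef
  set hE : ℕ → EReal := fun n => ((h n : ℝ) : EReal) with hhEdef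
  -- g is eventually ≥ 1
  have hg1 : (1 : EReal) ≤ limsup gE atTop := by
    refine le_limsup_of_frequently_le' (Eventually.frequently ?_)
    filter_upwards [eventually_ge_atTop 2] with n hn
    have hn1 : (1:ℝ) < (n:ℝ) := by exact_mod_cast hn
    have hlogn : 0 < Real.log n := Real.log_pos hn1
    have hlog : Real.log n ≤ Real.log (S n) :=
      Real.log_le_log (by linarith) (le_trans (by linarith) (hSge n))
    have : (1:ℝ) ≤ g n := (le_div_iff₀ hlogn).2 (by linarith)
    show (1 : EReal) ≤ ((g n : ℝ) : EReal)
    exact_mod_cast this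
  -- UPPER bound : limsup hE ≤ 1 + limsup gE
  have upper : limsup hE atTop ≤ 1 + limsup gE atTop := by
    have ev : ∀ᶠ n in atTop, hE n ≤ ((1:EReal) + gE ·) n := by
      filter_upwards [eventually_ge_atTop 2] with n hn
      have hn1 : (1:ℝ) < (n:ℝ) := by exact_mod_cast hn
      have hn0 : (0:ℝ) < n := by linarith
      have hlogn : 0 < Real.log n := Real.log_pos hn1
      have hTpos : (0:ℝ) < T n := lt_of_lt_of_le zero_lt_one (hT1 n (by omega))
      have hlog : Real.log (T n) ≤ Real.log n + Real.log (S n) := by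
        have := Real.log_le_log hTpos (hTle n)
        rwa [Real.log_mul hn0.ne' (hSpos n).ne'] at this
      have hreal : h n ≤ 1 + g n := by
        rw [hhdef, hgdef]
        rw [div_le_iff₀ hlogn] at *
        have : (1 + Real.log (S n) / Real.log n) * Real.log n
            = Real.log n + Real.log (S n) := by
          field_simp
        linarith [this]
      show hE n ≤ (1:EReal) + gE n
      rw [hhEdef, hgEdef]
      calc ((h n : ℝ) : EReal) ≤ ((1 + g n : ℝ) : EReal) := by exact_mod_cast hreal
      _ = (1:EReal) + ((g n : ℝ) : EReal) := by rw [EReal.coe_add]; norm_num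
    calc limsup hE atTop ≤ limsup (fun n => (1:EReal) + gE n) atTop :=
          limsup_le_limsup ev
    _ ≤ limsup (fun _ : ℕ => (1:EReal)) atTop + limsup gE atTop := by
          refine EReal.limsup_add_le ?_ ?_
          · left; rw [limsup_const, ← EReal.coe_one]; exact EReal.coe_ne_bot 1
          · left; rw [limsup_const, ← EReal.coe_one]; exact EReal.coe_ne_top 1
    _ = 1 + limsup gE atTop := by rw [limsup_const]
  -- LOWER bound : 1 + limsup gE ≤ limsup hE
  have lower : 1 + limsup gE atTop ≤ limsup hE atTop := by
    rw [← EReal.ge_of_forall_gt_iff_ge]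
    intro z hz
    -- extract a real a with max (z-1) 0 < a < limsup gE
    have h0L : (0 : EReal) < limsup gE atTop := lt_of_lt_of_le (by norm_num) hg1
    have hz1 : ((z - 1 : ℝ) : EReal) < limsup gE atTop := by
      have := EReal.sub_lt_of_lt_add' hz
      rwa [show ((z - 1 : ℝ) : EReal) = (z : EReal) - 1 by
        rw [EReal.coe_sub]; norm_num]
    have hmax : ((max (z-1) 0 : ℝ) : EReal) < limsup gE atTop := by
      rcases le_total (z-1) 0 with hc | hc
      · rw [max_eq_right hc]; exact_mod_cast h0L
      · rw [max_eq_left hc]; exact hz1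
    obtain ⟨a, ha1, ha2⟩ := EReal.exists_between_coe_real hmax
    have ha1' : max (z-1) 0 < a := by exact_mod_cast ha1
    have haz : z < 1 + a := by have := lt_of_le_of_lt (le_max_left _ _) ha1'; linarith
    have ha0 : 0 ≤ a := le_of_lt (lt_of_le_of_lt (le_max_right _ _) ha1')
    -- frequently g n > a
    have hfreq : ∃ᶠ n in atTop, (a : EReal) < gE n :=
      frequently_lt_of_lt_limsup (by isBoundedDefault) ha2
    -- eventual largeness
    have hev : ∀ᶠ n : ℕ in atTop, 2 ≤ n ∧
        (1 + a) * Real.log 2 ≤ (1 + a - z) * Real.log n := by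
      have hε : (0:ℝ) < 1 + a - z := by linarith
      have htend : Tendsto (fun n : ℕ => Real.log n) atTop atTop :=
        Real.tendsto_log_atTop.comp tendsto_natCast_atTop_atTop
      have h2' := htend.eventually_ge_atTop ((1 + a) * Real.log 2 / (1 + a - z))
      filter_upwards [eventually_ge_atTop 2, h2'] with n hn hlog
      refine ⟨hn, ?_⟩
      rw [div_le_iff₀ hε] at hlog
      linarith [mul_comm (Real.log (n:ℝ)) (1 + a - z)]
    -- frequently z ≤ h (2n)
    have freq2 : ∃ᶠ n in atTop, (z : EReal) ≤ hE (2*n) := by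
      refine (hfreq.and_eventually hev).mono ?_
      rintro n ⟨hgn, hn2, hbig⟩
      have hn1 : (1:ℝ) < (n:ℝ) := by exact_mod_cast hn2
      have hn0 : (0:ℝ) < n := by linarith
      have hlogn : 0 < Real.log n := Real.log_pos hn1
      have hgn' : a < g n := by
        have : ((a:ℝ):EReal) < ((g n : ℝ):EReal) := hgn
        exact_mod_cast this
      have hSa : a * Real.log n < Real.log (S n) := by
        rw [hgdef] at hgn'
        exact (lt_div_iff₀ hlogn).1 hgn'
      -- log T(2n) ≥ log n + log (S n)
      have hTpos2 : (0:ℝ) < (n:ℝ) * S n := mul_pos hn0 (hSpos n)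
      have hlogT : Real.log n + Real.log (S n) ≤ Real.log (T (2*n)) := by
        have := Real.log_le_log hTpos2 (hTge n (by omega))
        rwa [Real.log_mul hn0.ne' (hSpos n).ne'] at this
      -- log (2n)
      have h2n0 : (0:ℝ) < ((2*n : ℕ) : ℝ) := by push_cast; linarith
      have h2n1 : (1:ℝ) < ((2*n : ℕ) : ℝ) := by push_cast; linarith
      have hlog2n : 0 < Real.log ((2*n : ℕ) : ℝ) := Real.log_pos h2n1
      have hlog2neq : Real.log ((2*n : ℕ) : ℝ) = Real.log 2 + Real.log n := by
        have : ((2*n : ℕ) : ℝ) = 2 * (n:ℝ) := by push_cast; ring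
        rw [this, Real.log_mul (by norm_num) hn0.ne']
      have hzle : z ≤ h (2*n) := by
        rw [hhdef, le_div_iff₀ hlog2n, hlog2neq]
        have hz2 : z * Real.log 2 ≤ (1 + a) * Real.log 2 := by
          have := Real.log_nonneg (by norm_num : (1:ℝ) ≤ 2)
          nlinarith
        nlinarith [hbig, hSa, hlogT, hlogn]
      show (z : EReal) ≤ ((h (2*n) : ℝ) : EReal)
      exact_mod_cast hzle
    -- transfer frequently along m = 2n
    have freq3 : ∃ᶠ m in atTop, (z : EReal) ≤ hE m := by
      rw [frequently_atTop] at freq2 ⊢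
      intro N
      obtain ⟨n, hn, hzn⟩ := freq2 N
      exact ⟨2*n, by omega, hzn⟩
    exact le_limsup_of_frequently_le' freq3
  exact le_antisymm upper lower
end
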